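/- arXiv:1111.3266 — 5 statements merged into one kernel-verified Lean document; each statement's English description precedes it below -/
import Mathlib

section
/- Let G be a connected graph with at least 2 vertices and with no vertices of degree 2. Then G has a spanning tree with at least (v(G)-2)/4 + 2 leaves, where v(G) is the number of vertices of G. -/
open SimpleGraph

/-- Degree of a vertex (works without decidability assumptions). -/
noncomputable def ndeg {V : Type*} (G : SimpleGraph V) (v : V) : ℕ :=
  Nat.card (G.neighborSet v)

/-- Number of leaves (vertices of degree 1) of a graph. -/
noncomputable def numLeaves {V : Type*} (T : SimpleGraph V) : ℕ :=
  Nat.card {v : V | ndeg T v = 1}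

/-- A spanning tree of `G` is a tree `T ≤ G` on the same vertex set. -/
def IsSpanningTreeOf {V : Type*} (T G : SimpleGraph V) : Prop :=
  T ≤ G ∧ T.IsTree

/-- `maxLeaves G` is `u(G)`, the maximum number of leaves over all spanning trees. -/
noncomputable def maxLeaves {V : Type*} (G : SimpleGraph V) : ℕ :=
  sSup {n : ℕ | ∃ T : SimpleGraph V, IsSpanningTreeOf T G ∧ numLeaves T = n}

namespace KW

open Finset

variable {V : Type*} [Fintype V] [DecidableEq V]

/-- A growing rooted partial spanning tree of `G`, encoded by a parent map with ranks. -/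
structure St (G : SimpleGraph V) [DecidableRel G.Adj] : Type _ where
  S : Finset V
  r : V
  par : V → V
  rk : V → ℕ
  hr : r ∈ S
  hadj : ∀ v ∈ S, v ≠ r → G.Adj v (par v)
  hparS : ∀ v ∈ S, v ≠ r → par v ∈ S
  hrk : ∀ v ∈ S, v ≠ r → rk (par v) < rk v
  hI : ∀ v ∈ S, (G.neighborFinset v \ S).Nonempty →
        v ≠ r ∧ ∀ u ∈ S, u ≠ r → par u ≠ v
  hroot : 2 ≤ (S.filter (fun u => u ≠ r ∧ par u = r)).card

variable {G : SimpleGraph V} [DecidableRel G.Adj]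

/-- Outside neighbours of a vertex. -/
def St.outs (σ : St G) (v : V) : Finset V := G.neighborFinset v \ σ.S

/-- `v` is a leaf of the partial tree. -/
def St.IsLf (σ : St G) (v : V) : Prop :=
  v ∈ σ.S ∧ v ≠ σ.r ∧ ∀ u ∈ σ.S, u ≠ σ.r → σ.par u ≠ v

instance (σ : St G) : DecidablePred σ.IsLf := fun v => by
  unfold St.IsLf; infer_instance

/-- Weight of a vertex: dead leaf `4`, live leaf `3`, else `0`. -/
def St.w (σ : St G) (v : V) : ℤ :=
  if σ.IsLf v then (if σ.outs v = ∅ then 4 else 3) else 0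

/-- Potential function. -/
def St.phi (σ : St G) : ℤ := (∑ v ∈ σ.S, σ.w v) - σ.S.card

lemma St.w_nonneg (σ : St G) (v : V) : 0 ≤ σ.w v := by
  unfold St.w; split <;> [skip; norm_num]
  split <;> norm_num

lemma St.isLf_of_outs_nonempty (σ : St G) {v : V} (hv : v ∈ σ.S)
    (h : (σ.outs v).Nonempty) : σ.IsLf v :=
  ⟨hv, σ.hI v hv h⟩

lemma St.w_eq_three (σ : St G) {v : V} (h : σ.IsLf v) (h2 : (σ.outs v).Nonempty) :
    σ.w v = 3 := by
  unfold St.w; rw [if_pos h, if_neg h2.ne_empty]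

lemma St.w_eq_four (σ : St G) {v : V} (h : σ.IsLf v) (h2 : σ.outs v = ∅) :
    σ.w v = 4 := by
  unfold St.w; rw [if_pos h, if_pos h2]

lemma St.three_le_w (σ : St G) {v : V} (h : σ.IsLf v) : 3 ≤ σ.w v := by
  unfold St.w; rw [if_pos h]; split <;> norm_num

lemma St.mem_outs (σ : St G) {v u : V} : u ∈ σ.outs v ↔ G.Adj v u ∧ u ∉ σ.S := by
  unfold St.outs; rw [mem_sdiff, mem_neighborFinset]

/-- The expansion operation: attach all outside neighbours of `x` to `x`. -/
def St.expand (σ : St G) (x : V) (hx : x ∈ σ.S) (hne : (σ.outs x).Nonempty) : St G where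
  S := σ.S ∪ σ.outs x
  r := σ.r
  par := fun v => if v ∈ σ.outs x then x else σ.par v
  rk := fun v => if v ∈ σ.outs x then σ.rk x + 1 else σ.rk v
  hr := mem_union_left _ σ.hr
  hadj := by
    intro v hv hvr
    rcases mem_union.mp hv with h | h
    · have hvo : v ∉ σ.outs x := fun hc => (σ.mem_outs.mp hc).2 h
      simpa [hvo] using σ.hadj v h hvr
    · have := (σ.mem_outs.mp h).1
      simpa [h] using this.symm
  hparS := by
    intro v hv hvr
    rcases mem_union.mp hv with h | h
    · have hvo : v ∉ σ.outs x := fun hc => (σ.mem_outs.mp hc).2 h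
      simpa [hvo] using mem_union_left _ (σ.hparS v h hvr)
    · simpa [h] using mem_union_left _ hx
  hrk := by
    intro v hv hvr
    rcases mem_union.mp hv with h | h
    · have hvo : v ∉ σ.outs x := fun hc => (σ.mem_outs.mp hc).2 h
      have hpo : σ.par v ∉ σ.outs x := fun hc => (σ.mem_outs.mp hc).2 (σ.hparS v h hvr)
      simpa [hvo, hpo] using σ.hrk v h hvr
    · have hxo : x ∉ σ.outs x := fun hc => (σ.mem_outs.mp hc).2 hx
      simp [h, hxo]
  hI := by
    intro v hv hvne
    have hxout : G.neighborFinset x \ (σ.S ∪ σ.outs x) = ∅ := by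
      ext u
      simp only [mem_sdiff, mem_union, notMem_empty, iff_false, not_and, not_not]
      intro hu
      by_cases huS : u ∈ σ.S
      · exact Or.inl huS
      · exact Or.inr (mem_sdiff.mpr ⟨hu, huS⟩)
    rcases mem_union.mp hv with h | h
    · have hvne' : (G.neighborFinset v \ σ.S).Nonempty := by
        obtain ⟨u, hu⟩ := hvne
        rw [mem_sdiff] at hu
        exact ⟨u, mem_sdiff.mpr ⟨hu.1, fun hc => hu.2 (mem_union_left _ hc)⟩⟩
      obtain ⟨hvr, hch⟩ := σ.hI v h hvne'
      have hvnx : v ≠ x := by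
        rintro rfl
        rw [show G.neighborFinset v \ (σ.S ∪ σ.outs v) = ∅ from hxout] at hvne
        exact not_nonempty_empty hvne
      refine ⟨hvr, ?_⟩
      intro u hu hur
      rcases mem_union.mp hu with h2 | h2
      · have huo : u ∉ σ.outs x := fun hc => (σ.mem_outs.mp hc).2 h2
        simpa [huo] using hch u h2 hur
      · simpa [h2] using hvnx.symm
    · have hvS : v ∉ σ.S := (σ.mem_outs.mp h).2
      refine ⟨fun hc => hvS (hc ▸ σ.hr), ?_⟩
      intro u hu hur
      rcases mem_union.mp hu with h2 | h2
      · have huo : u ∉ σ.outs x := fun hc => (σ.mem_outs.mp hc).2 h2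
        have := σ.hparS u h2 hur
        simp only [huo, if_neg, if_false]
        exact fun hc => hvS (hc ▸ this)
      · intro hc
        simp only [h2, if_pos] at hc
        exact hvS (hc ▸ hx)
  hroot := by
    refine le_trans σ.hroot (card_le_card ?_)
    intro u hu
    rw [mem_filter] at hu
    have huo : u ∉ σ.outs x := fun hc => (σ.mem_outs.mp hc).2 hu.1
    rw [mem_filter]
    exact ⟨mem_union_left _ hu.1, hu.2.1, by simpa [huo] using hu.2.2⟩

section ExpandLemmas

variable (σ : St G) (x : V) (hx : x ∈ σ.S) (hne : (σ.outs x).Nonempty)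

lemma St.expand_S : (σ.expand x hx hne).S = σ.S ∪ σ.outs x := rfl

lemma St.expand_r : (σ.expand x hx hne).r = σ.r := rfl

lemma St.expand_par_mem {u : V} (hu : u ∈ σ.outs x) :
    (σ.expand x hx hne).par u = x := if_pos hu

lemma St.expand_par_not_mem {u : V} (hu : u ∉ σ.outs x) :
    (σ.expand x hx hne).par u = σ.par u := if_neg hu

lemma St.expand_outs_subset (v : V) : (σ.expand x hx hne).outs v ⊆ σ.outs v := by
  intro u hu
  rw [St.mem_outs] at hu ⊢
  exact ⟨hu.1, fun hc => hu.2 (mem_union_left _ hc)⟩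

lemma St.expand_isLf_of_isLf {v : V} (hv : v ∈ σ.S) (hvx : v ≠ x) (h : σ.IsLf v) :
    (σ.expand x hx hne).IsLf v := by
  refine ⟨mem_union_left _ hv, h.2.1, ?_⟩
  intro u hu hur
  rcases mem_union.mp hu with h2 | h2
  · have huo : u ∉ σ.outs x := fun hc => (σ.mem_outs.mp hc).2 h2
    rw [σ.expand_par_not_mem x hx hne huo]
    exact h.2.2 u h2 hur
  · rw [σ.expand_par_mem x hx hne h2]
    exact hvx.symm

lemma St.expand_isLf_new {u : V} (hu : u ∈ σ.outs x) :
    (σ.expand x hx hne).IsLf u := by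
  have huS : u ∉ σ.S := (σ.mem_outs.mp hu).2
  refine ⟨mem_union_right _ hu, fun hc => huS (hc ▸ σ.hr), ?_⟩
  intro y hy hyr
  rcases mem_union.mp hy with h2 | h2
  · have hyo : y ∉ σ.outs x := fun hc => (σ.mem_outs.mp hc).2 h2
    rw [σ.expand_par_not_mem x hx hne hyo]
    exact fun hc => huS (hc ▸ σ.hparS y h2 hyr)
  · rw [σ.expand_par_mem x hx hne h2]
    exact fun hc => huS (hc ▸ hx)

lemma St.expand_w_x : (σ.expand x hx hne).w x = 0 := by
  obtain ⟨u, hu⟩ := id hne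
  have huS : u ∉ σ.S := (σ.mem_outs.mp hu).2
  have : ¬(σ.expand x hx hne).IsLf x := by
    rintro ⟨-, -, h⟩
    exact h u (mem_union_right _ hu) (fun hc => huS (hc ▸ σ.hr))
      (σ.expand_par_mem x hx hne hu)
  unfold St.w
  rw [if_neg this]

lemma St.expand_w_new_ge {u : V} (hu : u ∈ σ.outs x) :
    3 ≤ (σ.expand x hx hne).w u :=
  (σ.expand x hx hne).three_le_w (σ.expand_isLf_new x hx hne hu)

lemma St.expand_w_mono {v : V} (hv : v ∈ σ.S) (hvx : v ≠ x) :
    σ.w v ≤ (σ.expand x hx hne).w v := by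
  by_cases h : σ.IsLf v
  · have h' := σ.expand_isLf_of_isLf x hx hne hv hvx h
    by_cases h2 : σ.outs v = ∅
    · have h2' : (σ.expand x hx hne).outs v = ∅ :=
        subset_empty.mp (h2 ▸ σ.expand_outs_subset x hx hne v)
      rw [σ.w_eq_four h h2, (σ.expand x hx hne).w_eq_four h' h2']
    · rw [σ.w_eq_three h (nonempty_iff_ne_empty.mpr h2)]
      exact (σ.expand x hx hne).three_le_w h'
  · have : σ.w v = 0 := by unfold St.w; rw [if_neg h]
    rw [this]
    exact (σ.expand x hx hne).w_nonneg v

/-- The main potential inequality for one expansion. -/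
lemma St.phi_expand :
    σ.phi - 3 + (∑ u ∈ σ.outs x, ((σ.expand x hx hne).w u - 1))
      + ((σ.S.erase x).filter
          (fun v => σ.w v = 3 ∧ (σ.expand x hx hne).w v = 4)).card
    ≤ (σ.expand x hx hne).phi := by
  set τ := σ.expand x hx hne with hτ
  set K := (σ.S.erase x).filter (fun v => σ.w v = 3 ∧ τ.w v = 4) with hK
  have hdisj : Disjoint σ.S (σ.outs x) := disjoint_sdiff
  have hcard : (τ.S.card : ℤ) = σ.S.card + (σ.outs x).card := by
    rw [hτ, St.expand_S, card_union_of_disjoint hdisj]; push_cast; ring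
  have hsum : ∑ v ∈ τ.S, τ.w v = ∑ v ∈ σ.S, τ.w v + ∑ u ∈ σ.outs x, τ.w u := by
    rw [hτ, St.expand_S] at *
    exact sum_union hdisj
  -- bound the sum over the old vertex set
  have hxsum : ∑ v ∈ σ.S, τ.w v = τ.w x + ∑ v ∈ σ.S.erase x, τ.w v :=
    (add_sum_erase _ _ hx).symm
  have hxsum' : ∑ v ∈ σ.S, σ.w v = σ.w x + ∑ v ∈ σ.S.erase x, σ.w v :=
    (add_sum_erase _ _ hx).symm
  have hx3 : σ.w x = 3 := σ.w_eq_three (σ.isLf_of_outs_nonempty hx hne) hne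
  have hτx : τ.w x = 0 := σ.expand_w_x x hx hne
  have herase : ∑ v ∈ σ.S.erase x, σ.w v + K.card ≤ ∑ v ∈ σ.S.erase x, τ.w v := by
    have h1 : ∑ v ∈ σ.S.erase x, (τ.w v - σ.w v) ≥ ∑ v ∈ K, (τ.w v - σ.w v) := by
      apply sum_le_sum_of_subset_of_nonneg (filter_subset _ _)
      intro v hv _
      have hv' := mem_erase.mp hv
      simpa using σ.expand_w_mono x hx hne hv'.2 hv'.1
    have h2 : ∑ v ∈ K, (τ.w v - σ.w v) ≥ (K.card : ℤ) := by
      have := Finset.card_nsmul_le_sum K (fun v => τ.w v - σ.w v) 1 (by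
        intro v hv
        rw [mem_filter] at hv
        show (1 : ℤ) ≤ τ.w v - σ.w v
        omega)
      simpa using this
    have h3 : ∑ v ∈ σ.S.erase x, (τ.w v - σ.w v)
        = ∑ v ∈ σ.S.erase x, τ.w v - ∑ v ∈ σ.S.erase x, σ.w v := by
      rw [sum_sub_distrib]
    omega
  have houts : ∑ u ∈ σ.outs x, τ.w u
      = ∑ u ∈ σ.outs x, (τ.w u - 1) + (σ.outs x).card := by
    rw [sum_sub_distrib]; simp
  unfold St.phi
  rw [hsum, hcard, hxsum, hxsum', hτx, hx3]
  omega

lemma St.phi_expand_ge :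
    σ.phi - 3 + 2 * (σ.outs x).card ≤ (σ.expand x hx hne).phi := by
  have h := σ.phi_expand x hx hne
  have h2 : (2 : ℤ) * (σ.outs x).card ≤ ∑ u ∈ σ.outs x, ((σ.expand x hx hne).w u - 1) := by
    have := Finset.card_nsmul_le_sum (σ.outs x) (fun u => (σ.expand x hx hne).w u - 1) 2 (by
      intro u hu
      have := σ.expand_w_new_ge x hx hne hu
      show (2 : ℤ) ≤ (σ.expand x hx hne).w u - 1
      omega)
    simpa [nsmul_eq_mul, mul_comm] using this
  have : (0 : ℤ) ≤ ((σ.S.erase x).filter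
      (fun v => σ.w v = 3 ∧ (σ.expand x hx hne).w v = 4)).card := by positivity
  omega

lemma St.expand_card_lt :
    (univ \ (σ.expand x hx hne).S).card < (univ \ σ.S).card := by
  apply card_lt_card
  rw [St.expand_S]
  constructor
  · intro u hu
    rw [mem_sdiff] at hu ⊢
    exact ⟨hu.1, fun hc => hu.2 (mem_union_left _ hc)⟩
  · intro hsub
    obtain ⟨u, hu⟩ := hne
    have huS : u ∉ σ.S := (σ.mem_outs.mp hu).2
    have : u ∈ univ \ σ.S := mem_sdiff.mpr ⟨mem_univ _, huS⟩
    have := hsub this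
    rw [mem_sdiff] at this
    exact this.2 (mem_union_right _ hu)

end ExpandLemmas


section Endgame

variable (σ : St G)

/-- Parent map fixed at the root. -/
def St.par' : V → V := fun v => if v = σ.r then v else σ.par v

/-- `u` is a descendant of `v`. -/
def St.desc (v u : V) : Prop := ∃ k : ℕ, σ.par'^[k] u = v

/-- The final tree. -/
def St.tree : SimpleGraph V := SimpleGraph.fromRel (fun u v => u ≠ σ.r ∧ σ.par u = v)

lemma St.mem_S (hfull : σ.S = univ) (v : V) : v ∈ σ.S := hfull ▸ mem_univ v

lemma St.rk_par'_le (hfull : σ.S = univ) (u : V) : σ.rk (σ.par' u) ≤ σ.rk u := by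
  unfold St.par'
  by_cases h : u = σ.r
  · rw [if_pos h]
  · rw [if_neg h]
    exact le_of_lt (σ.hrk u (σ.mem_S hfull u) h)

lemma St.rk_iterate_le (hfull : σ.S = univ) (k : ℕ) (u : V) : σ.rk (σ.par'^[k] u) ≤ σ.rk u := by
  induction k generalizing u with
  | zero => simp
  | succ n ih =>
    rw [Function.iterate_succ_apply]
    exact le_trans (ih (σ.par' u)) (σ.rk_par'_le hfull u)

lemma St.not_desc_par (hfull : σ.S = univ) {v : V} (hv : v ≠ σ.r) : ¬ σ.desc v (σ.par v) := by
  rintro ⟨k, hk⟩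
  have h1 : σ.rk (σ.par'^[k] (σ.par v)) ≤ σ.rk (σ.par v) := σ.rk_iterate_le hfull k _
  rw [hk] at h1
  exact absurd (lt_of_le_of_lt h1 (σ.hrk v (σ.mem_S hfull v) hv)) (lt_irrefl _)

lemma St.tree_le (hfull : σ.S = univ) : σ.tree ≤ G := by
  intro u v h
  rw [St.tree, fromRel_adj] at h
  rcases h.2 with ⟨hur, hp⟩ | ⟨hvr, hp⟩
  · exact hp ▸ σ.hadj u (σ.mem_S hfull u) hur
  · exact (hp ▸ σ.hadj v (σ.mem_S hfull v) hvr).symm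

lemma St.par_ne (hfull : σ.S = univ) {v : V} (hv : v ≠ σ.r) : v ≠ σ.par v := by
  intro hc
  have := σ.hrk v (σ.mem_S hfull v) hv
  rw [← hc] at this
  exact absurd this (lt_irrefl _)

lemma St.tree_adj_par (hfull : σ.S = univ) {v : V} (hv : v ≠ σ.r) : σ.tree.Adj v (σ.par v) := by
  rw [St.tree, fromRel_adj]
  exact ⟨σ.par_ne hfull hv, Or.inl ⟨hv, rfl⟩⟩

lemma St.walk_hits (hfull : σ.S = univ) {v : V} (hv : v ≠ σ.r) :
    ∀ {a b : V} (p : σ.tree.Walk a b), σ.desc v a → ¬ σ.desc v b →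
      s(v, σ.par v) ∈ p.edges := by
  intro a b p
  induction p with
  | nil => intro h1 h2; exact absurd h1 h2
  | @cons a c b hac p ih =>
    intro h1 h2
    by_cases hdc : σ.desc v c
    · rw [SimpleGraph.Walk.edges_cons]
      exact List.mem_cons_of_mem _ (ih hdc h2)
    · rw [St.tree, fromRel_adj] at hac
      rcases hac.2 with ⟨har, hp⟩ | ⟨hcr, hp⟩
      · -- par a = c
        obtain ⟨k, hk⟩ := h1
        rcases k with - | m
        · -- a = v, so this is the edge
          simp only [Function.iterate_zero, id] at hk
          have heq : s(v, σ.par v) = s(a, c) := by rw [← hk, hp]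
          rw [SimpleGraph.Walk.edges_cons, heq]
          exact List.mem_cons_self
        · exfalso
          apply hdc
          refine ⟨m, ?_⟩
          have : σ.par' a = c := by
            unfold St.par'; rw [if_neg har, hp]
          rw [Function.iterate_succ_apply, this] at hk
          exact hk
      · -- par c = a
        exfalso
        apply hdc
        obtain ⟨k, hk⟩ := h1
        refine ⟨k + 1, ?_⟩
        have : σ.par' c = a := by
          unfold St.par'; rw [if_neg hcr, hp]
        rw [Function.iterate_succ_apply, this]
        exact hk

lemma St.tree_isAcyclic (hfull : σ.S = univ) : σ.tree.IsAcyclic := by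
  rw [isAcyclic_iff_forall_adj_isBridge]
  intro u v huv
  have hsym := huv
  rw [St.tree, fromRel_adj] at hsym
  rcases hsym.2 with ⟨hur, hp⟩ | ⟨hvr, hp⟩
  · rw [isBridge_iff_adj_and_forall_walk_mem_edges]
    refine fun p => ?_
    have hnd : ¬ σ.desc u v := by rw [← hp]; exact σ.not_desc_par hfull hur
    have := σ.walk_hits hfull hur p ⟨0, by simp⟩ hnd
    rwa [hp] at this
  · rw [Sym2.eq_swap, isBridge_iff_adj_and_forall_walk_mem_edges]
    refine fun p => ?_
    have hnd : ¬ σ.desc v u := by rw [← hp]; exact σ.not_desc_par hfull hvr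
    have := σ.walk_hits hfull hvr p ⟨0, by simp⟩ hnd
    rwa [hp] at this

lemma St.reach_root (hfull : σ.S = univ) : ∀ (n : ℕ) (v : V), σ.rk v ≤ n → σ.tree.Reachable v σ.r := by
  intro n
  induction n with
  | zero =>
    intro v hv
    by_cases h : v = σ.r
    · exact h ▸ Reachable.refl _
    · exact absurd (lt_of_lt_of_le (σ.hrk v (σ.mem_S hfull v) h) hv) (by omega)
  | succ n ih =>
    intro v hv
    by_cases h : v = σ.r
    · exact h ▸ Reachable.refl _
    · have h1 := σ.hrk v (σ.mem_S hfull v) h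
      exact (σ.tree_adj_par hfull h).reachable.trans (ih (σ.par v) (by omega))

lemma St.tree_connected (hfull : σ.S = univ) : σ.tree.Connected := by
  have hpre : σ.tree.Preconnected := by
    intro u v
    exact ((σ.reach_root hfull (σ.rk u) u le_rfl)).trans
      (σ.reach_root hfull (σ.rk v) v le_rfl).symm
  haveI : Nonempty V := ⟨σ.r⟩
  exact ⟨hpre⟩

/-- Children of a vertex in the final tree. -/
def St.childrenF (v : V) : Finset V := univ.filter (fun u => u ≠ σ.r ∧ σ.par u = v)

lemma St.tree_neighborSet_ne (hfull : σ.S = univ) {v : V} (hv : v ≠ σ.r) :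
    σ.tree.neighborSet v = ↑(σ.childrenF v ∪ {σ.par v}) := by
  ext u
  simp only [mem_neighborSet, St.tree, fromRel_adj, coe_union, coe_filter, Set.mem_union,
    Set.mem_setOf_eq, St.childrenF, coe_singleton, Set.mem_singleton_iff, mem_univ, true_and]
  constructor
  · rintro ⟨hne, ⟨hvr, hp⟩ | ⟨hur, hp⟩⟩
    · exact Or.inr hp.symm
    · exact Or.inl ⟨hur, hp⟩
  · rintro (⟨hur, hp⟩ | hp)
    · refine ⟨?_, Or.inr ⟨hur, hp⟩⟩
      intro hc
      rw [hc] at hp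
      exact σ.par_ne hfull hur (hc ▸ hp.symm)
    · refine ⟨hp ▸ σ.par_ne hfull hv, Or.inl ⟨hv, hp.symm⟩⟩

lemma St.tree_neighborSet_root :
    σ.tree.neighborSet σ.r = ↑(σ.childrenF σ.r) := by
  ext u
  simp only [mem_neighborSet, St.tree, fromRel_adj, coe_filter, Set.mem_setOf_eq,
    St.childrenF, mem_univ, true_and]
  constructor
  · rintro ⟨hne, ⟨hvr, hp⟩ | ⟨hur, hp⟩⟩
    · exact absurd rfl hvr
    · exact ⟨hur, hp⟩
  · rintro ⟨hur, hp⟩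
    exact ⟨fun hc => hur hc.symm, Or.inr ⟨hur, hp⟩⟩

lemma St.par_not_mem_childrenF (hfull : σ.S = univ) {v : V} (hv : v ≠ σ.r) : σ.par v ∉ σ.childrenF v := by
  rw [St.childrenF, mem_filter]
  rintro ⟨-, hpr, hpp⟩
  have h1 := σ.hrk v (σ.mem_S hfull v) hv
  have h2 := σ.hrk (σ.par v) (σ.mem_S hfull (σ.par v)) hpr
  rw [hpp] at h2
  omega

lemma St.ndeg_tree_ne (hfull : σ.S = univ) {v : V} (hv : v ≠ σ.r) :
    ndeg σ.tree v = (σ.childrenF v).card + 1 := by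
  rw [ndeg, σ.tree_neighborSet_ne hfull hv, Nat.card_coe_set_eq, Set.ncard_coe_finset,
    card_union_of_disjoint (by simp [σ.par_not_mem_childrenF hfull hv]), card_singleton]

lemma St.ndeg_tree_root : ndeg σ.tree σ.r = (σ.childrenF σ.r).card := by
  rw [ndeg, σ.tree_neighborSet_root, Nat.card_coe_set_eq, Set.ncard_coe_finset]

lemma St.childrenF_root_card : 2 ≤ (σ.childrenF σ.r).card := by
  refine le_trans σ.hroot (card_le_card ?_)
  intro u hu
  rw [mem_filter] at hu
  rw [St.childrenF, mem_filter]
  exact ⟨mem_univ _, hu.2⟩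

lemma St.ndeg_tree_eq_one_iff (hfull : σ.S = univ) (v : V) : ndeg σ.tree v = 1 ↔ σ.IsLf v := by
  by_cases hv : v = σ.r
  · subst hv
    rw [σ.ndeg_tree_root]
    have := σ.childrenF_root_card
    constructor
    · intro h; omega
    · rintro ⟨-, h, -⟩; exact absurd rfl h
  · rw [σ.ndeg_tree_ne hfull hv]
    constructor
    · intro h
      have hc : σ.childrenF v = ∅ := card_eq_zero.mp (by omega)
      refine ⟨σ.mem_S hfull v, hv, ?_⟩
      intro u hu hur hp
      have : u ∈ σ.childrenF v := by
        rw [St.childrenF, mem_filter]; exact ⟨mem_univ _, hur, hp⟩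
      rw [hc] at this
      exact absurd this (notMem_empty u)
    · rintro ⟨-, -, h⟩
      have hc : σ.childrenF v = ∅ := by
        rw [St.childrenF, filter_eq_empty_iff]
        intro u _
        rintro ⟨hur, hp⟩
        exact h u (σ.mem_S hfull u) hur hp
      rw [hc]
      simp

lemma St.numLeaves_tree (hfull : σ.S = univ) : (numLeaves σ.tree : ℤ) = (univ.filter σ.IsLf).card := by
  have h1 : {v : V | ndeg σ.tree v = 1} = ↑(univ.filter σ.IsLf) := by
    ext v
    simp only [Set.mem_setOf_eq, coe_filter, mem_univ, true_and, Set.mem_setOf_eq]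
    exact σ.ndeg_tree_eq_one_iff hfull v
  rw [numLeaves, h1, Nat.card_coe_set_eq, Set.ncard_coe_finset]

lemma St.outs_full (hfull : σ.S = univ) (v : V) : σ.outs v = ∅ := by
  rw [St.outs, hfull]
  ext u; simp

lemma St.phi_full (hfull : σ.S = univ) : σ.phi = 4 * (univ.filter σ.IsLf).card - Fintype.card V := by
  have h1 : ∀ v, σ.w v = if σ.IsLf v then 4 else 0 := by
    intro v
    rw [St.w, σ.outs_full hfull v]
    simp
  rw [St.phi, hfull]
  simp only [h1]
  rw [sum_ite, sum_const, sum_const]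
  simp [card_univ, mul_comm]

/-- Endgame: from a full state we get the desired spanning tree. -/
lemma St.final : σ.S = univ → ∃ T : SimpleGraph V, IsSpanningTreeOf T G ∧
    σ.phi + Fintype.card V ≤ 4 * (numLeaves T : ℤ) := by
  intro hfull
  refine ⟨σ.tree, ⟨σ.tree_le hfull, ⟨σ.tree_connected hfull, σ.tree_isAcyclic hfull⟩⟩, ?_⟩
  rw [σ.numLeaves_tree hfull, σ.phi_full hfull]
  omega

end Endgame


section Induction

lemma cross_walk {S : Finset V} : ∀ {a b : V} (p : G.Walk a b), a ∈ S → b ∉ S →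
    ∃ x ∈ S, (G.neighborFinset x \ S).Nonempty := by
  intro a b p
  induction p with
  | nil => intro h1 h2; exact absurd h1 h2
  | @cons a c b hac p ih =>
    intro h1 h2
    by_cases hc : c ∈ S
    · exact ih hc h2
    · exact ⟨a, h1, ⟨c, mem_sdiff.mpr ⟨(mem_neighborFinset _ _ _).mpr hac, hc⟩⟩⟩

lemma exists_live (hconn : G.Connected) (σ : St G) (hne : σ.S ≠ univ) :
    ∃ x ∈ σ.S, (σ.outs x).Nonempty := by
  have : ¬ univ ⊆ σ.S := fun h => hne (univ_subset_iff.mp h)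
  obtain ⟨b, -, hb⟩ := not_subset.mp this
  obtain ⟨p⟩ := hconn.preconnected σ.r b
  exact cross_walk p σ.hr hb

/-- `(σ.expand x _ _).outs x = ∅`. -/
lemma St.expand_outs_x (σ : St G) (x : V) (hx : x ∈ σ.S) (hne : (σ.outs x).Nonempty) :
    (σ.expand x hx hne).outs x = ∅ := by
  ext u
  simp only [St.outs, St.expand_S, mem_sdiff, mem_union, notMem_empty, iff_false, not_and,
    not_not]
  intro hu
  by_cases huS : u ∈ σ.S
  · exact Or.inl huS
  · exact Or.inr ⟨hu, huS⟩

lemma St.expand_outs (σ : St G) (x : V) (hx : x ∈ σ.S) (hne : (σ.outs x).Nonempty) (v : V) :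
    (σ.expand x hx hne).outs v = σ.outs v \ σ.outs x := by
  ext u
  simp only [St.outs, St.expand_S, mem_sdiff, mem_union]
  tauto

/-- The combined MAIN/AUX induction. -/
lemma main_ind (hconn : G.Connected) (hdeg3 : ∀ v : V, (G.neighborFinset v).card ≠ 2) :
    ∀ (k : ℕ) (σ : St G), (univ \ σ.S).card ≤ k →
      (∀ z, ∀ hz : z ∈ σ.S, ∀ hzne : (σ.outs z).Nonempty,
        (∀ v ∈ σ.S, v ≠ z → (σ.outs v).Nonempty → (σ.outs v).card = 1) →
        ∃ T : SimpleGraph V, IsSpanningTreeOf T G ∧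
          σ.phi + (Fintype.card V : ℤ) + (if 2 ≤ (σ.outs z).card then 1 else 0)
            ≤ 4 * (numLeaves T : ℤ))
      ∧ (∃ T : SimpleGraph V, IsSpanningTreeOf T G ∧
          σ.phi + (Fintype.card V : ℤ) ≤ 4 * (numLeaves T : ℤ)) := by
  intro k
  induction k with
  | zero =>
    intro σ hk
    have hfull : σ.S = univ := by
      have h0 : (univ \ σ.S).card = 0 := le_antisymm hk (Nat.zero_le _)
      have : univ \ σ.S = ∅ := card_eq_zero.mp h0
      apply univ_subset_iff.mp
      intro v _
      by_contra hv
      have : v ∈ univ \ σ.S := mem_sdiff.mpr ⟨mem_univ _, hv⟩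
      simp_all
    constructor
    · intro z hz hzne _
      rw [σ.outs_full hfull z] at hzne
      exact absurd hzne not_nonempty_empty
    · exact σ.final hfull
  | succ k ih =>
    intro σ hk
    by_cases hfull : σ.S = univ
    · refine ⟨?_, σ.final hfull⟩
      intro z hz hzne _
      rw [σ.outs_full hfull z] at hzne
      exact absurd hzne not_nonempty_empty
    -- The AUX statement.
    have hAUX : ∀ z, ∀ hz : z ∈ σ.S, ∀ hzne : (σ.outs z).Nonempty,
        (∀ v ∈ σ.S, v ≠ z → (σ.outs v).Nonempty → (σ.outs v).card = 1) →
        ∃ T : SimpleGraph V, IsSpanningTreeOf T G ∧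
          σ.phi + (Fintype.card V : ℤ) + (if 2 ≤ (σ.outs z).card then 1 else 0)
            ≤ 4 * (numLeaves T : ℤ) := by
      intro z hz hzne hL1
      have hlt := σ.expand_card_lt z hz hzne
      by_cases h2 : 2 ≤ (σ.outs z).card
      · -- big expansion, gains ≥ 1
        obtain ⟨T, hT, hb⟩ := (ih (σ.expand z hz hzne) (by omega)).2
        refine ⟨T, hT, ?_⟩
        have hphi := σ.phi_expand_ge z hz hzne
        have hc2 : (2 : ℤ) ≤ ((σ.outs z).card : ℤ) := by exact_mod_cast h2
        rw [if_pos h2]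
        omega
      · -- outs z = {u}
        have h1 : (σ.outs z).card = 1 := by
          have := card_pos.mpr hzne
          omega
        obtain ⟨u, hu⟩ := card_eq_one.mp h1
        have huout : u ∈ σ.outs z := by rw [hu]; exact mem_singleton_self u
        have huS : u ∉ σ.S := (σ.mem_outs.mp huout).2
        have hadj_zu : G.Adj z u := (σ.mem_outs.mp huout).1
        have huS' : u ∈ (σ.expand z hz hzne).S := by
          rw [St.expand_S]; exact mem_union_right _ huout
        have huouts : (σ.expand z hz hzne).outs u = σ.outs u := by
          rw [σ.expand_outs z hz hzne u, hu]
          ext w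
          simp only [mem_sdiff, mem_singleton]
          constructor
          · exact fun h => h.1
          · intro h
            refine ⟨h, ?_⟩
            rintro rfl
            have := (σ.mem_outs.mp h).1
            exact G.irrefl this
        have hphi := σ.phi_expand z hz hzne
        rw [hu, sum_singleton] at hphi
        have hwnew := σ.expand_w_new_ge z hz hzne huout
        have hKnn : (0 : ℤ) ≤ (((σ.S.erase z).filter
            (fun v => σ.w v = 3 ∧ (σ.expand z hz hzne).w v = 4)).card : ℤ) := by positivity
        rw [if_neg h2]
        by_cases hud : (σ.expand z hz hzne).outs u = ∅
        · -- u is a dead leaf; potential does not decrease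
          have hw4 : (σ.expand z hz hzne).w u = 4 :=
            (σ.expand z hz hzne).w_eq_four (σ.expand_isLf_new z hz hzne huout) hud
          obtain ⟨T, hT, hb⟩ := (ih (σ.expand z hz hzne) (by omega)).2
          refine ⟨T, hT, ?_⟩
          omega
        · -- u is live in the new state; recurse with AUX
          have hune : ((σ.expand z hz hzne).outs u).Nonempty := nonempty_iff_ne_empty.mpr hud
          have hw3 : (σ.expand z hz hzne).w u = 3 :=
            (σ.expand z hz hzne).w_eq_three (σ.expand_isLf_new z hz hzne huout) hune
          have hL1' : ∀ v ∈ (σ.expand z hz hzne).S, v ≠ u →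
              ((σ.expand z hz hzne).outs v).Nonempty → ((σ.expand z hz hzne).outs v).card = 1 := by
            intro v hv hvu hvne
            rw [St.expand_S] at hv
            rcases mem_union.mp hv with h | h
            · by_cases hvz : v = z
              · exfalso
                rw [hvz, σ.expand_outs_x z hz hzne] at hvne
                exact absurd hvne not_nonempty_empty
              · have hsub := σ.expand_outs_subset z hz hzne v
                obtain ⟨w, hw⟩ := id hvne
                have hvo : (σ.outs v).Nonempty := ⟨w, hsub hw⟩
                have hcard := hL1 v h hvz hvo
                have hle := card_le_card hsub
                have hpos := card_pos.mpr hvne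
                omega
            · rw [hu, mem_singleton] at h
              exact absurd h hvu
          obtain ⟨T, hT, hb⟩ := (ih (σ.expand z hz hzne) (by omega)).1 u huS' hune hL1'
          refine ⟨T, hT, ?_⟩
          by_cases hj2 : 2 ≤ ((σ.expand z hz hzne).outs u).card
          · rw [if_pos hj2] at hb
            omega
          · -- the delicate case: a live leaf dies, giving K ≥ 1
            rw [if_neg hj2] at hb
            have hj1 : ((σ.expand z hz hzne).outs u).card = 1 := by
              have := card_pos.mpr hune
              omega
            -- degree of u is at least 3
            obtain ⟨u', hu'⟩ := hune
            have hu'nS : u' ∉ (σ.expand z hz hzne).S := ((σ.expand z hz hzne).mem_outs.mp hu').2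
            have hu'adj : G.Adj u u' := ((σ.expand z hz hzne).mem_outs.mp hu').1
            have hu'z : u' ≠ z := by
              rintro rfl
              exact hu'nS (by rw [St.expand_S]; exact mem_union_left _ hz)
            have hdeg2 : 2 ≤ (G.neighborFinset u).card := by
              have hsub : ({z, u'} : Finset V) ⊆ G.neighborFinset u := by
                intro w hw
                rcases mem_insert.mp hw with rfl | hw
                · exact (mem_neighborFinset _ _ _).mpr hadj_zu.symm
                · rw [mem_singleton] at hw
                  subst hw
                  exact (mem_neighborFinset _ _ _).mpr hu'adj
              have : ({z, u'} : Finset V).card = 2 := card_pair (Ne.symm hu'z)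
              calc 2 = ({z, u'} : Finset V).card := this.symm
                _ ≤ _ := card_le_card hsub
            have hdeg : 3 ≤ (G.neighborFinset u).card := by
              have := hdeg3 u
              omega
            -- neighbours of u inside σ.S, other than z
            have hcardsplit : (G.neighborFinset u ∩ σ.S).card + (σ.outs u).card
                = (G.neighborFinset u).card := by
              rw [St.outs]
              exact card_inter_add_card_sdiff _ _
            have houtu1 : (σ.outs u).card = 1 := by rw [← huouts]; exact hj1
            have hinS : 2 ≤ (G.neighborFinset u ∩ σ.S).card := by omega
            have hzin : z ∈ G.neighborFinset u ∩ σ.S :=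
              mem_inter.mpr ⟨(mem_neighborFinset _ _ _).mpr hadj_zu.symm, hz⟩
            have : 1 ≤ ((G.neighborFinset u ∩ σ.S).erase z).card := by
              rw [card_erase_of_mem hzin]
              omega
            have hvex : ((G.neighborFinset u ∩ σ.S).erase z).Nonempty := card_pos.mp (by omega)
            obtain ⟨v, hv⟩ := hvex
            have hvz : v ≠ z := (mem_erase.mp hv).1
            have hvmem := mem_erase.mp hv |>.2
            have hvS : v ∈ σ.S := (mem_inter.mp hvmem).2
            have hvadj : G.Adj v u := ((mem_neighborFinset _ _ _).mp (mem_inter.mp hvmem).1).symm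
            have hvout : u ∈ σ.outs v := σ.mem_outs.mpr ⟨hvadj, huS⟩
            have hvlf : σ.IsLf v := σ.isLf_of_outs_nonempty hvS ⟨u, hvout⟩
            have hvw3 : σ.w v = 3 := σ.w_eq_three hvlf ⟨u, hvout⟩
            have hvcard : (σ.outs v).card = 1 := hL1 v hvS hvz ⟨u, hvout⟩
            have hvsingle : σ.outs v = {u} := by
              obtain ⟨a, ha⟩ := card_eq_one.mp hvcard
              rw [ha] at hvout ⊢
              rw [mem_singleton] at hvout
              rw [hvout]
            have hvout' : (σ.expand z hz hzne).outs v = ∅ := by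
              rw [σ.expand_outs z hz hzne v, hvsingle, hu]
              simp
            have hvlf' : (σ.expand z hz hzne).IsLf v :=
              σ.expand_isLf_of_isLf z hz hzne hvS hvz hvlf
            have hvw4 : (σ.expand z hz hzne).w v = 4 :=
              (σ.expand z hz hzne).w_eq_four hvlf' hvout'
            have hK1 : 1 ≤ (((σ.S.erase z).filter
                (fun v => σ.w v = 3 ∧ (σ.expand z hz hzne).w v = 4)).card : ℤ) := by
              have : v ∈ (σ.S.erase z).filter
                  (fun v => σ.w v = 3 ∧ (σ.expand z hz hzne).w v = 4) := by
                rw [mem_filter, mem_erase]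
                exact ⟨⟨hvz, hvS⟩, hvw3, hvw4⟩
              have := card_pos.mpr ⟨v, this⟩
              exact_mod_cast this
            omega
    refine ⟨hAUX, ?_⟩
    -- MAIN
    by_cases hL2 : ∃ x ∈ σ.S, 2 ≤ (σ.outs x).card
    · obtain ⟨x, hx, hx2⟩ := hL2
      have hxne : (σ.outs x).Nonempty := card_pos.mp (by omega)
      have hlt := σ.expand_card_lt x hx hxne
      obtain ⟨T, hT, hb⟩ := (ih (σ.expand x hx hxne) (by omega)).2
      refine ⟨T, hT, ?_⟩
      have hphi := σ.phi_expand_ge x hx hxne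
      have hc2 : (2 : ℤ) ≤ ((σ.outs x).card : ℤ) := by exact_mod_cast hx2
      omega
    · push_neg at hL2
      obtain ⟨x, hx, hxne⟩ := exists_live hconn σ hfull
      have hL1 : ∀ v ∈ σ.S, v ≠ x → (σ.outs v).Nonempty → (σ.outs v).card = 1 := by
        intro v hv _ hvne
        have := hL2 v hv
        have := card_pos.mpr hvne
        omega
      obtain ⟨T, hT, hb⟩ := hAUX x hx hxne hL1
      refine ⟨T, hT, ?_⟩
      by_cases h : 2 ≤ (σ.outs x).card
      · rw [if_pos h] at hb; omega
      · rw [if_neg h] at hb; omega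

end Induction


section Start

lemma not_mem_neighborFinset_self (x : V) : x ∉ G.neighborFinset x :=
  fun h => G.irrefl ((mem_neighborFinset _ _ _).mp h)

/-- The initial star state centred at `x`. -/
def star (x : V) (hdeg : 2 ≤ (G.neighborFinset x).card) : St G where
  S := insert x (G.neighborFinset x)
  r := x
  par := fun _ => x
  rk := fun v => if v = x then 0 else 1
  hr := mem_insert_self _ _
  hadj := by
    intro v hv hvx
    rcases mem_insert.mp hv with h | h
    · exact absurd h hvx
    · exact ((mem_neighborFinset _ _ _).mp h).symm
  hparS := fun v _ _ => mem_insert_self _ _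
  hrk := by
    intro v hv hvx
    simp [hvx]
  hI := by
    intro v hv hvne
    have hvx : v ≠ x := by
      rintro rfl
      obtain ⟨u, hu⟩ := hvne
      rw [mem_sdiff] at hu
      exact hu.2 (mem_insert_of_mem hu.1)
    exact ⟨hvx, fun u _ _ => Ne.symm hvx⟩
  hroot := by
    have hsub : G.neighborFinset x ⊆
        (insert x (G.neighborFinset x)).filter (fun u => u ≠ x ∧ x = x) := by
      intro a ha
      rw [mem_filter]
      exact ⟨mem_insert_of_mem ha,
        Ne.symm (G.ne_of_adj ((mem_neighborFinset _ _ _).mp ha)), rfl⟩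
    exact le_trans hdeg (le_trans (card_le_card hsub) (le_of_eq rfl))

variable (x : V) (hdeg : 2 ≤ (G.neighborFinset x).card)

lemma star_isLf {a : V} (ha : a ∈ G.neighborFinset x) : (star x hdeg).IsLf a := by
  refine ⟨mem_insert_of_mem ha, Ne.symm (G.ne_of_adj ((mem_neighborFinset _ _ _).mp ha)), ?_⟩
  intro u _ _
  exact Ne.symm (Ne.symm (G.ne_of_adj ((mem_neighborFinset _ _ _).mp ha)))

lemma star_w_root : (star x hdeg).w x = 0 := by
  have : ¬ (star x hdeg).IsLf x := by
    rintro ⟨-, hxx, -⟩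
    exact hxx rfl
  unfold St.w
  rw [if_neg this]

lemma star_phi_eq : (star x hdeg).phi
    = (∑ a ∈ G.neighborFinset x, (star x hdeg).w a) - ((G.neighborFinset x).card + 1) := by
  have hnm : x ∉ G.neighborFinset x := not_mem_neighborFinset_self x
  show (∑ v ∈ insert x (G.neighborFinset x), (star x hdeg).w v)
      - (insert x (G.neighborFinset x)).card = _
  rw [sum_insert hnm, star_w_root, card_insert_of_notMem hnm]
  push_cast
  ring

lemma sum_w_ge (σ : St G) (s : Finset V) (h : ∀ a ∈ s, σ.IsLf a) :
    3 * (s.card : ℤ) ≤ ∑ a ∈ s, σ.w a := by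
  have := Finset.card_nsmul_le_sum s σ.w 3 (fun a ha => σ.three_le_w (h a ha))
  simpa [nsmul_eq_mul, mul_comm] using this

lemma star_phi_ge : 2 * ((G.neighborFinset x).card : ℤ) - 1 ≤ (star x hdeg).phi := by
  rw [star_phi_eq]
  have := sum_w_ge (star x hdeg) (G.neighborFinset x) (fun a ha => star_isLf x hdeg ha)
  omega

lemma deg_pos (hconn : G.Connected) (hn : 2 ≤ Fintype.card V) (v : V) :
    1 ≤ (G.neighborFinset v).card := by
  obtain ⟨u, hu⟩ := Fintype.exists_ne_of_one_lt_card (by omega) v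
  obtain ⟨p⟩ := hconn.preconnected v u
  cases p with
  | nil => exact absurd rfl hu
  | cons h q => exact card_pos.mpr ⟨_, (mem_neighborFinset _ _ _).mpr h⟩

lemma stay {x y : V} (hx : G.neighborFinset x = {y}) (hy : G.neighborFinset y = {x}) :
    ∀ {a b : V} (_ : G.Walk a b), a = x ∨ a = y → b = x ∨ b = y := by
  intro a b p
  induction p with
  | nil => exact id
  | @cons a c b h q ih =>
    intro ha
    apply ih
    rcases ha with rfl | rfl
    · have : c ∈ G.neighborFinset a := (mem_neighborFinset _ _ _).mpr h
      rw [hx, mem_singleton] at this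
      exact Or.inr this
    · have : c ∈ G.neighborFinset a := (mem_neighborFinset _ _ _).mpr h
      rw [hy, mem_singleton] at this
      exact Or.inl this

/-- There is always a starting state with potential at least 6 (when `n ≥ 3`). -/
lemma exists_start (hconn : G.Connected) (hdeg3 : ∀ v : V, (G.neighborFinset v).card ≠ 2)
    (hn : 3 ≤ Fintype.card V) : ∃ σ : St G, 6 ≤ σ.phi := by
  have hn2 : 2 ≤ Fintype.card V := by omega
  by_cases hbig : ∃ v : V, 4 ≤ (G.neighborFinset v).card
  · obtain ⟨v, hv⟩ := hbig
    refine ⟨star v (by omega), ?_⟩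
    have := star_phi_ge v (by omega : 2 ≤ (G.neighborFinset v).card)
    have hc : (4 : ℤ) ≤ ((G.neighborFinset v).card : ℤ) := by exact_mod_cast hv
    omega
  by_cases hpend : ∃ y : V, (G.neighborFinset y).card = 1
  · -- pendant case
    obtain ⟨y, hy⟩ := hpend
    obtain ⟨x, hx⟩ := card_eq_one.mp hy
    have hadj_yx : G.Adj y x := by
      have : x ∈ G.neighborFinset y := by rw [hx]; exact mem_singleton_self x
      exact (mem_neighborFinset _ _ _).mp this
    have hyx : y ≠ x := G.ne_of_adj hadj_yx
    have hxdeg : 3 ≤ (G.neighborFinset x).card := by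
      have h1 := deg_pos hconn hn2 x
      have h2 := hdeg3 x
      rcases Nat.lt_or_ge (G.neighborFinset x).card 2 with hlt | hge
      · exfalso
        have hx1 : (G.neighborFinset x).card = 1 := by omega
        obtain ⟨w, hw⟩ := card_eq_one.mp hx1
        have hyw : y ∈ G.neighborFinset x := (mem_neighborFinset _ _ _).mpr hadj_yx.symm
        rw [hw, mem_singleton] at hyw
        subst hyw
        have hsub : (univ : Finset V) ⊆ ({x, y} : Finset V) := by
          intro v _
          obtain ⟨p⟩ := hconn.preconnected x v
          rcases stay hw hx p (Or.inl rfl) with h | h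
          · rw [h]; exact mem_insert_self _ _
          · rw [h]; exact mem_insert_of_mem (mem_singleton_self _)
        have := card_le_card hsub
        have h2' : ({x, y} : Finset V).card ≤ 2 := card_insert_le _ _ |>.trans (by simp)
        rw [card_univ] at this
        omega
      · omega
    have hxdeg2 : 2 ≤ (G.neighborFinset x).card := by omega
    refine ⟨star x hxdeg2, ?_⟩
    have hymem : y ∈ G.neighborFinset x := (mem_neighborFinset _ _ _).mpr hadj_yx.symm
    have hwy : (star x hxdeg2).w y = 4 := by
      apply St.w_eq_four
      · exact star_isLf x hxdeg2 hymem
      · show G.neighborFinset y \ (insert x (G.neighborFinset x)) = ∅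
        rw [hx]
        ext u
        simp only [mem_sdiff, mem_singleton, notMem_empty, iff_false, not_and]
        rintro rfl
        exact fun hc => hc (mem_insert_self _ _)
    rw [star_phi_eq]
    have hsum : ∑ a ∈ G.neighborFinset x, (star x hxdeg2).w a
        = (star x hxdeg2).w y + ∑ a ∈ (G.neighborFinset x).erase y, (star x hxdeg2).w a :=
      (add_sum_erase _ _ hymem).symm
    have hrest := sum_w_ge (star x hxdeg2) ((G.neighborFinset x).erase y)
      (fun a ha => star_isLf x hxdeg2 (mem_of_mem_erase ha))
    have hce : (((G.neighborFinset x).erase y).card : ℤ) = (G.neighborFinset x).card - 1 := by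
      rw [card_erase_of_mem hymem]
      push_cast [Nat.cast_sub (by omega : 1 ≤ (G.neighborFinset x).card)]
      ring
    have hd3 : (3 : ℤ) ≤ ((G.neighborFinset x).card : ℤ) := by exact_mod_cast hxdeg
    rw [hsum, hwy]
    rw [hce] at hrest
    omega
  · -- cubic case
    push_neg at hbig hpend
    have hcubic : ∀ v : V, (G.neighborFinset v).card = 3 := by
      intro v
      have h1 := deg_pos hconn hn2 v
      have h2 := hdeg3 v
      have h3 := hbig v
      have h4 := hpend v
      omega
    haveI : Nonempty V := Fintype.card_pos_iff.mp (by omega)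
    obtain ⟨x₀⟩ : Nonempty V := inferInstance
    have hdeg0 : 2 ≤ (G.neighborFinset x₀).card := by rw [hcubic]; omega
    have hc3 : ((G.neighborFinset x₀).card : ℤ) = 3 := by
      have := hcubic x₀; exact_mod_cast this
    have hphi0 : 5 ≤ (star x₀ hdeg0).phi := by
      have := star_phi_ge x₀ hdeg0
      omega
    by_cases hdead : ∃ a ∈ G.neighborFinset x₀, (star x₀ hdeg0).outs a = ∅
    · -- a dead leaf in the star: potential already 6
      obtain ⟨a, ha, hao⟩ := hdead
      refine ⟨star x₀ hdeg0, ?_⟩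
      rw [star_phi_eq]
      have hw4 : (star x₀ hdeg0).w a = 4 := (star x₀ hdeg0).w_eq_four (star_isLf x₀ hdeg0 ha) hao
      have hsum : ∑ b ∈ G.neighborFinset x₀, (star x₀ hdeg0).w b
          = (star x₀ hdeg0).w a + ∑ b ∈ (G.neighborFinset x₀).erase a, (star x₀ hdeg0).w b :=
        (add_sum_erase _ _ ha).symm
      have hrest := sum_w_ge (star x₀ hdeg0) ((G.neighborFinset x₀).erase a)
        (fun b hb => star_isLf x₀ hdeg0 (mem_of_mem_erase hb))
      have hce : (((G.neighborFinset x₀).erase a).card : ℤ) = 2 := by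
        rw [card_erase_of_mem ha, hcubic]
        norm_num
      rw [hsum, hw4]
      rw [hce] at hrest
      omega
    by_cases hbig2 : ∃ a ∈ G.neighborFinset x₀, 2 ≤ ((star x₀ hdeg0).outs a).card
    · -- expand once, gaining 1
      obtain ⟨a, ha, ha2⟩ := hbig2
      have haS : a ∈ (star x₀ hdeg0).S := mem_insert_of_mem ha
      have hane : ((star x₀ hdeg0).outs a).Nonempty := card_pos.mp (by omega)
      refine ⟨(star x₀ hdeg0).expand a haS hane, ?_⟩
      have := (star x₀ hdeg0).phi_expand_ge a haS hane
      have hc2 : (2 : ℤ) ≤ (((star x₀ hdeg0).outs a).card : ℤ) := by exact_mod_cast ha2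
      omega
    · -- impossible: would give a fixed-point-free involution on 3 elements
      exfalso
      push_neg at hdead hbig2
      have hcard1 : ∀ a ∈ G.neighborFinset x₀, ((star x₀ hdeg0).outs a).card = 1 := by
        intro a ha
        have h1 := card_pos.mpr (hdead a ha)
        have h2 := hbig2 a ha
        omega
      have hsplit : ∀ a : V, (G.neighborFinset a ∩ (star x₀ hdeg0).S).card
          + ((star x₀ hdeg0).outs a).card = (G.neighborFinset a).card := by
        intro a
        exact card_inter_add_card_sdiff _ _
      have hx0nb : ∀ a ∈ G.neighborFinset x₀, x₀ ∈ G.neighborFinset a ∩ (star x₀ hdeg0).S := by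
        intro a ha
        exact mem_inter.mpr
          ⟨(mem_neighborFinset _ _ _).mpr ((mem_neighborFinset _ _ _).mp ha).symm,
          mem_insert_self _ _⟩
      have hcS : ∀ a ∈ G.neighborFinset x₀,
          ((G.neighborFinset a ∩ (star x₀ hdeg0).S).erase x₀).card = 1 := by
        intro a ha
        rw [card_erase_of_mem (hx0nb a ha)]
        have := hsplit a
        have := hcard1 a ha
        have := hcubic a
        omega
      have hsym : ∀ p q : V, p ∈ G.neighborFinset x₀ →
          q ∈ (G.neighborFinset p ∩ (star x₀ hdeg0).S).erase x₀ →
          p ∈ (G.neighborFinset q ∩ (star x₀ hdeg0).S).erase x₀ := by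
        intro p q hp hq
        rw [mem_erase, mem_inter] at hq
        refine mem_erase.mpr ⟨?_, mem_inter.mpr ⟨?_, mem_insert_of_mem hp⟩⟩
        · exact Ne.symm (G.ne_of_adj ((mem_neighborFinset _ _ _).mp hp))
        · exact (mem_neighborFinset _ _ _).mpr ((mem_neighborFinset _ _ _).mp hq.2.1).symm
      obtain ⟨a, b, c, hab, hac, hbc, hset⟩ := card_eq_three.mp (hcubic x₀)
      have hamem : a ∈ G.neighborFinset x₀ := by rw [hset]; simp
      have hbmem : b ∈ G.neighborFinset x₀ := by rw [hset]; simp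
      have hcmem : c ∈ G.neighborFinset x₀ := by rw [hset]; simp
      obtain ⟨fa, hfa⟩ := card_eq_one.mp (hcS a hamem)
      obtain ⟨fb, hfb⟩ := card_eq_one.mp (hcS b hbmem)
      obtain ⟨fc, hfc⟩ := card_eq_one.mp (hcS c hcmem)
      have hmemtriple : ∀ p : V, ∀ fp : V, p ∈ G.neighborFinset x₀ →
          (G.neighborFinset p ∩ (star x₀ hdeg0).S).erase x₀ = {fp} →
          fp ∈ G.neighborFinset x₀ ∧ fp ≠ p := by
        intro p fp hp hfp
        have hfpmem : fp ∈ (G.neighborFinset p ∩ (star x₀ hdeg0).S).erase x₀ := by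
          rw [hfp]; exact mem_singleton_self _
        rw [mem_erase, mem_inter] at hfpmem
        obtain ⟨hfpx, hfpnb, hfpS⟩ := hfpmem
        constructor
        · rcases mem_insert.mp hfpS with h | h
          · exact absurd h hfpx
          · exact h
        · exact Ne.symm (G.ne_of_adj ((mem_neighborFinset _ _ _).mp hfpnb))
      obtain ⟨hfaT, hfane⟩ := hmemtriple a fa hamem hfa
      obtain ⟨hfbT, hfbne⟩ := hmemtriple b fb hbmem hfb
      obtain ⟨hfcT, hfcne⟩ := hmemtriple c fc hcmem hfc
      rw [hset] at hfaT hfbT hfcT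
      simp only [mem_insert, mem_singleton] at hfaT hfbT hfcT
      have hswap : ∀ p q : V, ∀ fp fq : V, p ∈ G.neighborFinset x₀ → q ∈ G.neighborFinset x₀ →
          (G.neighborFinset p ∩ (star x₀ hdeg0).S).erase x₀ = {fp} →
          (G.neighborFinset q ∩ (star x₀ hdeg0).S).erase x₀ = {fq} →
          fp = q → fq = p := by
        intro p q fp fq hp hq hfp hfq hpq
        have h1 : q ∈ (G.neighborFinset p ∩ (star x₀ hdeg0).S).erase x₀ := by
          rw [hfp, hpq]; exact mem_singleton_self _
        have h2 := hsym p q hp h1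
        rw [hfq, mem_singleton] at h2
        exact h2.symm
      rcases hfaT with hfa' | hfa' | hfa'
      · exact hfane hfa'
      · -- fa = b, so fb = a; fc ∈ {a, b} both impossible
        have hfb' : fb = a := hswap a b fa fb hamem hbmem hfa hfb hfa'
        rcases hfcT with h | h | h
        · have h2 : fa = c := hswap c a fc fa hcmem hamem hfc hfa h
          exact hbc (hfa'.symm.trans h2)
        · have h2 : fb = c := hswap c b fc fb hcmem hbmem hfc hfb h
          exact hac (hfb'.symm.trans h2)
        · exact hfcne h
      · -- fa = c, so fc = a; fb ∈ {a, c} both impossible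
        have hfc' : fc = a := hswap a c fa fc hamem hcmem hfa hfc hfa'
        rcases hfbT with h | h | h
        · have h2 : fa = b := hswap b a fb fa hbmem hamem hfb hfa h
          exact hbc (h2.symm.trans hfa')
        · exact hfbne h
        · have h2 : fc = b := hswap b c fb fc hbmem hcmem hfb hfc h
          exact hab (hfc'.symm.trans h2)

end Start


lemma ndeg_eq (G : SimpleGraph V) [DecidableRel G.Adj] (v : V) :
    ndeg G v = (G.neighborFinset v).card := by
  rw [ndeg, ← Set.ncard_coe_finset (G.neighborFinset v), ← Nat.card_coe_set_eq]
  congr 1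
  rw [neighborFinset_def, Set.coe_toFinset]

end KW




theorem stmt_1 {V : Type*} [Fintype V] (G : SimpleGraph V)
    (hconn : G.Connected) (h2 : 2 ≤ Fintype.card V)
    (hdeg : ∀ v : V, ndeg G v ≠ 2) :
    ∃ T : SimpleGraph V, IsSpanningTreeOf T G ∧
      ((Fintype.card V : ℝ) - 2) / 4 + 2 ≤ (numLeaves T : ℝ) := by
  letI : DecidableEq V := Classical.decEq V
  letI : DecidableRel G.Adj := Classical.decRel _
  have hdeg' : ∀ v : V, (G.neighborFinset v).card ≠ 2 := by
    intro v
    rw [← KW.ndeg_eq G v]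
    exact hdeg v
  by_cases hn2 : Fintype.card V = 2
  · -- the two-vertex case: G itself is the spanning tree
    obtain ⟨a, b, hab, huniv⟩ := Finset.card_eq_two.mp
      (by rw [Finset.card_univ]; exact hn2 : (Finset.univ : Finset V).card = 2)
    have hall : ∀ v : V, v = a ∨ v = b := by
      intro v
      have : v ∈ ({a, b} : Finset V) := huniv ▸ Finset.mem_univ v
      simpa using this
    have hadj : G.Adj a b := by
      obtain ⟨p⟩ := hconn.preconnected a b
      cases p with
      | nil => exact absurd rfl hab
      | @cons _ c _ h q =>
        rcases hall c with rfl | rfl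
        · exact (G.irrefl h).elim
        · exact h
    have hacyc : G.IsAcyclic := by
      intro v c hc
      have h3 := hc.three_le_length
      have hnodup : c.support.tail.Nodup := ((SimpleGraph.Walk.isCycle_def _).mp hc).2.2
      have hlen : c.support.tail.length = c.length := by
        have := c.length_support
        simp only [List.length_tail, this]
        omega
      have hcard := hnodup.length_le_card
      rw [hlen] at hcard
      omega
    have hnba : G.neighborFinset a = {b} := by
      ext u
      rw [SimpleGraph.mem_neighborFinset, Finset.mem_singleton]
      constructor
      · intro h
        rcases hall u with rfl | rfl
        · exact (G.irrefl h).elim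
        · rfl
      · rintro rfl
        exact hadj
    have hnbb : G.neighborFinset b = {a} := by
      ext u
      rw [SimpleGraph.mem_neighborFinset, Finset.mem_singleton]
      constructor
      · intro h
        rcases hall u with rfl | rfl
        · rfl
        · exact (G.irrefl h).elim
      · rintro rfl
        exact hadj.symm
    have hset : {v : V | ndeg G v = 1} = Set.univ := by
      ext v
      simp only [Set.mem_setOf_eq, Set.mem_univ, iff_true]
      rcases hall v with rfl | rfl
      · rw [KW.ndeg_eq, hnba, Finset.card_singleton]
      · rw [KW.ndeg_eq, hnbb, Finset.card_singleton]
    have hnum : numLeaves G = 2 := by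
      rw [numLeaves, hset, Nat.card_coe_set_eq, Set.ncard_univ, Nat.card_eq_fintype_card,
        hn2]
    refine ⟨G, ⟨le_refl G, ⟨hconn, hacyc⟩⟩, ?_⟩
    rw [hnum, hn2]
    norm_num
  · -- main case
    have hn3 : 3 ≤ Fintype.card V := by omega
    obtain ⟨σ, hσ⟩ := KW.exists_start hconn hdeg' hn3
    obtain ⟨T, hT, hb⟩ := (KW.main_ind hconn hdeg' (Finset.univ \ σ.S).card σ le_rfl).2
    refine ⟨T, hT, ?_⟩
    have hZ : (Fintype.card V : ℤ) + 6 ≤ 4 * (numLeaves T : ℤ) := by omega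
    have hR : (Fintype.card V : ℝ) + 6 ≤ 4 * (numLeaves T : ℝ) := by exact_mod_cast hZ
    linarith
end

section
/- Let G1 and G2 be vertex-disjoint connected graphs, each with at least 2 vertices, with pendant (degree-1) vertices x1 in G1 and x2 in G2 respectively. Let G be the graph obtained by identifying x1 and x2 into a single vertex. Then u(G) = u(G1) + u(G2) - 2, where u(H) denotes the maximum number of leaves in a spanning tree of H. -/
open SimpleGraph

/-- The graph obtained by gluing `G1` and `G2` at the vertices `x1`, `x2`
(which are identified into the single vertex `Sum.inl x1`). -/
def glue {V1 V2 : Type*} (G1 : SimpleGraph V1) (G2 : SimpleGraph V2)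
    (x1 : V1) (x2 : V2) : SimpleGraph (V1 ⊕ {v : V2 // v ≠ x2}) :=
  SimpleGraph.fromRel (fun a b =>
    match a, b with
    | Sum.inl u, Sum.inl v => G1.Adj u v
    | Sum.inl u, Sum.inr v => u = x1 ∧ G2.Adj x2 v.val
    | Sum.inr u, Sum.inr v => G2.Adj u.val v.val
    | Sum.inr _, Sum.inl _ => False)

namespace StmtAux

set_option linter.unusedSectionVars false

/-! ### Generic lemmas -/

/-- Projection of reachability along a map that sends edges to reachable pairs. -/
lemma reach_proj {W U : Type*} {H : SimpleGraph W} {K : SimpleGraph U} (p : W → U)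
    (hp : ∀ a b, H.Adj a b → K.Reachable (p a) (p b)) {a b : W}
    (h : H.Reachable a b) : K.Reachable (p a) (p b) := by
  obtain ⟨w⟩ := h
  induction w with
  | nil => exact Reachable.refl _
  | cons h w ih => exact (hp _ _ h).trans ih

lemma sdiff_single_adj {W : Type*} {G : SimpleGraph W} {e : Sym2 W} {a b : W} :
    (G \ fromEdgeSet {e}).Adj a b ↔ G.Adj a b ∧ s(a, b) ≠ e := by
  rw [sdiff_adj, fromEdgeSet_adj]
  constructor
  · rintro ⟨h, hn⟩
    exact ⟨h, fun he => hn ⟨by simp [he], h.ne⟩⟩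
  · rintro ⟨h, hn⟩
    exact ⟨h, fun hc => hn (by simpa using hc.1)⟩

variable {V : Type*} [Fintype V]

lemma pendant_deg {G T : SimpleGraph V} {x : V} (hle : T ≤ G) (hc : T.Connected)
    (hcard : 2 ≤ Fintype.card V) (hx : ndeg G x = 1) : ndeg T x = 1 := by
  have hsub : T.neighborSet x ⊆ G.neighborSet x := fun v hv => hle hv
  have hne : (T.neighborSet x).Nonempty := by
    obtain ⟨v, hv⟩ := Fintype.exists_ne_of_one_lt_card (by omega) x
    obtain ⟨w⟩ := hc.preconnected x v
    cases w with
    | nil => exact absurd rfl hv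
    | cons h _ => exact ⟨_, h⟩
  unfold ndeg at *
  rw [Nat.card_coe_set_eq] at hx ⊢
  have h1 := Set.ncard_le_ncard hsub (Set.toFinite _)
  have h2 := (Set.ncard_pos (Set.toFinite _)).mpr hne
  omega

lemma numLeaves_le {T : SimpleGraph V} : numLeaves T ≤ Fintype.card V := by
  unfold numLeaves
  rw [Nat.card_coe_set_eq, ← Nat.card_eq_fintype_card, ← Set.ncard_univ]
  exact Set.ncard_le_ncard (Set.subset_univ _) Set.finite_univ

lemma del_connected {G : SimpleGraph V} {v w : V} (h : G.Connected)
    (hvw : (G \ fromEdgeSet {s(v, w)}).Reachable v w) :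
    (G \ fromEdgeSet {s(v, w)}).Connected := by
  rw [connected_iff] at h ⊢
  refine ⟨?_, h.2⟩
  intro a b
  obtain ⟨p⟩ := h.1 a b
  induction p with
  | nil => exact Reachable.refl _
  | @cons a c b' hadj q ih =>
    refine Reachable.trans ?_ ih
    by_cases he : s(a, c) = s(v, w)
    · rw [Sym2.eq_iff] at he
      rcases he with ⟨rfl, rfl⟩ | ⟨rfl, rfl⟩
      · exact hvw
      · exact hvw.symm
    · exact (sdiff_single_adj.mpr ⟨hadj, he⟩).reachable

lemma exists_spanning_tree_aux :
    ∀ (n : ℕ) (G : SimpleGraph V), G.edgeSet.ncard ≤ n → G.Connected →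
      ∃ T, T ≤ G ∧ T.IsTree := by
  intro n
  induction n with
  | zero =>
    intro G hn hc
    refine ⟨G, le_refl _, hc, ?_⟩
    have : G.edgeSet = ∅ := (Set.ncard_eq_zero (Set.toFinite _)).mp (by omega)
    rw [edgeSet_eq_empty] at this
    rw [this]
    exact isAcyclic_bot
  | succ n ih =>
    intro G hn hc
    by_cases ha : G.IsAcyclic
    · exact ⟨G, le_refl _, hc, ha⟩
    · rw [isAcyclic_iff_forall_adj_isBridge] at ha
      push_neg at ha
      obtain ⟨v, w, hadj, hnb⟩ := ha
      rw [isBridge_iff] at hnb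
      push_neg at hnb
      have hreach := hnb
      have hconn' := del_connected hc hreach
      have hlt : (G \ fromEdgeSet {s(v, w)}).edgeSet.ncard < G.edgeSet.ncard := by
        refine Set.ncard_lt_ncard ?_ (Set.toFinite _)
        rw [edgeSet_sdiff]
        constructor
        · exact Set.diff_subset
        · intro hsub
          have := hsub (G.mem_edgeSet.mpr hadj)
          rw [Set.mem_diff] at this
          exact this.2 (by simp [fromEdgeSet_adj, hadj.ne])
      obtain ⟨T, hT, htree⟩ := ih _ (by omega) hconn'
      exact ⟨T, le_trans hT sdiff_le, htree⟩

lemma exists_spanning_tree (G : SimpleGraph V) (hc : G.Connected) :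
    ∃ T, T ≤ G ∧ T.IsTree :=
  exists_spanning_tree_aux G.edgeSet.ncard G (le_refl _) hc

/-! ### The gluing map -/

variable {V1 V2 : Type*}

/-- The canonical map `V2 → V1 ⊕ {v // v ≠ x2}` sending `x2` to the glued vertex. -/
noncomputable def fmap (x1 : V1) (x2 : V2) (v : V2) : V1 ⊕ {v : V2 // v ≠ x2} :=
  @dite _ (v = x2) (Classical.dec _) (fun _ => Sum.inl x1) (fun h => Sum.inr ⟨v, h⟩)

variable {G1 : SimpleGraph V1} {G2 : SimpleGraph V2} {x1 : V1} {x2 : V2}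

lemma fmap_x2 : fmap x1 x2 x2 = Sum.inl x1 := dif_pos rfl

lemma fmap_ne {v : V2} (h : v ≠ x2) : fmap x1 x2 v = Sum.inr ⟨v, h⟩ := dif_neg h

lemma fmap_injective : Function.Injective (fmap x1 x2) := by
  intro a b h
  by_cases ha : a = x2 <;> by_cases hb : b = x2
  · rw [ha, hb]
  · subst ha; rw [fmap_x2, fmap_ne hb] at h; exact absurd h (by simp)
  · subst hb; rw [fmap_ne ha, fmap_x2] at h; exact absurd h (by simp)
  · rw [fmap_ne ha, fmap_ne hb] at h; simpa [Subtype.ext_iff] using h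

lemma glue_adj_inl_inl {u v : V1} :
    (glue G1 G2 x1 x2).Adj (Sum.inl u) (Sum.inl v) ↔ G1.Adj u v := by
  unfold glue
  rw [fromRel_adj]
  constructor
  · rintro ⟨-, h | h⟩
    · exact h
    · exact h.symm
  · intro h
    exact ⟨by simpa using h.ne, Or.inl h⟩

lemma glue_adj_inl_inr {u : V1} {v : {v : V2 // v ≠ x2}} :
    (glue G1 G2 x1 x2).Adj (Sum.inl u) (Sum.inr v) ↔ u = x1 ∧ G2.Adj x2 v.val := by
  unfold glue
  rw [fromRel_adj]
  constructor
  · rintro ⟨-, h | h⟩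
    · exact h
    · exact h.elim
  · intro h
    exact ⟨by simp, Or.inl h⟩

lemma glue_adj_inr_inr {u v : {v : V2 // v ≠ x2}} :
    (glue G1 G2 x1 x2).Adj (Sum.inr u) (Sum.inr v) ↔ G2.Adj u.val v.val := by
  unfold glue
  rw [fromRel_adj]
  constructor
  · rintro ⟨-, h | h⟩
    · exact h
    · exact h.symm
  · intro h
    refine ⟨?_, Or.inl h⟩
    simp only [ne_eq, Sum.inr.injEq]
    intro he
    exact h.ne (congrArg Subtype.val he)

lemma glue_adj_inr_inl {u : {v : V2 // v ≠ x2}} {v : V1} :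
    (glue G1 G2 x1 x2).Adj (Sum.inr u) (Sum.inl v) ↔ v = x1 ∧ G2.Adj x2 u.val := by
  rw [adj_comm, glue_adj_inl_inr]

lemma glue_mono {t1 : SimpleGraph V1} {t2 : SimpleGraph V2} (h1 : t1 ≤ G1) (h2 : t2 ≤ G2) :
    glue t1 t2 x1 x2 ≤ glue G1 G2 x1 x2 := by
  intro a b h
  match a, b with
  | Sum.inl u, Sum.inl v => exact glue_adj_inl_inl.mpr (h1 (glue_adj_inl_inl.mp h))
  | Sum.inl u, Sum.inr v =>
    obtain ⟨rfl, hh⟩ := glue_adj_inl_inr.mp h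
    exact glue_adj_inl_inr.mpr ⟨rfl, h2 hh⟩
  | Sum.inr u, Sum.inl v =>
    obtain ⟨rfl, hh⟩ := glue_adj_inr_inl.mp h
    exact glue_adj_inr_inl.mpr ⟨rfl, h2 hh⟩
  | Sum.inr u, Sum.inr v => exact glue_adj_inr_inr.mpr (h2 (glue_adj_inr_inr.mp h))

/-! ### Decomposing a spanning tree of the glued graph -/

variable {T : SimpleGraph (V1 ⊕ {v : V2 // v ≠ x2})}

lemma comap_inl_le (hT : T ≤ glue G1 G2 x1 x2) : T.comap Sum.inl ≤ G1 := by
  intro u v h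
  exact glue_adj_inl_inl.mp (hT h)

lemma comap_fmap_le (hT : T ≤ glue G1 G2 x1 x2) : T.comap (fmap x1 x2) ≤ G2 := by
  intro u v h
  rw [comap_adj] at h
  by_cases hu : u = x2 <;> by_cases hv : v = x2
  · subst hu; subst hv; exact absurd rfl h.ne
  · subst hu; rw [fmap_x2, fmap_ne hv] at h; exact (glue_adj_inl_inr.mp (hT h)).2
  · subst hv; rw [fmap_ne hu, fmap_x2] at h; exact ((glue_adj_inr_inl.mp (hT h)).2).symm
  · rw [fmap_ne hu, fmap_ne hv] at h; exact glue_adj_inr_inr.mp (hT h)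

lemma comap_inl_connected (hT : T ≤ glue G1 G2 x1 x2) (hc : T.Connected) :
    (T.comap Sum.inl).Connected := by
  rw [connected_iff]
  refine ⟨?_, ⟨x1⟩⟩
  intro u v
  have step : ∀ a b, T.Adj a b →
      (T.comap Sum.inl).Reachable (Sum.elim id (fun _ => x1) a) (Sum.elim id (fun _ => x1) b) := by
    intro a b hab
    match a, b with
    | Sum.inl a, Sum.inl b => exact Adj.reachable hab
    | Sum.inl a, Sum.inr b =>
      obtain ⟨rfl, -⟩ := glue_adj_inl_inr.mp (hT hab)
      exact Reachable.refl _
    | Sum.inr a, Sum.inl b =>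
      obtain ⟨rfl, -⟩ := glue_adj_inr_inl.mp (hT hab)
      exact Reachable.refl _
    | Sum.inr a, Sum.inr b => exact Reachable.refl _
  exact reach_proj _ step (hc.preconnected (Sum.inl u) (Sum.inl v))

lemma comap_fmap_connected (hT : T ≤ glue G1 G2 x1 x2) (hc : T.Connected) :
    (T.comap (fmap x1 x2)).Connected := by
  rw [connected_iff]
  refine ⟨?_, ⟨x2⟩⟩
  intro u v
  have step : ∀ a b, T.Adj a b →
      (T.comap (fmap x1 x2)).Reachable (Sum.elim (fun _ => x2) Subtype.val a)
        (Sum.elim (fun _ => x2) Subtype.val b) := by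
    intro a b hab
    match a, b with
    | Sum.inl a, Sum.inl b => exact Reachable.refl _
    | Sum.inl a, Sum.inr b =>
      have ha := (glue_adj_inl_inr.mp (hT hab)).1
      refine Adj.reachable ?_
      show T.Adj (fmap x1 x2 x2) (fmap x1 x2 b.val)
      rw [fmap_x2, fmap_ne b.2]
      exact ha ▸ hab
    | Sum.inr a, Sum.inl b =>
      have hb := (glue_adj_inr_inl.mp (hT hab)).1
      refine (Adj.reachable ?_).symm
      show T.Adj (fmap x1 x2 x2) (fmap x1 x2 a.val)
      rw [fmap_x2, fmap_ne a.2]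
      exact hb ▸ hab.symm
    | Sum.inr a, Sum.inr b =>
      refine Adj.reachable ?_
      show T.Adj (fmap x1 x2 a.val) (fmap x1 x2 b.val)
      rw [fmap_ne a.2, fmap_ne b.2]
      exact hab
  have hr := reach_proj _ step (hc.preconnected (fmap x1 x2 u) (fmap x1 x2 v))
  have hqf : ∀ z : V2, Sum.elim (fun _ => x2) Subtype.val (fmap x1 x2 z) = z := by
    intro z
    by_cases hz : z = x2
    · subst hz; rw [fmap_x2]; rfl
    · rw [fmap_ne hz]; rfl
  rwa [hqf, hqf] at hr

lemma comap_inl_acyclic (hT : T.IsAcyclic) : (T.comap Sum.inl).IsAcyclic := by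
  intro v c hc
  exact hT ((c.map ⟨Sum.inl, fun h => h⟩))
    (hc.map (f := ⟨Sum.inl, fun h => h⟩) (fun _ _ h => Sum.inl_injective h))

lemma comap_fmap_acyclic (hT : T.IsAcyclic) : (T.comap (fmap x1 x2)).IsAcyclic := by
  intro v c hc
  exact hT ((c.map ⟨fmap x1 x2, fun h => h⟩))
    (hc.map (f := ⟨fmap x1 x2, fun h => h⟩) (fun _ _ h => fmap_injective h))

lemma nb_inl (hT : T ≤ glue G1 G2 x1 x2) {u : V1} (hu : u ≠ x1) :
    T.neighborSet (Sum.inl u) = Sum.inl '' (T.comap Sum.inl).neighborSet u := by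
  ext w
  cases w with
  | inl v =>
    simp only [mem_neighborSet, Set.mem_image, comap_adj]
    constructor
    · intro h; exact ⟨v, h, rfl⟩
    · rintro ⟨z, hz, he⟩
      obtain rfl : z = v := by simpa using he
      exact hz
  | inr v =>
    simp only [mem_neighborSet, Set.mem_image, comap_adj]
    constructor
    · intro h
      exact absurd (glue_adj_inl_inr.mp (hT h)).1 hu
    · rintro ⟨z, hz, he⟩
      exact absurd he (by simp)

lemma nb_inr (hT : T ≤ glue G1 G2 x1 x2) (u : {v : V2 // v ≠ x2}) :
    T.neighborSet (Sum.inr u) = fmap x1 x2 '' (T.comap (fmap x1 x2)).neighborSet u.val := by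
  ext w
  cases w with
  | inl v =>
    simp only [mem_neighborSet, Set.mem_image, comap_adj]
    constructor
    · intro h
      obtain ⟨rfl, -⟩ := glue_adj_inr_inl.mp (hT h)
      refine ⟨x2, ?_, fmap_x2⟩
      rw [fmap_ne u.2, fmap_x2]
      exact h
    · rintro ⟨z, hz, he⟩
      by_cases hzx : z = x2
      · subst hzx
        rw [fmap_x2] at he
        obtain rfl : x1 = v := by simpa using he
        rw [fmap_ne u.2, fmap_x2] at hz
        exact hz
      · rw [fmap_ne hzx] at he
        exact absurd he (by simp)
  | inr v =>
    simp only [mem_neighborSet, Set.mem_image, comap_adj]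
    constructor
    · intro h
      refine ⟨v.val, ?_, fmap_ne v.2⟩
      rw [fmap_ne u.2, fmap_ne v.2]
      exact h
    · rintro ⟨z, hz, he⟩
      by_cases hzx : z = x2
      · subst hzx; rw [fmap_x2] at he; exact absurd he (by simp)
      · rw [fmap_ne hzx] at he
        obtain rfl : z = v.val := by simpa [Subtype.ext_iff] using he
        rw [fmap_ne u.2, fmap_ne hzx] at hz
        exact hz

lemma nb_x (hT : T ≤ glue G1 G2 x1 x2) :
    T.neighborSet (Sum.inl x1) =
      Sum.inl '' (T.comap Sum.inl).neighborSet x1 ∪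
        fmap x1 x2 '' (T.comap (fmap x1 x2)).neighborSet x2 := by
  ext w
  cases w with
  | inl v =>
    simp only [mem_neighborSet, Set.mem_image, Set.mem_union, comap_adj]
    constructor
    · intro h; exact Or.inl ⟨v, h, rfl⟩
    · rintro (⟨z, hz, he⟩ | ⟨z, hz, he⟩)
      · obtain rfl : z = v := by simpa using he
        exact hz
      · by_cases hzx : z = x2
        · subst hzx
          rw [fmap_x2] at hz
          exact absurd rfl hz.ne
        · rw [fmap_ne hzx] at he
          exact absurd he (by simp)
  | inr v =>
    simp only [mem_neighborSet, Set.mem_image, Set.mem_union, comap_adj]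
    constructor
    · intro h
      refine Or.inr ⟨v.val, ?_, fmap_ne v.2⟩
      rw [fmap_x2, fmap_ne v.2]
      exact h
    · rintro (⟨z, hz, he⟩ | ⟨z, hz, he⟩)
      · exact absurd he (by simp)
      · by_cases hzx : z = x2
        · subst hzx; rw [fmap_x2] at he; exact absurd he (by simp)
        · rw [fmap_ne hzx] at he
          obtain rfl : z = v.val := by simpa [Subtype.ext_iff] using he
          rw [fmap_x2, fmap_ne hzx] at hz
          exact hz

lemma ndeg_glue_inl (hT : T ≤ glue G1 G2 x1 x2) {u : V1} (hu : u ≠ x1) :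
    ndeg T (Sum.inl u) = ndeg (T.comap Sum.inl) u := by
  unfold ndeg
  rw [Nat.card_coe_set_eq, Nat.card_coe_set_eq, nb_inl hT hu,
    Set.ncard_image_of_injective _ Sum.inl_injective]

lemma ndeg_glue_inr (hT : T ≤ glue G1 G2 x1 x2) (u : {v : V2 // v ≠ x2}) :
    ndeg T (Sum.inr u) = ndeg (T.comap (fmap x1 x2)) u.val := by
  unfold ndeg
  rw [Nat.card_coe_set_eq, Nat.card_coe_set_eq, nb_inr hT u,
    Set.ncard_image_of_injective _ fmap_injective]

lemma ndeg_glue_x [Fintype V1] [Fintype V2] (hT : T ≤ glue G1 G2 x1 x2)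
    (hd1 : ndeg (T.comap Sum.inl) x1 = 1) (hd2 : ndeg (T.comap (fmap x1 x2)) x2 = 1) :
    ndeg T (Sum.inl x1) = 2 := by
  unfold ndeg at *
  rw [Nat.card_coe_set_eq] at hd1 hd2 ⊢
  have hdisj : Disjoint (Sum.inl '' (T.comap Sum.inl).neighborSet x1)
      (fmap x1 x2 '' (T.comap (fmap x1 x2)).neighborSet x2) := by
    rw [Set.disjoint_left]
    rintro a ⟨z, hz, rfl⟩ ⟨y, hy, he⟩
    simp only [mem_neighborSet, comap_adj] at hy
    by_cases hyx : y = x2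
    · rw [hyx] at hy
      exact hy.ne rfl
    · rw [fmap_ne hyx] at he
      exact absurd he (by simp)
  rw [nb_x hT, Set.ncard_union_eq hdisj (Set.toFinite _) (Set.toFinite _),
    Set.ncard_image_of_injective _ Sum.inl_injective,
    Set.ncard_image_of_injective _ fmap_injective, hd1, hd2]

lemma leaf_set [Fintype V1] [Fintype V2] (hT : T ≤ glue G1 G2 x1 x2)
    (hd1 : ndeg (T.comap Sum.inl) x1 = 1) (hd2 : ndeg (T.comap (fmap x1 x2)) x2 = 1) :
    {w | ndeg T w = 1} =
      Sum.inl '' ({v | ndeg (T.comap Sum.inl) v = 1} \ {x1}) ∪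
        fmap x1 x2 '' ({v | ndeg (T.comap (fmap x1 x2)) v = 1} \ {x2}) := by
  ext w
  simp only [Set.mem_setOf_eq, Set.mem_union, Set.mem_image, Set.mem_diff,
    Set.mem_singleton_iff]
  cases w with
  | inl u =>
    by_cases hu : u = x1
    · rw [hu, ndeg_glue_x hT hd1 hd2]
      constructor
      · intro h; exact absurd h (by norm_num)
      · rintro (⟨z, ⟨hz1, hz2⟩, he⟩ | ⟨z, ⟨hz1, hz2⟩, he⟩)
        · obtain rfl : z = x1 := by simpa using he
          exact absurd rfl hz2
        · by_cases hzx : z = x2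
          · exact absurd hzx hz2
          · rw [fmap_ne hzx] at he
            exact absurd he (by simp)
    · rw [ndeg_glue_inl hT hu]
      constructor
      · intro h; exact Or.inl ⟨u, ⟨h, hu⟩, rfl⟩
      · rintro (⟨z, ⟨hz1, hz2⟩, he⟩ | ⟨z, ⟨hz1, hz2⟩, he⟩)
        · obtain rfl : z = u := by simpa using he
          exact hz1
        · by_cases hzx : z = x2
          · subst hzx
            rw [fmap_x2] at he
            exact absurd ((by simpa using he : x1 = u).symm) hu
          · rw [fmap_ne hzx] at he
            exact absurd he (by simp)
  | inr u =>
    rw [ndeg_glue_inr hT u]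
    constructor
    · intro h; exact Or.inr ⟨u.val, ⟨h, u.2⟩, fmap_ne u.2⟩
    · rintro (⟨z, ⟨hz1, hz2⟩, he⟩ | ⟨z, ⟨hz1, hz2⟩, he⟩)
      · exact absurd he (by simp)
      · rw [fmap_ne hz2] at he
        obtain rfl : z = u.val := by simpa [Subtype.ext_iff] using he
        exact hz1

lemma decompose [Fintype V1] [Fintype V2] (h1 : 2 ≤ Fintype.card V1) (h2 : 2 ≤ Fintype.card V2)
    (hx1 : ndeg G1 x1 = 1) (hx2 : ndeg G2 x2 = 1)
    (hT : IsSpanningTreeOf T (glue G1 G2 x1 x2)) :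
    IsSpanningTreeOf (T.comap Sum.inl) G1 ∧ IsSpanningTreeOf (T.comap (fmap x1 x2)) G2 ∧
      numLeaves T + 2 = numLeaves (T.comap Sum.inl) + numLeaves (T.comap (fmap x1 x2)) := by
  obtain ⟨hle, htree⟩ := hT
  have hT1le := comap_inl_le hle
  have hT2le := comap_fmap_le hle
  have hT1c := comap_inl_connected hle htree.isConnected
  have hT2c := comap_fmap_connected hle htree.isConnected
  have hT1a := comap_inl_acyclic (x2 := x2) htree.IsAcyclic
  have hT2a := comap_fmap_acyclic (x1 := x1) htree.IsAcyclic
  have hd1 : ndeg (T.comap Sum.inl) x1 = 1 := pendant_deg hT1le hT1c h1 hx1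
  have hd2 : ndeg (T.comap (fmap x1 x2)) x2 = 1 := pendant_deg hT2le hT2c h2 hx2
  refine ⟨⟨hT1le, hT1c, hT1a⟩, ⟨hT2le, hT2c, hT2a⟩, ?_⟩
  unfold numLeaves
  rw [Nat.card_coe_set_eq, Nat.card_coe_set_eq, Nat.card_coe_set_eq,
    leaf_set hle hd1 hd2]
  have hdisj : Disjoint (Sum.inl '' ({v | ndeg (T.comap Sum.inl) v = 1} \ {x1}))
      (fmap x1 x2 '' ({v | ndeg (T.comap (fmap x1 x2)) v = 1} \ {x2})) := by
    rw [Set.disjoint_left]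
    rintro a ⟨z, hz, rfl⟩ ⟨y, ⟨hy1, hy2⟩, he⟩
    rw [fmap_ne hy2] at he
    exact absurd he (by simp)
  rw [Set.ncard_union_eq hdisj (Set.toFinite _) (Set.toFinite _),
    Set.ncard_image_of_injective _ Sum.inl_injective,
    Set.ncard_image_of_injective _ fmap_injective]
  have m1 : x1 ∈ {v | ndeg (T.comap Sum.inl) v = 1} := hd1
  have m2 : x2 ∈ {v | ndeg (T.comap (fmap x1 x2)) v = 1} := hd2
  rw [Set.ncard_diff_singleton_of_mem m1,
    Set.ncard_diff_singleton_of_mem m2]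
  have p1 := (Set.ncard_pos (Set.toFinite _)).mpr ⟨x1, m1⟩
  have p2 := (Set.ncard_pos (Set.toFinite _)).mpr ⟨x2, m2⟩
  omega

/-! ### Gluing two spanning trees -/

lemma homFmap_adj {t1 : SimpleGraph V1} {t2 : SimpleGraph V2} {a b : V2} (h : t2.Adj a b) :
    (glue t1 t2 x1 x2).Adj (fmap x1 x2 a) (fmap x1 x2 b) := by
  by_cases ha : a = x2 <;> by_cases hb : b = x2
  · subst ha; subst hb; exact absurd rfl h.ne
  · subst ha; rw [fmap_x2, fmap_ne hb]; exact glue_adj_inl_inr.mpr ⟨rfl, h⟩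
  · subst hb; rw [fmap_ne ha, fmap_x2]; exact glue_adj_inr_inl.mpr ⟨rfl, h.symm⟩
  · rw [fmap_ne ha, fmap_ne hb]; exact glue_adj_inr_inr.mpr h

lemma glue_connected {t1 : SimpleGraph V1} {t2 : SimpleGraph V2}
    (hc1 : t1.Connected) (hc2 : t2.Connected) : (glue t1 t2 x1 x2).Connected := by
  rw [connected_iff]
  refine ⟨?_, ⟨Sum.inl x1⟩⟩
  have key : ∀ a, (glue t1 t2 x1 x2).Reachable a (Sum.inl x1) := by
    intro a
    match a with
    | Sum.inl u =>
      exact reach_proj Sum.inl (fun a b h => (glue_adj_inl_inl.mpr h).reachable)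
        (hc1.preconnected u x1)
    | Sum.inr u =>
      have h2 : (glue t1 t2 x1 x2).Reachable (fmap x1 x2 u.val) (fmap x1 x2 x2) :=
        reach_proj (fmap x1 x2) (fun a b h => ((homFmap_adj (t1 := t1) h).reachable))
          (hc2.preconnected u.val x2)
      rwa [fmap_ne u.2, fmap_x2] at h2
  intro a b
  exact (key a).trans (key b).symm

lemma del_proj_inl {t1 : SimpleGraph V1} {t2 : SimpleGraph V2} {u v : V1} :
    ∀ a b, ((glue t1 t2 x1 x2) \ fromEdgeSet {s(Sum.inl u, Sum.inl v)}).Adj a b →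
      (t1 \ fromEdgeSet {s(u, v)}).Reachable (Sum.elim id (fun _ => x1) a)
        (Sum.elim id (fun _ => x1) b) := by
  intro a b hab
  rw [sdiff_single_adj] at hab
  obtain ⟨hadj, hne⟩ := hab
  match a, b with
  | Sum.inl a, Sum.inl b =>
    refine Adj.reachable (sdiff_single_adj.mpr ⟨glue_adj_inl_inl.mp hadj, fun he => ?_⟩)
    exact hne (by simpa only [Sym2.map_pair_eq, Sum.elim_inl, id_eq] using congrArg (Sym2.map Sum.inl) he)
  | Sum.inl a, Sum.inr b =>
    obtain ⟨rfl, -⟩ := glue_adj_inl_inr.mp hadj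
    exact Reachable.refl _
  | Sum.inr a, Sum.inl b =>
    obtain ⟨rfl, -⟩ := glue_adj_inr_inl.mp hadj
    exact Reachable.refl _
  | Sum.inr a, Sum.inr b => exact Reachable.refl _

lemma del_proj_fmap {t1 : SimpleGraph V1} {t2 : SimpleGraph V2} {c d : V2} :
    ∀ a b, ((glue t1 t2 x1 x2) \ fromEdgeSet {s(fmap x1 x2 c, fmap x1 x2 d)}).Adj a b →
      (t2 \ fromEdgeSet {s(c, d)}).Reachable (Sum.elim (fun _ => x2) Subtype.val a)
        (Sum.elim (fun _ => x2) Subtype.val b) := by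
  intro a b hab
  rw [sdiff_single_adj] at hab
  obtain ⟨hadj, hne⟩ := hab
  have key : ∀ (y z : V2), t2.Adj y z →
      s(fmap x1 x2 y, fmap x1 x2 z) ≠ s(fmap x1 x2 c, fmap x1 x2 d) →
      (t2 \ fromEdgeSet {s(c, d)}).Adj y z := by
    intro y z hyz hne2
    refine sdiff_single_adj.mpr ⟨hyz, fun he => ?_⟩
    exact hne2 (by simpa only [Sym2.map_pair_eq] using congrArg (Sym2.map (fmap x1 x2)) he)
  match a, b with
  | Sum.inl a, Sum.inl b => exact Reachable.refl _
  | Sum.inl a, Sum.inr b =>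
    obtain ⟨rfl, hyz⟩ := glue_adj_inl_inr.mp hadj
    refine Adj.reachable (key x2 b.val hyz ?_)
    rw [fmap_x2, fmap_ne b.2]
    exact hne
  | Sum.inr a, Sum.inl b =>
    obtain ⟨rfl, hyz⟩ := glue_adj_inr_inl.mp hadj
    refine (Adj.reachable (key x2 a.val hyz ?_)).symm
    rw [fmap_x2, fmap_ne a.2]
    exact fun h => hne (Sym2.eq_swap.trans h)
  | Sum.inr a, Sum.inr b =>
    have hyz := glue_adj_inr_inr.mp hadj
    refine Adj.reachable (key a.val b.val hyz ?_)
    rw [fmap_ne a.2, fmap_ne b.2]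
    exact hne

lemma glue_isTree {t1 : SimpleGraph V1} {t2 : SimpleGraph V2}
    (ht1 : t1.IsTree) (ht2 : t2.IsTree) : (glue t1 t2 x1 x2).IsTree := by
  refine ⟨glue_connected ht1.1 ht2.1, ?_⟩
  rw [isAcyclic_iff_forall_adj_isBridge]
  intro a b hab
  rw [isBridge_iff]
  intro hre
  cases a with
  | inl u =>
    cases b with
    | inl v =>
      have hadj := glue_adj_inl_inl.mp hab
      have hbr := isBridge_iff.mp (isAcyclic_iff_forall_adj_isBridge.mp ht1.2 hadj)
      exact hbr (reach_proj _ del_proj_inl hre)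
    | inr v =>
      obtain ⟨hu, hadj⟩ := glue_adj_inl_inr.mp hab
      have hbr := isBridge_iff.mp (isAcyclic_iff_forall_adj_isBridge.mp ht2.2 hadj)
      have hE : (s(Sum.inl u, Sum.inr v) :
          Sym2 (V1 ⊕ {v : V2 // v ≠ x2})) = s(fmap x1 x2 x2, fmap x1 x2 v.val) := by
        rw [hu, fmap_x2, fmap_ne v.2]
      rw [hE] at hre
      exact hbr (reach_proj _ del_proj_fmap hre)
  | inr u =>
    cases b with
    | inl v =>
      obtain ⟨hv, hadj⟩ := glue_adj_inr_inl.mp hab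
      have hbr := isBridge_iff.mp (isAcyclic_iff_forall_adj_isBridge.mp ht2.2 hadj)
      have hE : (s(Sum.inr u, Sum.inl v) :
          Sym2 (V1 ⊕ {v : V2 // v ≠ x2})) = s(fmap x1 x2 x2, fmap x1 x2 u.val) := by
        rw [hv, fmap_x2, fmap_ne u.2]
        exact Sym2.eq_swap
      rw [hE] at hre
      exact hbr (reach_proj _ del_proj_fmap hre).symm
    | inr v =>
      have hadj := glue_adj_inr_inr.mp hab
      have hbr := isBridge_iff.mp (isAcyclic_iff_forall_adj_isBridge.mp ht2.2 hadj)
      have hE : (s(Sum.inr u, Sum.inr v) :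
          Sym2 (V1 ⊕ {v : V2 // v ≠ x2})) = s(fmap x1 x2 u.val, fmap x1 x2 v.val) := by
        rw [fmap_ne u.2, fmap_ne v.2]
      rw [hE] at hre
      exact hbr (reach_proj _ del_proj_fmap hre)

lemma comap_inl_glue {t1 : SimpleGraph V1} {t2 : SimpleGraph V2} :
    (glue t1 t2 x1 x2).comap Sum.inl = t1 := by
  ext u v
  rw [comap_adj]
  exact glue_adj_inl_inl

lemma comap_fmap_glue {t1 : SimpleGraph V1} {t2 : SimpleGraph V2} :
    (glue t1 t2 x1 x2).comap (fmap x1 x2) = t2 := by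
  ext u v
  rw [comap_adj]
  by_cases hu : u = x2 <;> by_cases hv : v = x2
  · subst hu; subst hv
    simp only [fmap_x2]
    exact ⟨fun h => absurd rfl h.ne, fun h => absurd rfl h.ne⟩
  · subst hu
    rw [fmap_x2, fmap_ne hv, glue_adj_inl_inr]
    exact ⟨fun h => h.2, fun h => ⟨rfl, h⟩⟩
  · subst hv
    rw [fmap_ne hu, fmap_x2, glue_adj_inr_inl]
    exact ⟨fun h => h.2.symm, fun h => ⟨rfl, h.symm⟩⟩
  · rw [fmap_ne hu, fmap_ne hv, glue_adj_inr_inr]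

end StmtAux

open StmtAux in
theorem stmt_2 {V1 V2 : Type*} [Fintype V1] [Fintype V2]
    (G1 : SimpleGraph V1) (G2 : SimpleGraph V2) (x1 : V1) (x2 : V2)
    (hc1 : G1.Connected) (hc2 : G2.Connected)
    (h1 : 2 ≤ Fintype.card V1) (h2 : 2 ≤ Fintype.card V2)
    (hx1 : ndeg G1 x1 = 1) (hx2 : ndeg G2 x2 = 1) :
    maxLeaves (glue G1 G2 x1 x2) + 2 = maxLeaves G1 + maxLeaves G2 := by
  classical
  have hS1ne : {n : ℕ | ∃ T, IsSpanningTreeOf T G1 ∧ numLeaves T = n}.Nonempty := by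
    obtain ⟨T, hT, htree⟩ := exists_spanning_tree G1 hc1
    exact ⟨numLeaves T, T, ⟨hT, htree⟩, rfl⟩
  have hS2ne : {n : ℕ | ∃ T, IsSpanningTreeOf T G2 ∧ numLeaves T = n}.Nonempty := by
    obtain ⟨T, hT, htree⟩ := exists_spanning_tree G2 hc2
    exact ⟨numLeaves T, T, ⟨hT, htree⟩, rfl⟩
  have hSGne : {n : ℕ | ∃ T, IsSpanningTreeOf T (glue G1 G2 x1 x2) ∧ numLeaves T = n}.Nonempty := by
    obtain ⟨T, hT, htree⟩ := exists_spanning_tree _ (glue_connected hc1 hc2)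
    exact ⟨numLeaves T, T, ⟨hT, htree⟩, rfl⟩
  have hS1bdd : BddAbove {n : ℕ | ∃ T, IsSpanningTreeOf T G1 ∧ numLeaves T = n} :=
    ⟨Fintype.card V1, by rintro n ⟨T, -, rfl⟩; exact numLeaves_le⟩
  have hS2bdd : BddAbove {n : ℕ | ∃ T, IsSpanningTreeOf T G2 ∧ numLeaves T = n} :=
    ⟨Fintype.card V2, by rintro n ⟨T, -, rfl⟩; exact numLeaves_le⟩
  have hSGbdd : BddAbove {n : ℕ | ∃ T, IsSpanningTreeOf T (glue G1 G2 x1 x2) ∧ numLeaves T = n} :=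
    ⟨Fintype.card (V1 ⊕ {v : V2 // v ≠ x2}), by rintro n ⟨T, -, rfl⟩; exact numLeaves_le⟩
  obtain ⟨t1, ht1, ht1n⟩ := Nat.sSup_mem hS1ne hS1bdd
  obtain ⟨t2, ht2, ht2n⟩ := Nat.sSup_mem hS2ne hS2bdd
  obtain ⟨T, hT, hTn⟩ := Nat.sSup_mem hSGne hSGbdd
  obtain ⟨hTd1, hTd2, hTcount⟩ := decompose h1 h2 hx1 hx2 hT
  have hle1 : numLeaves (T.comap Sum.inl) ≤ maxLeaves G1 := le_csSup hS1bdd ⟨_, hTd1, rfl⟩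
  have hle2 : numLeaves (T.comap (fmap x1 x2)) ≤ maxLeaves G2 := le_csSup hS2bdd ⟨_, hTd2, rfl⟩
  have hglue : IsSpanningTreeOf (glue t1 t2 x1 x2) (glue G1 G2 x1 x2) :=
    ⟨glue_mono ht1.1 ht2.1, glue_isTree ht1.2 ht2.2⟩
  obtain ⟨-, -, hcount2⟩ := decompose h1 h2 hx1 hx2 hglue
  rw [comap_inl_glue, comap_fmap_glue] at hcount2
  have hge : numLeaves (glue t1 t2 x1 x2) ≤ maxLeaves (glue G1 G2 x1 x2) :=
    le_csSup hSGbdd ⟨_, hglue, rfl⟩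
  have hM : maxLeaves (glue G1 G2 x1 x2) = numLeaves T := hTn.symm
  have hm1 : maxLeaves G1 = numLeaves t1 := ht1n.symm
  have hm2 : maxLeaves G2 = numLeaves t2 := ht2n.symm
  omega
end

section
/- Let G be a connected graph, let a and b be adjacent vertices of G, and let G' be the connected component of G - a containing b. If b is a cutpoint of G', then u(G) ≥ u(G') + 1, where u(H) denotes the maximum number of leaves in a spanning tree of H. -/
open SimpleGraph

section Helpers

lemma adj_of_sym2_eq {V} {G : SimpleGraph V} {u v x y : V} (h : G.Adj u v)
    (he : s(u,v) = s(x,y)) : G.Adj x y := by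
  rw [Sym2.eq_iff] at he
  rcases he with ⟨rfl, rfl⟩ | ⟨rfl, rfl⟩
  · exact h
  · exact h.symm

/-- hom into map -/
def mapHom {α β} (f : α ↪ β) (H : SimpleGraph α) : H →g H.map f :=
  ⟨f, fun h => ⟨f.injective.ne h.ne, _, _, h, rfl, rfl⟩⟩

lemma map_walk_pullback {α β} (f : α ↪ β) (H : SimpleGraph α) :
    ∀ {x y : β} (w : (H.map f).Walk x y) (u v : α), f u = x → f v = y →
      ∃ w' : H.Walk u v, w.support = w'.support.map f ∧
        w.edges = w'.edges.map (Sym2.map f) := by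
  intro x y w
  induction w with
  | nil =>
    intro u v hu hv
    obtain rfl : u = v := f.injective (hu.trans hv.symm)
    subst hu
    exact ⟨.nil, by simp, by simp⟩
  | @cons x m y h p ih =>
    intro u v hu hv
    obtain ⟨u', m', hadj, hu', hm'⟩ := h.2
    obtain rfl : u' = u := f.injective (hu'.trans hu.symm)
    obtain ⟨w', hs, he⟩ := ih m' v hm' hv
    refine ⟨.cons hadj w', ?_, ?_⟩
    · simp [hs, ← hu]
    · simp [he, ← hu, ← hm', Sym2.map_pair_eq]

lemma isAcyclic_map {α β} (f : α ↪ β) {H : SimpleGraph α} (hH : H.IsAcyclic) :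
    (H.map f).IsAcyclic := by
  intro x c hc
  have hne : c ≠ .nil := hc.ne_nil
  cases c with
  | nil => exact hne rfl
  | cons h p =>
    obtain ⟨u, m, hadj, hu, hm⟩ := h.2
    obtain ⟨w', hs, he⟩ := map_walk_pullback f H (Walk.cons h p) u u hu hu
    apply hH w'
    rw [Walk.isCycle_def] at hc ⊢
    refine ⟨⟨?_⟩, ?_, ?_⟩
    · have := hc.1.edges_nodup
      rw [he] at this
      exact this.of_map _
    · intro hnil
      rw [hnil] at he
      simp at he
    · have := hc.2.2
      rw [hs, ← List.map_tail] at this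
      exact this.of_map _

lemma sdiff_edge_le {V} (G : SimpleGraph V) (u v : V) :
    (G ⊔ edge u v) \ fromEdgeSet {s(u, v)} ≤ G := by
  intro x y h
  rw [sdiff_adj, sup_adj, edge_adj, fromEdgeSet_adj] at h
  obtain ⟨h1 | h2, h3⟩ := h
  · exact h1
  · exfalso
    apply h3
    refine ⟨?_, h2.2⟩
    rcases h2.1 with ⟨rfl, rfl⟩ | ⟨rfl, rfl⟩
    · rfl
    · exact Sym2.eq_swap

lemma isAcyclic_sup_edge {V} {G : SimpleGraph V} {u v : V} (hG : G.IsAcyclic)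
    (hr : ¬ G.Reachable u v) : (G ⊔ edge u v).IsAcyclic := by
  have hne : u ≠ v := fun h => hr (h ▸ Reachable.refl u)
  intro x c hc
  by_cases hmem : s(u, v) ∈ c.edges
  · have h2 := (adj_and_reachable_delete_edges_iff_exists_cycle (G := G ⊔ edge u v)).mpr
      ⟨x, c, hc, hmem⟩
    exact hr (h2.2.mono (sdiff_edge_le G u v))
  · have hsub : ∀ e ∈ c.edges, e ∈ G.edgeSet := by
      intro e he
      have := c.edges_subset_edgeSet he
      rw [edgeSet_sup] at this
      rcases this with h | h
      · exact h
      · rw [edge, edgeSet_fromEdgeSet] at h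
        obtain ⟨h1, -⟩ := h
        exact absurd (h1 ▸ he) hmem
    exact hG _ (hc.transfer hsub)

lemma exists_cross_edge {V} {G H : SimpleGraph V} (hG : G.Connected) (hnc : ¬ H.Connected) :
    ∃ u v, G.Adj u v ∧ ¬ H.Reachable u v := by
  have hne : Nonempty V := hG.nonempty
  rw [connected_iff] at hnc
  push_neg at hnc
  obtain ⟨x, y, hxy⟩ : ∃ x y, ¬ H.Reachable x y := by
    by_contra hcon
    push_neg at hcon
    exact (not_isEmpty_iff.mpr hne) (hnc (fun x y => hcon x y))
  obtain ⟨p⟩ := hG.preconnected x y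
  clear hnc
  induction p with
  | nil => exact absurd (Reachable.refl _) hxy
  | @cons x m y h p ih =>
    by_cases hxm : H.Reachable x m
    · obtain ⟨u, v, h1, h2⟩ := ih (fun hr => hxy (hxm.trans hr))
      exact ⟨u, v, h1, h2⟩
    · exact ⟨x, m, h, hxm⟩

lemma edge_le_of_adj {V} {G : SimpleGraph V} {u v : V} (h : G.Adj u v) : edge u v ≤ G := by
  intro x y hxy
  rw [edge_adj] at hxy
  rcases hxy.1 with ⟨rfl, rfl⟩ | ⟨rfl, rfl⟩
  · exact h
  · exact h.symm

lemma exists_spanning_tree_ext {V} [Finite V] {G : SimpleGraph V} (hG : G.Connected) :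
    ∀ (n : ℕ) (H : SimpleGraph V), (G.edgeSet \ H.edgeSet).ncard ≤ n → H ≤ G → H.IsAcyclic →
    ∃ T, H ≤ T ∧ T ≤ G ∧ T.IsTree := by
  intro n
  induction n with
  | zero =>
    intro H hcard hle hacyc
    have hGH : G ≤ H := by
      rw [← edgeSet_subset_edgeSet]
      intro e he
      by_contra hc
      have hmem : e ∈ G.edgeSet \ H.edgeSet := ⟨he, hc⟩
      have hemp := Set.ncard_eq_zero (Set.toFinite _) |>.mp (Nat.le_zero.mp hcard)
      rw [hemp] at hmem
      exact hmem
    have : H = G := le_antisymm hle hGH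
    subst this
    exact ⟨H, le_refl _, le_refl _, ⟨hG, hacyc⟩⟩
  | succ n ih =>
    intro H hcard hle hacyc
    by_cases hc : H.Connected
    · exact ⟨H, le_refl _, hle, ⟨hc, hacyc⟩⟩
    · obtain ⟨u, v, huv, hnr⟩ := exists_cross_edge hG hc
      have hne : u ≠ v := fun h => hnr (h ▸ Reachable.refl u)
      have hlt : (G.edgeSet \ (H ⊔ edge u v).edgeSet).ncard < (G.edgeSet \ H.edgeSet).ncard := by
        apply Set.ncard_lt_ncard _ (Set.toFinite _)
        constructor
        · intro e he
          exact ⟨he.1, fun hc2 => he.2 (by rw [edgeSet_sup]; exact Or.inl hc2)⟩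
        · intro hsub
          have h1 : s(u, v) ∈ G.edgeSet \ H.edgeSet := by
            refine ⟨(mem_edgeSet G).mpr huv, fun hc2 => hnr ((mem_edgeSet H).mp hc2).reachable⟩
          have h2 := hsub h1
          apply h2.2
          rw [edgeSet_sup]
          right
          rw [edge_edgeSet_of_ne hne]
          rfl
      obtain ⟨T, h1, h2, h3⟩ := ih (H ⊔ edge u v) (by omega) (sup_le hle (edge_le_of_adj huv))
        (isAcyclic_sup_edge hacyc hnr)
      exact ⟨T, le_sup_left.trans h1, h2, h3⟩

lemma walk_induce {V} {G : SimpleGraph V} {s : Set V} :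
    ∀ {u v : V} (p : G.Walk u v), (∀ x ∈ p.support, x ∈ s) →
      ∀ (hu : u ∈ s) (hv : v ∈ s), Nonempty ((G.induce s).Walk ⟨u, hu⟩ ⟨v, hv⟩) := by
  intro u v p
  induction p with
  | nil => intro _ hu hv; exact ⟨.nil⟩
  | @cons u m v h p ih =>
    intro hs hu hv
    have hm : m ∈ s := hs m (by simp)
    obtain ⟨q⟩ := ih (fun x hx => hs x (by simp [hx])) hm hv
    exact ⟨.cons (by simpa using h) q⟩

lemma ndeg_eq_ncard {V} (G : SimpleGraph V) (v : V) : ndeg G v = (G.neighborSet v).ncard := by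
  rw [ndeg, Nat.card_coe_set_eq]

lemma tree_path_length {V} {T : SimpleGraph V} (ht : T.IsTree) {b w : V}
    (p : T.Walk b w) (hp : p.IsPath) : p.length = T.dist b w := by
  have : DecidableEq V := Classical.decEq V
  obtain ⟨q, hq⟩ := (ht.isConnected b w).exists_walk_length_eq_dist
  have h1 : q.bypass.IsPath := Walk.bypass_isPath q
  have h2 := ht.IsAcyclic.path_unique ⟨p, hp⟩ ⟨q.bypass, h1⟩
  have h3 : p.length = q.bypass.length := by rw [show p = q.bypass from congrArg Subtype.val h2]
  have h4 : q.bypass.length ≤ q.length := Walk.length_bypass_le q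
  have h5 : T.dist b w ≤ p.length := dist_le p
  omega

lemma neighbor_mem_path_eq_penultimate {V} {T : SimpleGraph V} (ht : T.IsTree) {b w c x : V}
    {P : T.Walk b w} (hP : P.IsPath) {Q : T.Walk x b} {hwx : T.Adj w x}
    (hrev : P.reverse = .cons hwx Q)
    (hc : T.Adj w c) (hmem : c ∈ P.support) : c = x := by
  have : DecidableEq V := Classical.decEq V
  set t := P.takeUntil c hmem with ht_def
  have htp : t.IsPath := hP.takeUntil hmem
  have hcw : c ≠ w := fun h => (h ▸ hc).ne' rfl
  have hwnot : w ∉ t.support := by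
    intro hw
    have hnodup := hP.support_nodup
    conv at hnodup => rw [← P.take_spec hmem, Walk.support_append]
    have hdis := List.disjoint_of_nodup_append hnodup
    apply hdis hw
    have : w ∈ (P.dropUntil c hmem).support := Walk.end_mem_support _
    rw [Walk.support_eq_cons (P.dropUntil c hmem), List.mem_cons] at this
    rcases this with h | h
    · exact absurd h.symm hcw
    · exact h
  have hP'path : (t.concat hc.symm).IsPath := by
    rw [← Walk.isPath_reverse_iff, Walk.reverse_concat, Walk.cons_isPath_iff]
    refine ⟨htp.reverse, ?_⟩
    rw [Walk.support_reverse]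
    simpa using hwnot
  have huniq := ht.IsAcyclic.path_unique ⟨P, hP⟩ ⟨t.concat hc.symm, hP'path⟩
  have hPP' : P = t.concat hc.symm := congrArg Subtype.val huniq
  have hsup : P.reverse.support = (t.concat hc.symm).reverse.support := by rw [← hPP']
  rw [hrev, Walk.reverse_concat] at hsup
  simp only [Walk.support_cons] at hsup
  have h1 : Q.support = t.reverse.support := List.cons.inj hsup |>.2
  rw [Walk.support_eq_cons Q, Walk.support_eq_cons t.reverse] at h1
  exact (List.cons.inj h1).1.symm

lemma exists_dist_succ_neighbor {V} {T : SimpleGraph V} (ht : T.IsTree) {b w y z : V}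
    (hy : T.Adj w y) (hz : T.Adj w z) (hyz : y ≠ z) :
    ∃ c, T.Adj w c ∧ T.dist b c = T.dist b w + 1 := by
  by_cases hbw : b = w
  · subst hbw
    exact ⟨y, hy, by rw [dist_eq_one_iff_adj.mpr hy, dist_self]⟩
  · obtain ⟨P, hP⟩ := ht.existsUnique_path b w
    obtain ⟨hPpath, -⟩ := hP
    have hwb : w ≠ b := fun h => hbw h.symm
    obtain ⟨x, hwx, Q, hrev⟩ := P.reverse.exists_eq_cons_of_ne hwb
    obtain ⟨c, hc, hcx⟩ : ∃ c, T.Adj w c ∧ c ≠ x := by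
      by_cases hyx : y = x
      · exact ⟨z, hz, fun h => hyz (hyx.trans h.symm ▸ rfl)⟩
      · exact ⟨y, hy, hyx⟩
    have hcnot : c ∉ P.support := fun hmem =>
      hcx (neighbor_mem_path_eq_penultimate ht hPpath hrev hc hmem)
    have hpath' : (P.concat hc).IsPath := by
      rw [← Walk.isPath_reverse_iff, Walk.reverse_concat, Walk.cons_isPath_iff]
      refine ⟨hPpath.reverse, ?_⟩
      rw [Walk.support_reverse]
      simpa using hcnot
    refine ⟨c, hc, ?_⟩
    rw [← tree_path_length ht _ hpath', Walk.length_concat, tree_path_length ht P hPpath]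

lemma numLeaves_le {W : Type*} [Finite W] (T : SimpleGraph W) : numLeaves T ≤ Nat.card W := by
  rw [numLeaves, Nat.card_coe_set_eq, ← Set.ncard_univ]
  exact Set.ncard_le_ncard (Set.subset_univ _) Set.finite_univ

lemma bddAbove_leaves {W : Type*} [Finite W] (G : SimpleGraph W) :
    BddAbove {n : ℕ | ∃ T : SimpleGraph W, IsSpanningTreeOf T G ∧ numLeaves T = n} := by
  refine ⟨Nat.card W, ?_⟩
  rintro n ⟨T, -, rfl⟩
  exact numLeaves_le T

end Helpers

theorem stmt_3 {V : Type*} [Fintype V] (G : SimpleGraph V) (hconn : G.Connected)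
    (a b : V) (hab : G.Adj a b)
    -- `S` is the vertex set of the connected component of `G - a` containing `b`
    (S : Set V) (hS : S = {v : V | ∃ p : G.Walk b v, a ∉ p.support})
    -- `b` is a cutpoint of `G' = G.induce S`
    (hb : b ∈ S)
    (hcut : ¬ ((G.induce S).induce {x : S | (x : V) ≠ b}).Connected) :
    maxLeaves (G.induce S) + 1 ≤ maxLeaves G := by
  classical
  have hanb : a ≠ b := hab.ne
  have haS : a ∉ S := by
    rw [hS]
    rintro ⟨p, hp⟩
    exact hp p.end_mem_support
  have hSclosed : ∀ {x y}, x ∈ S → G.Adj x y → y ≠ a → y ∈ S := by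
    intro x y hx hxy hya
    rw [hS] at hx ⊢
    obtain ⟨p, hp⟩ := hx
    refine ⟨p.concat hxy, ?_⟩
    rw [Walk.support_concat]
    simp only [List.mem_append, List.mem_singleton]
    rintro (h | h)
    · exact hp h
    · exact hya h.symm
  have hSadj : ∀ {x y}, x ∈ S → G.Adj x y → y ∉ S → y = a := fun {x y} hx hxy hy =>
    by_contra fun hya => hy (hSclosed hx hxy hya)
  have hsupS : ∀ {v : V} (p : G.Walk b v), a ∉ p.support → ∀ x ∈ p.support, x ∈ S := by
    intro v p hp x hx
    rw [hS]
    exact ⟨p.takeUntil x hx, fun ha => hp (p.support_takeUntil_subset hx ha)⟩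
  have hSconn : (G.induce S).Connected := by
    rw [connected_iff]
    refine ⟨?_, ⟨⟨b, hb⟩⟩⟩
    rintro ⟨u, hu⟩ ⟨v, hv⟩
    obtain ⟨p, hp⟩ := (by rw [hS] at hu; exact hu : ∃ p : G.Walk b u, a ∉ p.support)
    obtain ⟨q, hq⟩ := (by rw [hS] at hv; exact hv : ∃ p : G.Walk b v, a ∉ p.support)
    have hsup : ∀ x ∈ (p.reverse.append q).support, x ∈ S := by
      intro x hx
      rw [Walk.mem_support_append_iff] at hx
      rcases hx with hx | hx
      · rw [Walk.support_reverse, List.mem_reverse] at hx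
        exact hsupS p hp x hx
      · exact hsupS q hq x hx
    exact walk_induce (p.reverse.append q) hsup hu hv
  -- get a maximizing spanning tree of G' = G.induce S
  obtain ⟨T0, -, hT0le, hT0tree⟩ := exists_spanning_tree_ext hSconn
    (((G.induce S).edgeSet \ (⊥ : SimpleGraph ↥S).edgeSet).ncard) ⊥ le_rfl bot_le isAcyclic_bot
  have hne' : {n : ℕ | ∃ T : SimpleGraph ↥S,
      IsSpanningTreeOf T (G.induce S) ∧ numLeaves T = n}.Nonempty :=
    ⟨numLeaves T0, T0, ⟨hT0le, hT0tree⟩, rfl⟩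
  obtain ⟨T', hT'span, hT'num⟩ := Nat.sSup_mem hne' (bddAbove_leaves _)
  obtain ⟨hT'le, hT'tree⟩ := hT'span
  -- build the extended spanning tree of G
  set ι : ↥S ↪ V := ⟨Subtype.val, Subtype.val_injective⟩ with hι
  set F0 := T'.map ι with hF0def
  have hF0adj : ∀ u v : ↥S, F0.Adj ↑u ↑v ↔ T'.Adj u v := fun u v => map_adj_apply
  have hF0S : ∀ {x y}, F0.Adj x y → x ∈ S ∧ y ∈ S := by
    rintro x y ⟨-, u, v, h, rfl, rfl⟩
    exact ⟨u.2, v.2⟩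
  have hF0G : F0 ≤ G := by
    rintro x y ⟨-, u, v, h, rfl, rfl⟩
    have := hT'le h
    exact this
  have hF0nr : ¬ F0.Reachable a b := by
    rintro ⟨w⟩
    obtain ⟨x, hax, q, -⟩ := Walk.exists_eq_cons_of_ne hanb w
    exact haS (hF0S hax).1
  have hFacyc : (F0 ⊔ edge a b).IsAcyclic :=
    isAcyclic_sup_edge (isAcyclic_map ι hT'tree.IsAcyclic) hF0nr
  have hFG : F0 ⊔ edge a b ≤ G := sup_le hF0G (edge_le_of_adj hab)
  obtain ⟨T, hFT, hTG, hTtree⟩ := exists_spanning_tree_ext hconn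
    ((G.edgeSet \ (F0 ⊔ edge a b).edgeSet).ncard) (F0 ⊔ edge a b) le_rfl hFG hFacyc
  have hF0T : F0 ≤ T := le_sup_left.trans hFT
  have hTab : T.Adj a b := by
    apply hFT
    rw [sup_adj]
    right
    rw [edge_adj]
    exact ⟨Or.inl ⟨rfl, rfl⟩, hanb⟩
  have hreach : ∀ u v : ↥S, F0.Reachable (↑u) (↑v) := fun u v =>
    Reachable.map (mapHom ι T') (hT'tree.isConnected u v)
  have hbr : ∀ {x y}, T.Adj x y → ¬ (T \ fromEdgeSet {s(x,y)}).Reachable x y := by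
    intro x y h
    have h2 := (isAcyclic_iff_forall_adj_isBridge.mp hTtree.IsAcyclic) h
    rw [isBridge_iff] at h2
    exact h2
  have hC1 : ∀ u v : ↥S, T.Adj ↑u ↑v → T'.Adj u v := by
    intro u v h
    by_contra hno
    apply hbr h
    refine Reachable.mono ?_ (hreach u v)
    intro p q hpq
    rw [sdiff_adj, fromEdgeSet_adj]
    refine ⟨hF0T hpq, ?_⟩
    rintro ⟨hee, -⟩
    rw [Set.mem_singleton_iff] at hee
    exact hno ((hF0adj u v).mp (adj_of_sym2_eq hpq hee))
  have hC2 : ∀ x (hx : x ∈ S), x ≠ b → ¬ T.Adj x a := by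
    intro x hx hxb h
    apply hbr h
    have h1 : F0 ≤ T \ fromEdgeSet {s(x,a)} := by
      intro p q hpq
      rw [sdiff_adj, fromEdgeSet_adj]
      refine ⟨hF0T hpq, ?_⟩
      rintro ⟨hee, -⟩
      rw [Set.mem_singleton_iff] at hee
      exact haS ((hF0S (adj_of_sym2_eq hpq hee)).2)
    have h2 : (T \ fromEdgeSet {s(x,a)}).Adj b a := by
      rw [sdiff_adj, fromEdgeSet_adj]
      refine ⟨hTab.symm, ?_⟩
      rintro ⟨hee, -⟩
      rw [Set.mem_singleton_iff, Sym2.eq_iff] at hee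
      rcases hee with ⟨h3, -⟩ | ⟨h3, -⟩
      · exact hxb h3.symm
      · exact hanb h3.symm
    exact ((hreach ⟨x, hx⟩ ⟨b, hb⟩).mono h1).trans h2.reachable
  have hC3 : ∀ x (hx : x ∈ S), x ≠ b → ∀ y, T.Adj x y → y ∈ S := by
    intro x hx hxb y h
    by_contra hy
    have hya := hSadj hx (hTG h) hy
    exact hC2 x hx hxb (hya ▸ h)
  have hC4 : ∀ v : ↥S, (v : V) ≠ b → T.neighborSet ↑v = Subtype.val '' (T'.neighborSet v) := by
    intro v hv
    ext y
    simp only [mem_neighborSet, Set.mem_image]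
    constructor
    · intro h
      have hyS : y ∈ S := hC3 ↑v v.2 hv y h
      exact ⟨⟨y, hyS⟩, hC1 v ⟨y, hyS⟩ h, rfl⟩
    · rintro ⟨u, hu, rfl⟩
      exact hF0T ((hF0adj v u).mpr hu)
  have hC5 : ∀ v : ↥S, (v : V) ≠ b → ndeg T' v = 1 → ndeg T ↑v = 1 := by
    intro v hv h
    rw [ndeg_eq_ncard, hC4 v hv, Set.ncard_image_of_injective _ Subtype.val_injective,
      ← ndeg_eq_ncard, h]
  -- b is not a leaf of T' (cutpoint)
  have hbdeg : ndeg T' ⟨b, hb⟩ ≠ 1 := by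
    intro h1
    apply hcut
    rw [ndeg_eq_ncard, Set.ncard_eq_one] at h1
    obtain ⟨c, hc⟩ := h1
    have hcadj : T'.Adj ⟨b, hb⟩ c := by
      rw [← mem_neighborSet, hc]
      exact rfl
    have hcb : (c : V) ≠ b := fun h => hcadj.ne' (Subtype.ext h.symm).symm
    rw [connected_iff]
    refine ⟨?_, ⟨⟨c, hcb⟩⟩⟩
    rintro ⟨u, hu⟩ ⟨v, hv⟩
    obtain ⟨P, hPpath, -⟩ := hT'tree.existsUnique_path u v
    have hbnot : (⟨b, hb⟩ : ↥S) ∉ P.support := by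
      intro hm
      have hub : u ≠ ⟨b, hb⟩ := fun h => hu (congrArg Subtype.val h)
      have hvb : v ≠ ⟨b, hb⟩ := fun h => hv (congrArg Subtype.val h)
      obtain ⟨y, hby, Q, hre⟩ :=
        Walk.exists_eq_cons_of_ne (fun h => hub h.symm) (P.takeUntil _ hm).reverse
      obtain ⟨z, hbz, R, hde⟩ :=
        Walk.exists_eq_cons_of_ne (fun h => hvb h.symm) (P.dropUntil _ hm)
      have hy_mem : y ∈ (P.takeUntil _ hm).support := by
        have : y ∈ (P.takeUntil _ hm).reverse.support := by
          rw [hre, Walk.support_cons]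
          exact List.mem_cons_of_mem _ (Walk.start_mem_support Q)
        rwa [Walk.support_reverse, List.mem_reverse] at this
      have hz_mem : z ∈ (P.dropUntil _ hm).support.tail := by
        rw [hde, Walk.support_cons]
        exact Walk.start_mem_support R
      have hyc : y = c := by
        have : y ∈ T'.neighborSet ⟨b, hb⟩ := hby
        rwa [hc, Set.mem_singleton_iff] at this
      have hzc : z = c := by
        have : z ∈ T'.neighborSet ⟨b, hb⟩ := hbz
        rwa [hc, Set.mem_singleton_iff] at this
      have hnodup := hPpath.support_nodup
      conv at hnodup => rw [← P.take_spec hm, Walk.support_append]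
      exact (List.disjoint_of_nodup_append hnodup) hy_mem (by rw [hyc, ← hzc]; exact hz_mem)
    have hedges : ∀ e ∈ P.edges, e ∈ (G.induce S).edgeSet := fun e he =>
      (edgeSet_subset_edgeSet.mpr hT'le) (P.edges_subset_edgeSet he)
    have hqsup : ∀ x ∈ (P.transfer (G.induce S) hedges).support,
        x ∈ {x : ↥S | (x : V) ≠ b} := by
      intro x hx
      rw [Walk.support_transfer] at hx
      intro hxb
      apply hbnot
      have hxeq : x = ⟨b, hb⟩ := Subtype.ext hxb
      exact hxeq ▸ hx
    exact walk_induce (P.transfer (G.induce S) hedges) hqsup hu hv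
  -- a new leaf outside S
  have hC7 : ∃ w, w ∉ S ∧ ndeg T w = 1 := by
    by_cases hall : ∀ x, x ∉ S → x = a
    · refine ⟨a, haS, ?_⟩
      have hnb : T.neighborSet a = {b} := by
        ext y
        simp only [mem_neighborSet, Set.mem_singleton_iff]
        constructor
        · intro h
          by_cases hyS : y ∈ S
          · by_contra hyb
            exact hC2 y hyS hyb h.symm
          · exact absurd (hall y hyS) h.ne'
        · rintro rfl
          exact hTab
      rw [ndeg_eq_ncard, hnb, Set.ncard_singleton]
    · push_neg at hall
      obtain ⟨r, hrS, hra⟩ := hall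
      have hBfin : (Sᶜ : Set V).Finite := Set.toFinite _
      obtain ⟨w, hwmem, hwmax⟩ := hBfin.toFinset.exists_max_image (T.dist b)
        ⟨r, hBfin.mem_toFinset.mpr hrS⟩
      rw [Set.Finite.mem_toFinset] at hwmem
      have hwmax' : ∀ x, x ∉ S → T.dist b x ≤ T.dist b w := fun x hx =>
        hwmax x (hBfin.mem_toFinset.mpr hx)
      refine ⟨w, hwmem, ?_⟩
      have hwb : w ≠ b := fun h => hwmem (h ▸ hb)
      obtain ⟨wk⟩ := hTtree.isConnected w b
      obtain ⟨y0, hy0, -, -⟩ := Walk.exists_eq_cons_of_ne hwb wk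
      rw [ndeg_eq_ncard]
      by_contra hne1
      have h2 : 1 < (T.neighborSet w).ncard := by
        have h3 : 0 < (T.neighborSet w).ncard :=
          (Set.ncard_pos (Set.toFinite _)).mpr ⟨y0, hy0⟩
        omega
      obtain ⟨y, z, hy, hz, hyz⟩ := (Set.one_lt_ncard_iff (Set.toFinite _)).mp h2
      obtain ⟨c, hcadj, hcdist⟩ := exists_dist_succ_neighbor hTtree (b := b) hy hz hyz
      have hcB : c ∉ S := by
        intro hcS
        by_cases hwa : w = a
        · subst hwa
          by_cases hcb : c = b
          · subst hcb
            rw [SimpleGraph.dist_self] at hcdist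
            omega
          · exact hC2 c hcS hcb hcadj.symm
        · exact hwa (hSadj hcS (hTG hcadj.symm) hwmem)
      have := hwmax' c hcB
      omega
  -- counting
  have hbne : ∀ v : ↥S, ndeg T' v = 1 → (v : V) ≠ b := by
    intro v h hvb
    have hveq : v = ⟨b, hb⟩ := Subtype.ext hvb
    rw [hveq] at h
    exact hbdeg h
  obtain ⟨w, hwS, hwdeg⟩ := hC7
  have hsub1 : Subtype.val '' {v : ↥S | ndeg T' v = 1} ⊆ {v : V | ndeg T v = 1} := by
    rintro x ⟨v, hv, rfl⟩
    exact hC5 v (hbne v hv) hv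
  have hwnot : w ∉ Subtype.val '' {v : ↥S | ndeg T' v = 1} := by
    rintro ⟨v, -, rfl⟩
    exact hwS v.2
  have hcount : numLeaves T' + 1 ≤ numLeaves T := by
    rw [numLeaves, numLeaves, Nat.card_coe_set_eq, Nat.card_coe_set_eq]
    rw [← Set.ncard_image_of_injective {v : ↥S | ndeg T' v = 1} Subtype.val_injective]
    have h2 : insert w (Subtype.val '' {v : ↥S | ndeg T' v = 1}) ⊆ {v : V | ndeg T v = 1} :=
      Set.insert_subset hwdeg hsub1
    have h3 := Set.ncard_le_ncard h2 (Set.toFinite _)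
    rw [Set.ncard_insert_of_notMem hwnot (Set.toFinite _)] at h3
    omega
  have hTle2 : numLeaves T ≤ maxLeaves G :=
    le_csSup (bddAbove_leaves G) ⟨T, ⟨hTG, hTtree⟩, rfl⟩
  have h9 : maxLeaves (G.induce S) = numLeaves T' := hT'num.symm
  rw [h9]
  omega
end

section
/- Let G be a connected graph with minimum degree at least 3. Then G has a spanning tree with at least v(G)/4 + 2 leaves, where v(G) is the number of vertices of G. -/
open SimpleGraph

section Helpers
open SimpleGraph Finset
variable {V : Type*} [Fintype V] [DecidableEq V]


lemma no_cycle_at_pendant {G : SimpleGraph V} {a b : V} (hab : a ≠ b)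
    (huniq : ∀ z, G.Adj b z → z = a) (c : G.Walk b b) (hc : c.IsCycle) : False := by
  cases c with
  | nil => exact hc.not_of_nil
  | cons h q =>
    rename_i z
    have hz : z = a := huniq z h
    have hqe : s(b, z) ∈ q.edges := by
      cases hqr : q.reverse with
      | nil =>
        exfalso
        have hnil : q.reverse.Nil := by rw [hqr]; exact Walk.nil_nil
        have h2 := hnil.eq
        first
        | exact hab (hz ▸ h2.symm)
        | exact hab (hz ▸ h2)
        | exact hab (h2 ▸ hz)
        | exact hab (hz.symm.trans h2.symm)
        | exact hab (hz.symm.trans h2)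
      | cons h' q' =>
        rename_i z'
        have hz' : z' = a := huniq z' h'
        have hm : s(b, z') ∈ q.reverse.edges := by rw [hqr]; exact List.mem_cons_self
        rw [hz', ← hz] at hm
        rwa [Walk.edges_reverse, List.mem_reverse] at hm
    have hnodup := hc.edges_nodup
    rw [Walk.edges_cons] at hnodup
    exact (List.nodup_cons.1 hnodup).1 hqe

lemma acyclic_insert_pendant (E : Set (Sym2 V)) (hac : (fromEdgeSet E).IsAcyclic)
    (u w : V) (hne : u ≠ w) (hw : ∀ e ∈ E, w ∉ e) :
    (fromEdgeSet (insert s(u,w) E)).IsAcyclic := by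
  intro v c hc
  by_cases hmem : s(u,w) ∈ c.edges
  · have hws : w ∈ c.support := Walk.snd_mem_support_of_mem_edges c hmem
    have hadj_char : ∀ z : V, (fromEdgeSet (insert s(u,w) E)).Adj w z → z = u := by
      intro z hz
      rw [fromEdgeSet_adj] at hz
      rcases hz with ⟨hz1, hz2⟩
      rcases Set.mem_insert_iff.1 hz1 with h | h
      · rw [Sym2.eq_iff] at h
        rcases h with ⟨h1, _⟩ | ⟨_, h2⟩
        · exact absurd h1.symm hne
        · exact h2
      · exact absurd (Sym2.mem_mk_left w z) (hw _ h)
    exact no_cycle_at_pendant (a := u) (b := w) hne hadj_char (c.rotate w hws) (hc.rotate hws)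
  · have hsub : ∀ e ∈ c.edges, e ∈ (fromEdgeSet E).edgeSet := by
      intro e he
      have h1 : e ∈ (fromEdgeSet (insert s(u,w) E)).edgeSet := c.edges_subset_edgeSet he
      rw [edgeSet_fromEdgeSet] at h1 ⊢
      rcases h1 with ⟨h1, h2⟩
      rcases Set.mem_insert_iff.1 h1 with h | h
      · exact absurd (h ▸ he) hmem
      · exact ⟨h, h2⟩
    exact hac _ (hc.transfer hsub)

section Grown
variable (G : SimpleGraph V)

/-- Tree-growing states: `D` = internal (promoted) vertices, `S` = all vertices so far,
`E` = tree edge set. Attachment only at promoted vertices. -/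
inductive Grown : Finset V → Finset V → Finset (Sym2 V) → Prop
  | base (v : V) : Grown {v} {v} ∅
  | attach {D S E} (u w : V) : Grown D S E → u ∈ D → w ∉ S → G.Adj u w →
      Grown D (insert w S) (insert s(u,w) E)
  | promote {D S E} (u : V) : Grown D S E → u ∈ S → Grown (insert u D) S E

variable {G}

lemma Grown.D_subset {D S E} (h : Grown G D S E) : D ⊆ S := by
  induction h with
  | base v => exact subset_rfl
  | attach u w _ hu hw hadj ih => exact ih.trans (subset_insert _ _)
  | promote u _ hu ih => exact insert_subset hu ih

lemma Grown.nonempty {D S E} (h : Grown G D S E) : S.Nonempty := by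
  induction h with
  | base v => exact ⟨v, mem_singleton_self v⟩
  | attach u w _ hu hw hadj ih => exact ih.mono (subset_insert _ _)
  | promote u _ hu ih => exact ih

lemma Grown.edge_mem {D S E} (h : Grown G D S E) : ∀ e ∈ E, e ∈ G.edgeSet := by
  induction h with
  | base v => simp
  | attach u w _ hu hw hadj ih =>
      intro e he
      rcases mem_insert.1 he with rfl | he
      · exact hadj
      · exact ih e he
  | promote u _ hu ih => exact ih

lemma Grown.edge_vert {D S E} (h : Grown G D S E) : ∀ e ∈ E, ∀ x ∈ e, x ∈ S := by
  induction h with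
  | base v => simp
  | attach u w hG hu hw hadj ih =>
      intro e he x hx
      rcases mem_insert.1 he with rfl | he
      · rcases Sym2.mem_iff.1 hx with rfl | rfl
        · exact mem_insert_of_mem (hG.D_subset hu)
        · exact mem_insert_self _ _
      · exact mem_insert_of_mem (ih e he x hx)
  | promote u _ hu ih => exact ih

lemma Grown.reach {D S E} (h : Grown G D S E) :
    ∀ x ∈ S, ∀ y ∈ S, (fromEdgeSet (E : Set (Sym2 V))).Reachable x y := by
  induction h with
  | base v =>
      intro x hx y hy
      rw [mem_singleton] at hx hy
      subst hx; subst hy; rfl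
  | attach u w hG hu hw hadj ih =>
      rename_i D' S' E'
      intro x hx y hy
      have hle : fromEdgeSet (E' : Set (Sym2 V)) ≤ fromEdgeSet ((insert s(u,w) E' : Finset (Sym2 V)) : Set (Sym2 V)) := by
        apply fromEdgeSet_mono
        rw [Finset.coe_insert]
        exact Set.subset_insert _ _
      have hadj' : (fromEdgeSet ((insert s(u,w) E' : Finset (Sym2 V)) : Set (Sym2 V))).Adj u w := by
        rw [fromEdgeSet_adj]
        exact ⟨by rw [Finset.coe_insert]; exact Set.mem_insert _ _, hadj.ne⟩
      have hreach : ∀ z ∈ insert w S', (fromEdgeSet ((insert s(u,w) E' : Finset (Sym2 V)) : Set (Sym2 V))).Reachable z u := by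
        intro z hz
        rcases mem_insert.1 hz with rfl | hz
        · exact hadj'.symm.reachable
        · exact (ih z hz u (hG.D_subset hu)).mono hle
      exact (hreach x hx).trans (hreach y hy).symm
  | promote u _ hu ih => exact ih

lemma Grown.acyclic {D S E} (h : Grown G D S E)
    (hpend : ∀ (E₀ : Set (Sym2 V)) (hac : (fromEdgeSet E₀).IsAcyclic) (u w : V), u ≠ w →
      (∀ e ∈ E₀, w ∉ e) → (fromEdgeSet (insert s(u,w) E₀)).IsAcyclic) :
    (fromEdgeSet (E : Set (Sym2 V))).IsAcyclic := by
  induction h with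
  | base v => simpa using (isAcyclic_bot (V := V))
  | attach u w hG hu hw hadj ih =>
      rename_i D' S' E'
      rw [Finset.coe_insert]
      apply hpend _ ih u w hadj.ne
      intro e he hwe
      exact hw (hG.edge_vert e he w hwe)
  | promote u _ hu ih => exact ih

lemma Grown.pendant_nbr {D S E} (h : Grown G D S E) :
    ∀ v ∈ S, v ∉ D → ∃ y, (fromEdgeSet (E : Set (Sym2 V))).neighborSet v = {y} := by
  induction h with
  | base v₀ =>
      intro v hv hv'
      rw [mem_singleton] at hv
      exact absurd (hv ▸ mem_singleton_self v₀) hv'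
  | attach u w hG hu hw hadj ih =>
      rename_i D' S' E'
      intro v hv hv'
      rcases mem_insert.1 hv with rfl | hv
      · -- v = w : its only neighbor is u
        refine ⟨u, ?_⟩
        ext z
        simp only [mem_neighborSet, Set.mem_singleton_iff, fromEdgeSet_adj, Finset.coe_insert,
          Set.mem_insert_iff]
        constructor
        · rintro ⟨hz1 | hz1, hz2⟩
          · rw [Sym2.eq_iff] at hz1
            rcases hz1 with ⟨h1, _⟩ | ⟨_, h2⟩
            · exact absurd h1.symm hadj.ne
            · exact h2
          · exact absurd (hG.edge_vert _ hz1 v (Sym2.mem_mk_left _ _)) hw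
        · rintro rfl
          exact ⟨Or.inl (Sym2.eq_swap), (fun hh => hw (hh ▸ (hG.D_subset hu)))⟩
      · -- old leaf : neighbourhood unchanged
        obtain ⟨y, hy⟩ := ih v hv hv'
        refine ⟨y, ?_⟩
        rw [← hy]
        ext z
        simp only [mem_neighborSet, fromEdgeSet_adj, Finset.coe_insert, Set.mem_insert_iff]
        constructor
        · rintro ⟨hz1 | hz1, hz2⟩
          · exfalso
            rw [Sym2.eq_iff] at hz1
            rcases hz1 with ⟨h1, _⟩ | ⟨h1, _⟩
            · exact hv' (h1 ▸ hu)
            · exact hw (h1 ▸ hv)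
          · exact ⟨hz1, hz2⟩
        · rintro ⟨hz1, hz2⟩
          exact ⟨Or.inr hz1, hz2⟩
  | promote u hG hu ih =>
      intro v hv hv'
      exact ih v hv (fun hh => hv' (mem_insert_of_mem hh))

end Grown

variable {G : SimpleGraph V}

lemma walk_cross {S : Finset V} : ∀ {x y : V}, G.Walk x y → x ∈ S → y ∉ S →
    ∃ u ∈ S, ∃ w, G.Adj u w ∧ w ∉ S := by
  intro x y p
  induction p with
  | nil => intro hx hy; exact absurd hx hy
  | cons h q ih =>
      rename_i a b c
      intro hx hy
      by_cases hb : b ∈ S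
      · exact ih hb hy
      · exact ⟨a, hx, b, h, hb⟩

lemma exists_cross (hG : G.Connected) {S : Finset V} (hne : S.Nonempty) (hS : S ≠ univ) :
    ∃ u ∈ S, ∃ w, G.Adj u w ∧ w ∉ S := by
  obtain ⟨x, hx⟩ := hne
  have : ∃ y, y ∉ S := by
    by_contra hcon
    push_neg at hcon
    exact hS (eq_univ_iff_forall.2 hcon)
  obtain ⟨y, hy⟩ := this
  exact walk_cross ((hG.preconnected x y).some) hx hy

/-- Attach a whole fan of fresh neighbours of a promoted vertex. -/
lemma grown_fan {D S E} (h : Grown G D S E) (u : V) (hu : u ∈ D) :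
    ∀ W : Finset V, (∀ w ∈ W, G.Adj u w) → (∀ w ∈ W, w ∉ S) →
    ∃ E', Grown G D (S ∪ W) E' := by
  intro W
  induction W using Finset.induction_on with
  | empty => intro _ _; exact ⟨E, by simpa using h⟩
  | @insert w W' hwW' ih =>
      intro hadj hfresh
      obtain ⟨E', hE'⟩ := ih (fun x hx => hadj x (mem_insert_of_mem hx))
        (fun x hx => hfresh x (mem_insert_of_mem hx))
      refine ⟨insert s(u,w) E', ?_⟩
      have hw : w ∉ S ∪ W' := by
        simp only [mem_union, not_or]
        exact ⟨hfresh w (mem_insert_self _ _), hwW'⟩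
      have := Grown.attach u w hE' hu hw (hadj w (mem_insert_self _ _))
      have hset : insert w (S ∪ W') = S ∪ insert w W' := by
        ext z
        simp only [mem_insert, mem_union]
        tauto
      rwa [hset] at this

section March
variable (G : SimpleGraph V) [DecidableRel G.Adj]

/-- The set of "alive leaves": non-promoted vertices with a neighbour outside `S`. -/
def aliveSet (D S : Finset V) : Finset V :=
  (S \ D).filter (fun v => ¬ G.neighborFinset v ⊆ S)

variable {G}

lemma mem_aliveSet {D S : Finset V} {v : V} :
    v ∈ aliveSet G D S ↔ v ∈ S ∧ v ∉ D ∧ ∃ y, G.Adj v y ∧ y ∉ S := by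
  simp only [aliveSet, mem_filter, mem_sdiff, Finset.not_subset, mem_neighborFinset]
  tauto

lemma card_compl_lt {S S' : Finset V} (hsub : S ⊆ S') {w : V} (hw : w ∈ S') (hwS : w ∉ S) :
    (univ \ S').card < (univ \ S).card := by
  apply card_lt_card
  constructor
  · exact sdiff_subset_sdiff subset_rfl hsub
  · intro hcon
    have : w ∈ univ \ S := mem_sdiff.2 ⟨mem_univ w, hwS⟩
    have := hcon this
    rw [mem_sdiff] at this
    exact this.2 hw

lemma march (hG : G.Connected) (hdeg : ∀ v, 3 ≤ G.degree v) :
    ∀ (k : ℕ) (D S : Finset V) (E : Finset (Sym2 V)), (univ \ S).card = k →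
    Grown G D S E → S ≠ univ →
    ∃ (D' : Finset V) (E' : Finset (Sym2 V)), Grown G D' univ E' ∧
      3 * (Fintype.card V : ℤ) - 4 * (D'.card : ℤ) ≥
        3 * (S.card : ℤ) - 4 * (D.card : ℤ) - ((aliveSet G D S).card : ℤ) + 2 := by
  intro k
  induction k using Nat.strong_induction_on with
  | _ k ih =>
  intro D S E hk hgrown hSuniv
  have hDS : D ⊆ S := hgrown.D_subset
  have hn : (univ : Finset V).card = Fintype.card V := card_univ
  by_cases h1 : ∃ z ∈ D, ∃ w, G.Adj z w ∧ w ∉ S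
  · -- Case 1 : attach to an internal vertex
    obtain ⟨z, hz, w, hzw, hwS⟩ := h1
    have hgrown' := Grown.attach z w hgrown hz hwS hzw
    have hcardS : (insert w S).card = S.card + 1 := card_insert_of_notMem hwS
    have halive : aliveSet G D (insert w S) ⊆ insert w (aliveSet G D S) := by
      intro v hv
      rw [mem_aliveSet] at hv
      obtain ⟨hv1, hv2, y, hy1, hy2⟩ := hv
      rcases mem_insert.1 hv1 with rfl | hv1
      · exact mem_insert_self _ _
      · exact mem_insert_of_mem (mem_aliveSet.2 ⟨hv1, hv2, y, hy1, fun hc => hy2 (mem_insert_of_mem hc)⟩)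
    have ha' : (aliveSet G D (insert w S)).card ≤ (aliveSet G D S).card + 1 :=
      le_trans (card_le_card halive) (card_insert_le _ _)
    by_cases hS' : insert w S = univ
    · refine ⟨D, _, hS' ▸ hgrown', ?_⟩
      have hnat : (univ : Finset V).card = S.card + 1 := by rw [← hS', hcardS]
      have h3 : (Fintype.card V : ℤ) = (S.card : ℤ) + 1 := by
        rw [← hn]; exact_mod_cast hnat
      have ha : (0:ℤ) ≤ ((aliveSet G D S).card : ℤ) := Int.natCast_nonneg _
      omega
    · obtain ⟨D', E', hg, hval⟩ := ih _ (hk ▸ card_compl_lt (subset_insert _ _)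
        (mem_insert_self w S) hwS) D (insert w S) _ rfl hgrown' hS'
      refine ⟨D', E', hg, ?_⟩
      have h2 : ((insert w S).card : ℤ) = (S.card : ℤ) + 1 := by exact_mod_cast hcardS
      have h4 : ((aliveSet G D (insert w S)).card : ℤ) ≤ ((aliveSet G D S).card : ℤ) + 1 := by
        exact_mod_cast ha'
      omega
  · push_neg at h1
    obtain ⟨u, huS, w, huw, hwS⟩ := exists_cross hG hgrown.nonempty hSuniv
    have huD : u ∉ D := fun hc => hwS (h1 u hc w huw)
    by_cases h2a : ∃ v ∈ S, v ∉ D ∧ ∃ w₁ w₂, w₁ ≠ w₂ ∧ G.Adj v w₁ ∧ G.Adj v w₂ ∧ w₁ ∉ S ∧ w₂ ∉ S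
    · -- Case 2a
      obtain ⟨v, hvS, hvD, w₁, w₂, hne, hvw₁, hvw₂, hw₁, hw₂⟩ := h2a
      have g1 : Grown G (insert v D) S E := Grown.promote v hgrown hvS
      have g2 := Grown.attach v w₁ g1 (mem_insert_self _ _) hw₁ hvw₁
      have hw₂' : w₂ ∉ insert w₁ S := by
        simp only [mem_insert, not_or]
        exact ⟨fun hc => hne hc.symm, hw₂⟩
      have g3 := Grown.attach v w₂ g2 (mem_insert_self _ _) hw₂' hvw₂
      have hvalive : v ∈ aliveSet G D S := mem_aliveSet.2 ⟨hvS, hvD, w₁, hvw₁, hw₁⟩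
      have hcardD : (insert v D).card = D.card + 1 := card_insert_of_notMem hvD
      have hcardS : (insert w₂ (insert w₁ S)).card = S.card + 2 := by
        rw [card_insert_of_notMem hw₂', card_insert_of_notMem hw₁]
      have halive : aliveSet G (insert v D) (insert w₂ (insert w₁ S)) ⊆
          insert w₁ (insert w₂ (aliveSet G D S \ {v})) := by
        intro x hx
        rw [mem_aliveSet] at hx
        obtain ⟨hx1, hx2, y, hy1, hy2⟩ := hx
        have hxv : x ≠ v := fun hc => hx2 (hc ▸ mem_insert_self _ _)
        rcases mem_insert.1 hx1 with rfl | hx1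
        · exact mem_insert_of_mem (mem_insert_self _ _)
        rcases mem_insert.1 hx1 with rfl | hx1
        · exact mem_insert_self _ _
        · refine mem_insert_of_mem (mem_insert_of_mem (mem_sdiff.2 ⟨mem_aliveSet.2
            ⟨hx1, fun hc => hx2 (mem_insert_of_mem hc), y, hy1, fun hc =>
              hy2 (mem_insert_of_mem (mem_insert_of_mem hc))⟩, ?_⟩))
          simpa using hxv
      have ha' : (aliveSet G (insert v D) (insert w₂ (insert w₁ S))).card ≤
          (aliveSet G D S).card + 1 := by
        calc (aliveSet G (insert v D) (insert w₂ (insert w₁ S))).card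
            ≤ (insert w₁ (insert w₂ (aliveSet G D S \ {v}))).card := card_le_card halive
          _ ≤ (aliveSet G D S \ {v}).card + 2 := by
              refine le_trans (card_insert_le _ _) ?_
              have := card_insert_le w₂ (aliveSet G D S \ {v})
              omega
          _ ≤ (aliveSet G D S).card + 1 := by
              rw [sdiff_singleton_eq_erase, card_erase_of_mem hvalive]
              have : 1 ≤ (aliveSet G D S).card := card_pos.2 ⟨v, hvalive⟩
              omega
      by_cases hS' : insert w₂ (insert w₁ S) = univ
      · refine ⟨insert v D, _, hS' ▸ g3, ?_⟩
        have hnat : (univ : Finset V).card = S.card + 2 := by rw [← hS', hcardS]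
        have h3 : (Fintype.card V : ℤ) = (S.card : ℤ) + 2 := by
          rw [← hn]; exact_mod_cast hnat
        have hD2 : ((insert v D).card : ℤ) = (D.card : ℤ) + 1 := by exact_mod_cast hcardD
        have ha : (0:ℤ) ≤ ((aliveSet G D S).card : ℤ) := Int.natCast_nonneg _
        omega
      · obtain ⟨D', E', hg, hval⟩ := ih _ (hk ▸ card_compl_lt
          ((subset_insert _ _).trans (subset_insert _ _)) (mem_insert_of_mem (mem_insert_self w₁ S)) hw₁)
          (insert v D) (insert w₂ (insert w₁ S)) _ rfl g3 hS'
        refine ⟨D', E', hg, ?_⟩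
        have h2 : ((insert w₂ (insert w₁ S)).card : ℤ) = (S.card : ℤ) + 2 := by exact_mod_cast hcardS
        have hD2 : ((insert v D).card : ℤ) = (D.card : ℤ) + 1 := by exact_mod_cast hcardD
        have h4 : ((aliveSet G (insert v D) (insert w₂ (insert w₁ S))).card : ℤ) ≤
            ((aliveSet G D S).card : ℤ) + 1 := by exact_mod_cast ha'
        omega
    · -- Case 2b
      push_neg at h2a
      -- u is an alive leaf with unique outside neighbour w
      have huniq : ∀ v ∈ S, v ∉ D → ∀ y₁ y₂, G.Adj v y₁ → G.Adj v y₂ → y₁ ∉ S → y₂ ∉ S → y₁ = y₂ := by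
        intro v hv hv' y₁ y₂ ha1 ha2 hs1 hs2
        by_contra hne
        exact hs2 (h2a v hv hv' y₁ y₂ hne ha1 ha2 hs1)
      set K := G.neighborFinset w \ S with hK
      set Sw := G.neighborFinset w ∩ S with hSw
      have hKSw : K.card + Sw.card = G.degree w := by
        rw [hK, hSw, card_sdiff_add_card_inter]
        rfl
      have hSw_sub : Sw ⊆ aliveSet G D S := by
        intro v hv
        rw [hSw, mem_inter, mem_neighborFinset] at hv
        obtain ⟨hadj, hvS⟩ := hv
        have hvD : v ∉ D := fun hc => hwS (h1 v hc w hadj.symm)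
        exact mem_aliveSet.2 ⟨hvS, hvD, w, hadj.symm, hwS⟩
      have hSw_death : ∀ v ∈ Sw, ∀ y, G.Adj v y → y ∉ S → y = w := by
        intro v hv y hadj hyS
        rw [hSw, mem_inter, mem_neighborFinset] at hv
        have hvD : v ∉ D := fun hc => hyS (h1 v hc y hadj)
        exact huniq v hv.2 hvD y w hadj hv.1.symm hyS hwS
      have huSw : u ∈ Sw := by
        rw [hSw, mem_inter, mem_neighborFinset]
        exact ⟨huw.symm, huS⟩
      have hwD : w ∉ D := fun hc => hwS (hDS hc)
      have g1 : Grown G (insert u D) S E := Grown.promote u hgrown huS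
      have g2 := Grown.attach u w g1 (mem_insert_self _ _) hwS huw
      by_cases h2bi : 2 ≤ K.card
      · -- 2b-i : w has two fresh neighbours
        obtain ⟨x₁, hx₁, x₂, hx₂, hx12⟩ := one_lt_card.1 h2bi
        rw [hK, mem_sdiff, mem_neighborFinset] at hx₁ hx₂
        obtain ⟨hwx₁, hx₁S⟩ := hx₁
        obtain ⟨hwx₂, hx₂S⟩ := hx₂
        have g3 : Grown G (insert w (insert u D)) (insert w S) _ :=
          Grown.promote w g2 (mem_insert_self _ _)
        have hx₁' : x₁ ∉ insert w S := by
          simp only [mem_insert, not_or]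
          exact ⟨fun hc => G.irrefl (hc ▸ hwx₁), hx₁S⟩
        have g4 := Grown.attach w x₁ g3 (mem_insert_self _ _) hx₁' hwx₁
        have hx₂' : x₂ ∉ insert x₁ (insert w S) := by
          simp only [mem_insert, not_or]
          exact ⟨fun hc => hx12 hc.symm, fun hc => G.irrefl (hc ▸ hwx₂), hx₂S⟩
        have g5 := Grown.attach w x₂ g4 (mem_insert_self _ _) hx₂' hwx₂
        have hwuD : w ∉ insert u D := by
          simp only [mem_insert, not_or]
          exact ⟨huw.ne', hwD⟩
        have hcardD : (insert w (insert u D)).card = D.card + 2 := by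
          rw [card_insert_of_notMem hwuD, card_insert_of_notMem huD]
        have hcardS : (insert x₂ (insert x₁ (insert w S))).card = S.card + 3 := by
          rw [card_insert_of_notMem hx₂', card_insert_of_notMem hx₁', card_insert_of_notMem hwS]
        have halive : aliveSet G (insert w (insert u D)) (insert x₂ (insert x₁ (insert w S))) ⊆
            insert x₁ (insert x₂ (aliveSet G D S \ Sw)) := by
          intro x hx
          rw [mem_aliveSet] at hx
          obtain ⟨hxS, hxD, y, hy1, hy2⟩ := hx
          rcases mem_insert.1 hxS with rfl | hxS
          · exact mem_insert_of_mem (mem_insert_self _ _)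
          rcases mem_insert.1 hxS with rfl | hxS
          · exact mem_insert_self _ _
          rcases mem_insert.1 hxS with rfl | hxS
          · exact absurd (mem_insert_self _ _) hxD
          · have hxD' : x ∉ D := fun hc => hxD (mem_insert_of_mem (mem_insert_of_mem hc))
            have hyS : y ∉ S := fun hc => hy2
              (mem_insert_of_mem (mem_insert_of_mem (mem_insert_of_mem hc)))
            refine mem_insert_of_mem (mem_insert_of_mem (mem_sdiff.2
              ⟨mem_aliveSet.2 ⟨hxS, hxD', y, hy1, hyS⟩, fun hc => ?_⟩))
            have := hSw_death x hc y hy1 hyS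
            exact hy2 (this ▸ mem_insert_of_mem (mem_insert_of_mem (mem_insert_self _ _)))
        have hSwA : (aliveSet G D S \ Sw).card = (aliveSet G D S).card - Sw.card :=
          card_sdiff_of_subset hSw_sub
        have hSw1 : 1 ≤ Sw.card := card_pos.2 ⟨u, huSw⟩
        have ha1 : 1 ≤ (aliveSet G D S).card := card_pos.2 ⟨u, hSw_sub huSw⟩
        have hSwle : Sw.card ≤ (aliveSet G D S).card := card_le_card hSw_sub
        have ha' : (aliveSet G (insert w (insert u D)) (insert x₂ (insert x₁ (insert w S)))).card ≤
            (aliveSet G D S).card - Sw.card + 2 := by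
          refine le_trans (card_le_card halive) ?_
          refine le_trans (card_insert_le _ _) ?_
          have := card_insert_le x₂ (aliveSet G D S \ Sw)
          omega
        by_cases hS' : insert x₂ (insert x₁ (insert w S)) = univ
        · refine ⟨insert w (insert u D), _, hS' ▸ g5, ?_⟩
          have hnat : (univ : Finset V).card = S.card + 3 := by rw [← hS', hcardS]
          have h3 : (Fintype.card V : ℤ) = (S.card : ℤ) + 3 := by
            rw [← hn]; exact_mod_cast hnat
          have hD2 : ((insert w (insert u D)).card : ℤ) = (D.card : ℤ) + 2 := by
            exact_mod_cast hcardD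
          have ha1' : (1:ℤ) ≤ ((aliveSet G D S).card : ℤ) := by exact_mod_cast ha1
          omega
        · obtain ⟨D', E', hg, hval⟩ := ih _ (hk ▸ card_compl_lt
            ((subset_insert _ _).trans ((subset_insert _ _).trans (subset_insert _ _)))
            (mem_insert_of_mem (mem_insert_of_mem (mem_insert_self w S))) hwS)
            (insert w (insert u D)) (insert x₂ (insert x₁ (insert w S))) _ rfl g5 hS'
          refine ⟨D', E', hg, ?_⟩
          have h2 : ((insert x₂ (insert x₁ (insert w S))).card : ℤ) = (S.card : ℤ) + 3 := by
            exact_mod_cast hcardS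
          have hD2 : ((insert w (insert u D)).card : ℤ) = (D.card : ℤ) + 2 := by
            exact_mod_cast hcardD
          have h4 : ((aliveSet G (insert w (insert u D)) (insert x₂ (insert x₁ (insert w S)))).card : ℤ) ≤
              ((aliveSet G D S).card : ℤ) - (Sw.card : ℤ) + 2 := by
            have h5 : (aliveSet G (insert w (insert u D)) (insert x₂ (insert x₁ (insert w S)))).card ≤
                (aliveSet G D S).card - Sw.card + 2 := ha'
            have := hSwle
            push_cast
            omega
          have hSw1' : (1:ℤ) ≤ (Sw.card : ℤ) := by exact_mod_cast hSw1
          have hSwle' : (Sw.card : ℤ) ≤ ((aliveSet G D S).card : ℤ) := by exact_mod_cast hSwle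
          omega
      · -- 2b-ii : absorb w only
        push_neg at h2bi
        have hSw2 : 2 ≤ Sw.card := by
          have hd := hdeg w
          omega
        have hcardD : (insert u D).card = D.card + 1 := card_insert_of_notMem huD
        have hcardS : (insert w S).card = S.card + 1 := card_insert_of_notMem hwS
        have halive : aliveSet G (insert u D) (insert w S) ⊆
            insert w (aliveSet G D S \ Sw) := by
          intro x hx
          rw [mem_aliveSet] at hx
          obtain ⟨hxS, hxD, y, hy1, hy2⟩ := hx
          rcases mem_insert.1 hxS with rfl | hxS
          · exact mem_insert_self _ _
          · have hxD' : x ∉ D := fun hc => hxD (mem_insert_of_mem hc)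
            have hyS : y ∉ S := fun hc => hy2 (mem_insert_of_mem hc)
            refine mem_insert_of_mem (mem_sdiff.2
              ⟨mem_aliveSet.2 ⟨hxS, hxD', y, hy1, hyS⟩, fun hc => ?_⟩)
            exact hy2 ((hSw_death x hc y hy1 hyS) ▸ mem_insert_self _ _)
        have hSwA : (aliveSet G D S \ Sw).card = (aliveSet G D S).card - Sw.card :=
          card_sdiff_of_subset hSw_sub
        have hSwle : Sw.card ≤ (aliveSet G D S).card := card_le_card hSw_sub
        have ha' : (aliveSet G (insert u D) (insert w S)).card ≤
            (aliveSet G D S).card - Sw.card + 1 := by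
          refine le_trans (card_le_card halive) ?_
          have := card_insert_le w (aliveSet G D S \ Sw)
          omega
        by_cases hS' : insert w S = univ
        · -- spanning stop : K must be empty, so Sw.card = deg w ≥ 3
          have hKempty : K = ∅ := by
            rw [eq_empty_iff_forall_notMem]
            intro x hxK
            have hx := hxK
            rw [hK, mem_sdiff, mem_neighborFinset] at hx
            have : x ∈ insert w S := hS' ▸ mem_univ x
            rcases mem_insert.1 this with rfl | hc
            · exact G.irrefl hx.1
            · exact hx.2 hc
          have hSw3 : 3 ≤ Sw.card := by
            have hd := hdeg w
            rw [hKempty] at hKSw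
            simp at hKSw
            omega
          refine ⟨insert u D, _, hS' ▸ g2, ?_⟩
          have hnat : (univ : Finset V).card = S.card + 1 := by rw [← hS', hcardS]
          have h3 : (Fintype.card V : ℤ) = (S.card : ℤ) + 1 := by
            rw [← hn]; exact_mod_cast hnat
          have hD2 : ((insert u D).card : ℤ) = (D.card : ℤ) + 1 := by exact_mod_cast hcardD
          have ha3 : (3:ℤ) ≤ ((aliveSet G D S).card : ℤ) := by
            have : 3 ≤ (aliveSet G D S).card := le_trans hSw3 hSwle
            exact_mod_cast this
          omega
        · obtain ⟨D', E', hg, hval⟩ := ih _ (hk ▸ card_compl_lt (subset_insert _ _)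
            (mem_insert_self w S) hwS) (insert u D) (insert w S) _ rfl g2 hS'
          refine ⟨D', E', hg, ?_⟩
          have h2 : ((insert w S).card : ℤ) = (S.card : ℤ) + 1 := by exact_mod_cast hcardS
          have hD2 : ((insert u D).card : ℤ) = (D.card : ℤ) + 1 := by exact_mod_cast hcardD
          have h4 : ((aliveSet G (insert u D) (insert w S)).card : ℤ) ≤
              ((aliveSet G D S).card : ℤ) - (Sw.card : ℤ) + 1 := by
            have := hSwle
            push_cast
            omega
          have hSw2' : (2:ℤ) ≤ (Sw.card : ℤ) := by exact_mod_cast hSw2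
          have hSwle' : (Sw.card : ℤ) ≤ ((aliveSet G D S).card : ℤ) := by exact_mod_cast hSwle
          omega

end March

section Bases
variable {G : SimpleGraph V} [DecidableRel G.Adj]

lemma base_star (v : V) : ∃ E', Grown G {v} (insert v (G.neighborFinset v)) E' := by
  have h := grown_fan (Grown.base (G := G) v) v (mem_singleton_self v) (G.neighborFinset v)
    (fun w hw => (mem_neighborFinset _ _ _).1 hw)
    (fun w hw => by
      rw [mem_singleton]
      exact fun hc => G.irrefl (hc ▸ (mem_neighborFinset _ _ _).1 hw))
  obtain ⟨E', hE'⟩ := h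
  refine ⟨E', ?_⟩
  have hset : ({v} : Finset V) ∪ G.neighborFinset v = insert v (G.neighborFinset v) := by
    ext z
    simp only [mem_union, mem_insert, mem_singleton]
  rwa [hset] at hE'

lemma aliveSet_card_le (D S : Finset V) (hDS : D ⊆ S) :
    (aliveSet G D S).card ≤ S.card - D.card := by
  have h1 : aliveSet G D S ⊆ S \ D := filter_subset _ _
  have := card_le_card h1
  rwa [card_sdiff_of_subset hDS] at this

lemma nbhd_eq (hdeg3 : ∀ v, G.degree v = 3) {x y z w : V}
    (h1 : G.Adj x y) (h2 : G.Adj x z) (h3 : G.Adj x w)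
    (hyz : y ≠ z) (hyw : y ≠ w) (hzw : z ≠ w) : G.neighborFinset x = {y, z, w} := by
  have hsub : ({y, z, w} : Finset V) ⊆ G.neighborFinset x := by
    intro t ht
    rcases mem_insert.1 ht with rfl | ht
    · exact (mem_neighborFinset _ _ _).2 h1
    rcases mem_insert.1 ht with rfl | ht
    · exact (mem_neighborFinset _ _ _).2 h2
    · rw [mem_singleton] at ht
      exact ht ▸ (mem_neighborFinset _ _ _).2 h3
  have hcard : ({y, z, w} : Finset V).card = 3 := by
    rw [card_insert_of_notMem (by simp [hyz, hyw]),
      card_insert_of_notMem (by simp [hzw]), card_singleton]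
  have hdeg : (G.neighborFinset x).card = 3 := hdeg3 x
  exact (eq_of_subset_of_card_le hsub (by omega)).symm

lemma cubic_closed (hG : G.Connected) (hdeg3 : ∀ v, G.degree v = 3)
    (hcommon : ∀ x y, G.Adj x y → ∃ z, G.Adj x z ∧ G.Adj y z) (v : V) :
    insert v (G.neighborFinset v) = univ := by
  have helper : ∀ m o₁ o₂ : V, G.neighborFinset v = {m, o₁, o₂} →
      G.Adj m o₁ → G.Adj m o₂ → o₁ ≠ o₂ → ¬ G.Adj o₁ o₂ → False := by
    intro m o₁ o₂ hN hm1 hm2 ho₁o₂ hno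
    have hvm : G.Adj v m := by rw [← mem_neighborFinset, hN]; simp
    have hvo₁ : G.Adj v o₁ := by rw [← mem_neighborFinset, hN]; simp
    have hvo₂ : G.Adj v o₂ := by rw [← mem_neighborFinset, hN]; simp
    -- third neighbour t of o₁
    have hsub : ({v, m} : Finset V) ⊆ G.neighborFinset o₁ := by
      intro t ht
      rcases mem_insert.1 ht with rfl | ht
      · exact (mem_neighborFinset _ _ _).2 hvo₁.symm
      · rw [mem_singleton] at ht
        exact ht ▸ (mem_neighborFinset _ _ _).2 hm1.symm
    have hvm_ne : v ≠ m := hvm.ne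
    have hcard2 : ({v, m} : Finset V).card = 2 := by
      rw [card_insert_of_notMem (by simpa using hvm_ne), card_singleton]
    have hdego₁ : (G.neighborFinset o₁).card = 3 := hdeg3 o₁
    have hex : (G.neighborFinset o₁ \ {v, m}).Nonempty := by
      rw [← card_pos, card_sdiff_of_subset hsub, hdego₁, hcard2]
      omega
    obtain ⟨t, ht⟩ := hex
    rw [mem_sdiff, mem_neighborFinset] at ht
    obtain ⟨hto₁, htvm⟩ := ht
    have htv : t ≠ v := fun hc => htvm (hc ▸ mem_insert_self _ _)
    have htm : t ≠ m := fun hc => htvm (by rw [hc]; simp)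
    have hto₂ : t ≠ o₂ := fun hc => hno (hc ▸ hto₁)
    have hNo₁ : G.neighborFinset o₁ = {v, m, t} :=
      nbhd_eq hdeg3 hvo₁.symm hm1.symm hto₁ hvm_ne htv.symm htm.symm
    obtain ⟨z, hz1, hz2⟩ := hcommon o₁ t hto₁
    have hzmem : z ∈ ({v, m, t} : Finset V) := by
      rw [← hNo₁, mem_neighborFinset]; exact hz1
    have hzt : z ≠ t := hz2.ne'
    rcases mem_insert.1 hzmem with hzv | hzmem
    · -- z = v : t adjacent to v, so t ∈ N(v) = {m,o₁,o₂} : impossible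
      rw [hzv] at hz2
      have : t ∈ G.neighborFinset v := (mem_neighborFinset _ _ _).2 hz2.symm
      rw [hN] at this
      rcases mem_insert.1 this with rfl | this
      · exact htm rfl
      rcases mem_insert.1 this with rfl | this
      · exact hto₁.ne' rfl
      · rw [mem_singleton] at this
        exact hto₂ this
    rcases mem_insert.1 hzmem with hzm | hzmem
    · -- z = m : t ∈ N(m) = {v, o₁, o₂} : impossible
      rw [hzm] at hz2
      have hNm : G.neighborFinset m = {v, o₁, o₂} :=
        nbhd_eq hdeg3 hvm.symm hm1 hm2 hvo₁.ne hvo₂.ne ho₁o₂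
      have : t ∈ G.neighborFinset m := (mem_neighborFinset _ _ _).2 hz2.symm
      rw [hNm] at this
      rcases mem_insert.1 this with rfl | this
      · exact htv rfl
      rcases mem_insert.1 this with rfl | this
      · exact hto₁.ne' rfl
      · rw [mem_singleton] at this
        exact hto₂ this
    · rw [mem_singleton] at hzmem
      exact hzt hzmem
  -- get the three neighbours
  have hcard3 : (G.neighborFinset v).card = 3 := hdeg3 v
  obtain ⟨a, b, c, hab, hac, hbc, hN⟩ := card_eq_three.1 hcard3
  have hva : G.Adj v a := by rw [← mem_neighborFinset, hN]; simp
  have hvb : G.Adj v b := by rw [← mem_neighborFinset, hN]; simp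
  have hvc : G.Adj v c := by rw [← mem_neighborFinset, hN]; simp
  -- each of a,b,c adjacent to another one
  have dA : G.Adj a b ∨ G.Adj a c := by
    obtain ⟨z, hz1, hz2⟩ := hcommon v a hva
    have : z ∈ ({a, b, c} : Finset V) := by rw [← hN, mem_neighborFinset]; exact hz1
    rcases mem_insert.1 this with rfl | this
    · exact absurd rfl hz2.ne'
    rcases mem_insert.1 this with rfl | this
    · exact Or.inl hz2
    · rw [mem_singleton] at this
      exact Or.inr (this ▸ hz2)
  have dB : G.Adj b a ∨ G.Adj b c := by
    obtain ⟨z, hz1, hz2⟩ := hcommon v b hvb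
    have : z ∈ ({a, b, c} : Finset V) := by rw [← hN, mem_neighborFinset]; exact hz1
    rcases mem_insert.1 this with rfl | this
    · exact Or.inl hz2
    rcases mem_insert.1 this with rfl | this
    · exact absurd rfl hz2.ne'
    · rw [mem_singleton] at this
      exact Or.inr (this ▸ hz2)
  have dC : G.Adj c a ∨ G.Adj c b := by
    obtain ⟨z, hz1, hz2⟩ := hcommon v c hvc
    have : z ∈ ({a, b, c} : Finset V) := by rw [← hN, mem_neighborFinset]; exact hz1
    rcases mem_insert.1 this with rfl | this
    · exact Or.inl hz2
    rcases mem_insert.1 this with rfl | this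
    · exact Or.inr hz2
    · rw [mem_singleton] at this
      exact absurd this hz2.ne'
  -- full triangle
  have htri : G.Adj a b ∧ G.Adj a c ∧ G.Adj b c := by
    by_cases h₁ : G.Adj a b
    · by_cases h₂ : G.Adj a c
      · by_cases h₃ : G.Adj b c
        · exact ⟨h₁, h₂, h₃⟩
        · exact absurd (helper a b c hN h₁ h₂ hbc h₃) (fun h => h)
      · by_cases h₃ : G.Adj b c
        · have hN' : G.neighborFinset v = {b, a, c} := by
            rw [hN]; ext z; simp only [mem_insert, mem_singleton]; tauto
          exact absurd (helper b a c hN' h₁.symm h₃ hac h₂) (fun h => h)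
        · rcases dC with h | h
          · exact absurd h.symm h₂
          · exact absurd h.symm h₃
    · by_cases h₂ : G.Adj a c
      · by_cases h₃ : G.Adj b c
        · have hN' : G.neighborFinset v = {c, a, b} := by
            rw [hN]; ext z; simp only [mem_insert, mem_singleton]; tauto
          exact absurd (helper c a b hN' h₂.symm h₃.symm hab h₁) (fun h => h)
        · rcases dB with h | h
          · exact absurd h.symm h₁
          · exact absurd h h₃
      · rcases dA with h | h
        · exact absurd h h₁
        · exact absurd h h₂
  obtain ⟨hAB, hAC, hBC⟩ := htri
  -- closure
  have hclosed : ∀ p ∈ insert v (G.neighborFinset v), ∀ q, G.Adj p q →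
      q ∈ insert v (G.neighborFinset v) := by
    intro p hp q hq
    rcases mem_insert.1 hp with rfl | hp
    · exact mem_insert_of_mem ((mem_neighborFinset _ _ _).2 hq)
    · rw [hN] at hp
      have hmem : ∀ x y z : V, G.neighborFinset p = {x, y, z} → q ∈ ({x,y,z} : Finset V) → 
          (q = x ∨ q = y ∨ q = z) := by
        intro x y z _ hqm
        rcases mem_insert.1 hqm with rfl | hqm
        · exact Or.inl rfl
        rcases mem_insert.1 hqm with rfl | hqm
        · exact Or.inr (Or.inl rfl)
        · rw [mem_singleton] at hqm
          exact Or.inr (Or.inr hqm)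
      have hfin : ∀ x y z : V, G.neighborFinset p = {x, y, z} →
          x ∈ insert v (G.neighborFinset v) → y ∈ insert v (G.neighborFinset v) →
          z ∈ insert v (G.neighborFinset v) → q ∈ insert v (G.neighborFinset v) := by
        intro x y z hNp hx hy hz
        have : q ∈ ({x,y,z} : Finset V) := by rw [← hNp, mem_neighborFinset]; exact hq
        rcases hmem x y z hNp this with rfl | rfl | rfl
        · exact hx
        · exact hy
        · exact hz
      have hvmem : v ∈ insert v (G.neighborFinset v) := mem_insert_self _ _
      have hamem : a ∈ insert v (G.neighborFinset v) := by
        rw [hN]; simp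
      have hbmem : b ∈ insert v (G.neighborFinset v) := by
        rw [hN]; simp
      have hcmem : c ∈ insert v (G.neighborFinset v) := by
        rw [hN]; simp
      rcases mem_insert.1 hp with rfl | hp
      · exact hfin v b c (nbhd_eq hdeg3 hva.symm hAB hAC hvb.ne hvc.ne hbc) hvmem hbmem hcmem
      rcases mem_insert.1 hp with rfl | hp
      · exact hfin v a c (nbhd_eq hdeg3 hvb.symm hAB.symm hBC hva.ne hvc.ne hac) hvmem hamem hcmem
      · rw [mem_singleton] at hp
        subst hp
        exact hfin v a b (nbhd_eq hdeg3 hvc.symm hAC.symm hBC.symm hva.ne hvb.ne hab) hvmem hamem hbmem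
  by_contra hcon
  obtain ⟨p, hp, q, hpq, hqS⟩ := exists_cross hG ⟨v, mem_insert_self _ _⟩ hcon
  exact hqS (hclosed p hp q hpq)

end Bases

section Master
variable {G : SimpleGraph V} [DecidableRel G.Adj]

lemma exists_good_D (hG : G.Connected) (hdeg : ∀ v, 3 ≤ G.degree v) :
    ∃ (D' : Finset V) (E' : Finset (Sym2 V)), Grown G D' univ E' ∧
      3 * (Fintype.card V : ℤ) - 4 * (D'.card : ℤ) ≥ 8 := by
  have hn : (univ : Finset V).card = Fintype.card V := card_univ
  by_cases hbig : ∃ v, 4 ≤ G.degree v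
  · obtain ⟨v, hv⟩ := hbig
    obtain ⟨E₀, hE₀⟩ := base_star (G := G) v
    have hvN : v ∉ G.neighborFinset v := by
      rw [mem_neighborFinset]
      exact G.irrefl
    have hScard : (insert v (G.neighborFinset v)).card = G.degree v + 1 := by
      rw [card_insert_of_notMem hvN]
      rfl
    have hDS : ({v} : Finset V) ⊆ insert v (G.neighborFinset v) := hE₀.D_subset
    have halive := aliveSet_card_le (G := G) {v} (insert v (G.neighborFinset v)) hDS
    rw [hScard, card_singleton] at halive
    by_cases hS : insert v (G.neighborFinset v) = univ
    · refine ⟨{v}, E₀, hS ▸ hE₀, ?_⟩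
      have h1 : Fintype.card V = G.degree v + 1 := by rw [← hn, ← hS, hScard]
      have : (Fintype.card V : ℤ) = (G.degree v : ℤ) + 1 := by exact_mod_cast h1
      have hv' : (4:ℤ) ≤ (G.degree v : ℤ) := by exact_mod_cast hv
      simp only [card_singleton]
      push_cast
      omega
    · obtain ⟨D', E', hg, hval⟩ := march hG hdeg _ {v} (insert v (G.neighborFinset v)) E₀
        rfl hE₀ hS
      refine ⟨D', E', hg, ?_⟩
      have h2 : ((insert v (G.neighborFinset v)).card : ℤ) = (G.degree v : ℤ) + 1 := by
        exact_mod_cast hScard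
      have h3 : ((aliveSet G {v} (insert v (G.neighborFinset v))).card : ℤ) ≤ (G.degree v : ℤ) := by
        exact_mod_cast halive
      have hv' : (4:ℤ) ≤ (G.degree v : ℤ) := by exact_mod_cast hv
      simp only [card_singleton] at hval
      push_cast at hval
      omega
  · push_neg at hbig
    have hdeg3 : ∀ v, G.degree v = 3 := fun v => le_antisymm (by have := hbig v; omega) (hdeg v)
    by_cases hedge : ∃ x y, G.Adj x y ∧ ∀ z, ¬(G.Adj x z ∧ G.Adj y z)
    · -- double star base
      obtain ⟨x, y, hxy, hcom⟩ := hedge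
      obtain ⟨E₀, hE₀⟩ := base_star (G := G) x
      have hyS : y ∈ insert x (G.neighborFinset x) :=
        mem_insert_of_mem ((mem_neighborFinset _ _ _).2 hxy)
      have g2 : Grown G (insert y {x}) (insert x (G.neighborFinset x)) E₀ :=
        Grown.promote y hE₀ hyS
      set S₁ := insert x (G.neighborFinset x) with hS₁
      set W₂ := G.neighborFinset y \ S₁ with hW₂
      obtain ⟨E₁, hE₁⟩ := grown_fan g2 y (mem_insert_self _ _) W₂
        (fun w hw => by
          rw [hW₂, mem_sdiff, mem_neighborFinset] at hw
          exact hw.1)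
        (fun w hw => by
          rw [hW₂, mem_sdiff] at hw
          exact hw.2)
      -- cards
      have hxN : x ∉ G.neighborFinset x := by rw [mem_neighborFinset]; exact G.irrefl
      have hS₁card : S₁.card = 4 := by
        rw [hS₁, card_insert_of_notMem hxN]
        have : (G.neighborFinset x).card = 3 := hdeg3 x
        omega
      have hinter : G.neighborFinset y ∩ S₁ = {x} := by
        ext z
        rw [mem_inter, hS₁, mem_insert, mem_singleton]
        constructor
        · rintro ⟨hz1, rfl | hz2⟩
          · rfl
          · exact absurd ⟨(mem_neighborFinset _ _ _).1 hz2,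
              (mem_neighborFinset _ _ _).1 hz1⟩ (hcom z)
        · rintro rfl
          exact ⟨(mem_neighborFinset _ _ _).2 hxy.symm, Or.inl rfl⟩
      have hW₂card : W₂.card = 2 := by
        have h1 : (G.neighborFinset y \ S₁).card + (G.neighborFinset y ∩ S₁).card
            = (G.neighborFinset y).card := card_sdiff_add_card_inter _ _
        rw [hinter, card_singleton] at h1
        have h2 : (G.neighborFinset y).card = 3 := hdeg3 y
        rw [hW₂]
        omega
      have hS₂card : (S₁ ∪ W₂).card = 6 := by
        rw [card_union_of_disjoint (sdiff_disjoint.symm), hS₁card, hW₂card]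
      have hDcard : (insert y ({x} : Finset V)).card = 2 := by
        rw [card_insert_of_notMem (by simpa using hxy.ne'), card_singleton]
      have hDS := hE₁.D_subset
      have halive := aliveSet_card_le (G := G) (insert y {x}) (S₁ ∪ W₂) hDS
      rw [hS₂card, hDcard] at halive
      by_cases hS : S₁ ∪ W₂ = univ
      · refine ⟨insert y {x}, E₁, hS ▸ hE₁, ?_⟩
        have h1 : Fintype.card V = 6 := by rw [← hn, ← hS, hS₂card]
        rw [hDcard, h1]
        norm_num
      · obtain ⟨D', E', hg, hval⟩ := march hG hdeg _ (insert y {x}) (S₁ ∪ W₂) E₁ rfl hE₁ hS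
        refine ⟨D', E', hg, ?_⟩
        rw [hS₂card, hDcard] at hval
        have h3 : ((aliveSet G (insert y {x}) (S₁ ∪ W₂)).card : ℤ) ≤ 4 := by exact_mod_cast halive
        push_cast at hval
        omega
    · push_neg at hedge
      have hcommon : ∀ x y, G.Adj x y → ∃ z, G.Adj x z ∧ G.Adj y z := by
        intro x y hxy
        obtain ⟨z, hz⟩ := hedge x y hxy
        exact ⟨z, hz⟩
      have hne : Nonempty V := hG.nonempty
      obtain ⟨v⟩ := hne
      have hclosed := cubic_closed hG hdeg3 hcommon v
      obtain ⟨E₀, hE₀⟩ := base_star (G := G) v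
      refine ⟨{v}, E₀, hclosed ▸ hE₀, ?_⟩
      have hvN : v ∉ G.neighborFinset v := by rw [mem_neighborFinset]; exact G.irrefl
      have h1 : Fintype.card V = 4 := by
        rw [← hn, ← hclosed, card_insert_of_notMem hvN]
        have : (G.neighborFinset v).card = 3 := hdeg3 v
        omega
      rw [h1, card_singleton]
      norm_num

end Master

end Helpers

theorem stmt_4 {V : Type*} [Fintype V] (G : SimpleGraph V)
    (hconn : G.Connected) (hdeg : ∀ v : V, 3 ≤ ndeg G v) :
    ∃ T : SimpleGraph V, IsSpanningTreeOf T G ∧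
      (Fintype.card V : ℝ) / 4 + 2 ≤ (numLeaves T : ℝ) := by
  classical
  have hdeg' : ∀ v, 3 ≤ G.degree v := by
    intro v
    have h := hdeg v
    rwa [ndeg, Nat.card_eq_fintype_card, G.card_neighborSet_eq_degree] at h
  obtain ⟨D', E', hg, hval⟩ := exists_good_D hconn hdeg'
  set T := SimpleGraph.fromEdgeSet ((E' : Set (Sym2 V))) with hT
  have hTG : T ≤ G := by
    intro v w hadj
    rw [hT, SimpleGraph.fromEdgeSet_adj] at hadj
    exact (SimpleGraph.mem_edgeSet G).1 (hg.edge_mem _ hadj.1)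
  have hconnT : T.Connected := by
    have : Nonempty V := hconn.nonempty
    exact SimpleGraph.Connected.mk (fun x y => hg.reach x (Finset.mem_univ x) y (Finset.mem_univ y))
  have hacyc : T.IsAcyclic := hg.acyclic (fun E₀ hac u w hne hw => acyclic_insert_pendant E₀ hac u w hne hw)
  have htree : T.IsTree := (SimpleGraph.isTree_iff T).2 ⟨hconnT, hacyc⟩
  refine ⟨T, ⟨hTG, htree⟩, ?_⟩
  -- leaf counting
  have hleaf : ∀ v : V, v ∉ D' → ndeg T v = 1 := by
    intro v hv
    obtain ⟨y, hy⟩ := hg.pendant_nbr v (Finset.mem_univ v) hv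
    rw [ndeg, hy, Nat.card_coe_set_eq, Set.ncard_singleton]
  have hsub : ((Finset.univ \ D' : Finset V) : Set V) ⊆ {v : V | ndeg T v = 1} := by
    intro v hv
    rw [Finset.coe_sdiff, Set.mem_diff] at hv
    exact hleaf v (fun hc => hv.2 hc)
  have hL : (Finset.univ \ D' : Finset V).card ≤ numLeaves T := by
    rw [numLeaves, Nat.card_eq_fintype_card]
    calc (Finset.univ \ D' : Finset V).card
        = ((Finset.univ \ D' : Finset V) : Set V).ncard := (Set.ncard_coe_finset _).symm
      _ ≤ ({v : V | ndeg T v = 1} : Set V).ncard := Set.ncard_le_ncard hsub (Set.toFinite _)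
      _ = Nat.card {v : V | ndeg T v = 1} := (Nat.card_coe_set_eq _).symm
      _ = Fintype.card {v : V | ndeg T v = 1} := Nat.card_eq_fintype_card
  have hcompl : (Finset.univ \ D' : Finset V).card = Fintype.card V - D'.card := by
    rw [Finset.card_sdiff_of_subset (Finset.subset_univ _), Finset.card_univ]
  have hDle : D'.card ≤ Fintype.card V := by
    rw [← Finset.card_univ]
    exact Finset.card_le_card (Finset.subset_univ _)
  -- numeric conclusion
  have h4 : (Fintype.card V : ℤ) + 8 ≤ 4 * (numLeaves T : ℤ) := by
    have h1 : ((Finset.univ \ D' : Finset V).card : ℤ) = (Fintype.card V : ℤ) - (D'.card : ℤ) := by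
      rw [hcompl]
      push_cast [Nat.cast_sub hDle]
      ring
    have h2 : ((Finset.univ \ D' : Finset V).card : ℤ) ≤ (numLeaves T : ℤ) := by exact_mod_cast hL
    omega
  have h4' : (Fintype.card V : ℝ) + 8 ≤ 4 * (numLeaves T : ℝ) := by exact_mod_cast h4
  linarith
end

section
/- Let g ≥ 3 and k ≥ 1 be integers. Let B be the graph consisting of a cycle of length g where to each cycle vertex a path of k+1 new vertices is attached by an edge. Then B has g(k+2) vertices, girth g, and the maximum number of leaves in a spanning tree of B is exactly g. -/
open SimpleGraph

/-- A cycle of length `g` (the vertices `(i, 0)`), with a spine (path) of `k+1`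
vertices `(i, 1), …, (i, k+1)` attached to each cycle vertex `(i, 0)`. -/
def cycleWithSpines (g k : ℕ) : SimpleGraph (Fin g × Fin (k + 2)) :=
  SimpleGraph.fromRel (fun a b =>
    ((a.2 : ℕ) = 0 ∧ (b.2 : ℕ) = 0 ∧ (b.1 : ℕ) = ((a.1 : ℕ) + 1) % g) ∨
    (a.1 = b.1 ∧ (b.2 : ℕ) = (a.2 : ℕ) + 1))

section
open scoped Fin.NatCast Fin.CommRing
variable {g k : ℕ} [NeZero g]

lemma fin_succ_iff (x y : Fin g) : (y : ℕ) = ((x : ℕ) + 1) % g ↔ y = x + 1 := by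
  rw [Fin.ext_iff, Fin.add_def, Fin.val_one']
  simp [Nat.add_mod_mod]

lemma fin_one_val (hg : 2 ≤ g) : ((1 : Fin g) : ℕ) = 1 := by
  rw [Fin.val_one']; exact Nat.mod_eq_of_lt (by omega)

lemma fin_succ_ne (hg : 2 ≤ g) (x : Fin g) : x + 1 ≠ x := by
  intro h
  have h2 : (1 : Fin g) = 0 := by
    have := congrArg (· - x) h
    simpa [add_sub_cancel_left, add_comm] using this
  have : ((1:Fin g) : ℕ) = 0 := by rw [h2]; simp
  rw [fin_one_val hg] at this; omega

lemma fin_succ_succ_ne (hg : 3 ≤ g) (x : Fin g) : x + 1 + 1 ≠ x := by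
  intro h
  have h2 : (1 + 1 : Fin g) = 0 := by
    have := congrArg (· - x) h
    have h3 : x + (1 + 1) = x + 0 := by rw [← add_assoc, h]; simp
    exact add_left_cancel h3 |>.trans rfl
  have : ((1 + 1 : Fin g) : ℕ) = 0 := by rw [h2]; simp
  rw [Fin.add_def, fin_one_val (by omega)] at this
  simp [Nat.mod_eq_of_lt (show 1+1 < g by omega)] at this

lemma fin_val_succ (hg : 3 ≤ g) {t i : Fin g} (hti : t ≠ i) :
    ((t + 1 - (i + 1)).val) = (t - (i + 1)).val + 1 := by
  set y := t - (i + 1) with hy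
  have hty : t + 1 - (i + 1) = y + 1 := by ring
  rw [hty]
  rcases Nat.lt_or_ge (y.val + 1) g with h | h
  · rw [Fin.add_def, fin_one_val (by omega)]
    exact Nat.mod_eq_of_lt h
  · exfalso
    have hyv : y.val = g - 1 := by have := y.isLt; omega
    have h0 : y + 1 = 0 := by
      rw [Fin.ext_iff, Fin.add_def, fin_one_val (by omega), hyv]
      simp [Nat.sub_add_cancel (by omega : 1 ≤ g)]
    have : t + 1 - (i + 1) = 0 := by rw [hty, h0]
    exact hti (add_right_cancel (sub_eq_zero.mp this))


/-- Adjacency characterization. -/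
lemma adj_iff (hg : 3 ≤ g) {a b : Fin g × Fin (k+2)} :
    (cycleWithSpines g k).Adj a b ↔
      (a.1 = b.1 ∧ ((b.2 : ℕ) = (a.2 : ℕ) + 1 ∨ (a.2 : ℕ) = (b.2 : ℕ) + 1)) ∨
      ((a.2 : ℕ) = 0 ∧ (b.2 : ℕ) = 0 ∧ (b.1 = a.1 + 1 ∨ a.1 = b.1 + 1)) := by
  rw [cycleWithSpines, fromRel_adj]
  simp only [fin_succ_iff]
  constructor
  · rintro ⟨hne, h | h⟩
    · rcases h with ⟨h1,h2,h3⟩ | ⟨h1,h2⟩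
      · exact Or.inr ⟨h1, h2, Or.inl h3⟩
      · exact Or.inl ⟨h1, Or.inl h2⟩
    · rcases h with ⟨h1,h2,h3⟩ | ⟨h1,h2⟩
      · exact Or.inr ⟨h2, h1, Or.inr h3⟩
      · exact Or.inl ⟨h1.symm, Or.inr h2⟩
  · rintro (⟨h1, h2 | h2⟩ | ⟨h1, h2, h3 | h3⟩)
    · exact ⟨fun h => by rw [h] at h2; omega, Or.inl (Or.inr ⟨h1, h2⟩)⟩
    · exact ⟨fun h => by rw [h] at h2; omega, Or.inr (Or.inr ⟨h1.symm, h2⟩)⟩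
    · refine ⟨fun h => ?_, Or.inl (Or.inl ⟨h1, h2, h3⟩)⟩
      rw [h] at h3; exact fin_succ_ne (by omega) b.1 h3.symm
    · refine ⟨fun h => ?_, Or.inr (Or.inl ⟨h2, h1, h3⟩)⟩
      rw [h] at h3; exact fin_succ_ne (by omega) b.1 h3.symm

/-- Invariant along walks. -/
lemma walk_invariant {V : Type*} {G : SimpleGraph V} (P : V → Prop)
    (hP : ∀ a b, G.Adj a b → (P a ↔ P b)) {u v : V} (h : G.Reachable u v) : P u ↔ P v := by
  obtain ⟨w⟩ := h
  induction w with
  | nil => rfl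
  | cons h p ih => exact (hP _ _ h).trans ih

/-- Cut lemma for spine edges. -/
lemma cut_spine (hg : 3 ≤ g) {G : SimpleGraph (Fin g × Fin (k+2))}
    (hle : G ≤ cycleWithSpines g k) (c : Fin g) (j : ℕ) (hj : j + 1 < k + 2)
    (hmiss : ¬ G.Adj (c, ⟨j, by omega⟩) (c, ⟨j+1, hj⟩)) :
    ¬ G.Reachable (c, ⟨j, by omega⟩) (c, ⟨j+1, hj⟩) := by
  intro hr
  have key := walk_invariant (fun a => a.1 = c ∧ j < (a.2 : ℕ)) ?_ hr
  · simp at key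
  · intro a b hab
    rcases (adj_iff hg).mp (hle hab) with ⟨h1, h2 | h2⟩ | ⟨h1, h2, _⟩
    · by_cases hac : a.1 = c
      · simp only [hac, h1.symm.trans hac, true_and]
        constructor
        · intro hja; omega
        · intro hjb
          rcases Nat.lt_or_ge j (a.2 : ℕ) with h | h
          · exact h
          · -- a.2 = j, b.2 = j + 1
            exfalso
            have hav : (a.2 : ℕ) = j := by omega
            have ha : a = (c, ⟨j, Nat.lt_of_succ_lt hj⟩) := by
              apply Prod.ext hac (Fin.ext (by simpa using hav))
            have hb : b = (c, ⟨j+1, hj⟩) := by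
              apply Prod.ext (h1.symm.trans hac) (Fin.ext (by simp [h2, hav]))
            rw [ha, hb] at hab
            exact hmiss hab
      · simp [hac, h1 ▸ hac]
    · by_cases hac : a.1 = c
      · simp only [hac, h1.symm.trans hac, true_and]
        constructor
        · intro hja
          rcases Nat.lt_or_ge j (b.2 : ℕ) with h | h
          · exact h
          · exfalso
            have hbv : (b.2 : ℕ) = j := by omega
            have hb : b = (c, ⟨j, Nat.lt_of_succ_lt hj⟩) := by
              apply Prod.ext (h1.symm.trans hac) (Fin.ext (by simpa using hbv))
            have ha : a = (c, ⟨j+1, hj⟩) := by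
              apply Prod.ext hac (Fin.ext (by simp [h2, hbv]))
            rw [ha, hb] at hab
            exact hmiss hab.symm
        · intro hjb; omega
      · simp [hac, h1 ▸ hac]
    · simp only [h1, h2]; omega

/-- Cut lemma for cycle edges: if two distinct cycle edges are missing,
the endpoints of one are not reachable. -/
lemma cut_cycle (hg : 3 ≤ g) {G : SimpleGraph (Fin g × Fin (k+2))}
    (hle : G ≤ cycleWithSpines g k) (i m : Fin g) (him : i ≠ m)
    (hmiss_i : ¬ G.Adj (i, 0) (i+1, 0)) (hmiss_m : ¬ G.Adj (m, 0) (m+1, 0)) :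
    ¬ G.Reachable (m, 0) (m+1, 0) := by
  intro hr
  set d : Fin g → ℕ := fun x => (x - (i + 1)).val with hd
  have claim : ∀ a b : Fin g × Fin (k+2), G.Adj a b → (a.2 : ℕ) = 0 → (b.2 : ℕ) = 0 →
      b.1 = a.1 + 1 → (d a.1 ≤ d m ↔ d b.1 ≤ d m) := by
    intro a b hab ha2 hb2 hb1
    have ha : a = (a.1, 0) := Prod.ext rfl (Fin.ext (by simpa using ha2))
    have hb : b = (a.1 + 1, 0) := Prod.ext hb1 (Fin.ext (by simpa using hb2))
    have hti : a.1 ≠ i := by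
      intro hh
      exact hmiss_i (by rw [← hh]; rw [ha, hb] at hab; exact hab)
    have htm : a.1 ≠ m := by
      intro hh
      exact hmiss_m (by rw [← hh]; rw [ha, hb] at hab; exact hab)
    have hsucc : d b.1 = d a.1 + 1 := by rw [hb1]; exact fin_val_succ hg hti
    have hne : d a.1 ≠ d m := fun h => htm (by
      have : a.1 - (i+1) = m - (i+1) := Fin.ext h
      exact sub_left_injective this)
    omega
  have key := walk_invariant (fun a => d a.1 ≤ d m) ?_ hr
  · have hsucc : d (m + 1) = d m + 1 := fin_val_succ hg him.symm
    simp only [hsucc] at key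
    omega
  · intro a b hab
    rcases (adj_iff hg).mp (hle hab) with ⟨h1, _⟩ | ⟨h1, h2, h3 | h3⟩
    · show (d a.1 ≤ d m) ↔ (d b.1 ≤ d m)
      rw [h1]
    · exact claim a b hab h1 h2 h3
    · exact (claim b a hab.symm h2 h1 h3).symm

lemma cyc_adj (hg : 3 ≤ g) (x : Fin g) :
    (cycleWithSpines g k).Adj (x, 0) (x + 1, 0) := by
  rw [adj_iff hg]
  exact Or.inr ⟨by simp, by simp, Or.inl rfl⟩

def cycWalk (hg : 3 ≤ g) : ∀ t : ℕ,
    (cycleWithSpines g k).Walk ((0 : Fin g), (0 : Fin (k+2))) ((t : Fin g), 0)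
  | 0 => Walk.nil.copy rfl (by norm_num)
  | (t+1) => ((cycWalk hg t).concat (cyc_adj hg _)).copy rfl (by push_cast; ring_nf)

lemma cycWalk_length (hg : 3 ≤ g) (t : ℕ) : (cycWalk (g := g) (k := k) hg t).length = t := by
  induction t with
  | zero => simp [cycWalk]
  | succ t ih => simp [cycWalk, Walk.length_copy, Walk.length_concat, ih]

lemma cycWalk_support (hg : 3 ≤ g) (t : ℕ) :
    (cycWalk (g := g) (k := k) hg t).support
      = (List.range (t+1)).map (fun (s : ℕ) => ((s : Fin g), (0 : Fin (k+2)))) := by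
  induction t with
  | zero =>
      show _ = List.map _ [0]
      simp [cycWalk]
  | succ t ih =>
      rw [cycWalk, Walk.support_copy, Walk.support_concat, ih,
        show t+1+1 = (t+1)+1 from rfl, List.range_succ (n := t+1), List.map_append]
      congr 1
      simp

lemma cycWalk_edges (hg : 3 ≤ g) (t : ℕ) :
    ∀ e ∈ (cycWalk (g := g) (k := k) hg t).edges,
      ∃ s : ℕ, s + 1 ≤ t ∧ e = s(((s : Fin g), (0 : Fin (k+2))), (((s+1 : ℕ) : Fin g), 0)) := by
  induction t with
  | zero => simp [cycWalk]
  | succ t ih =>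
      intro e he
      rw [cycWalk, Walk.edges_copy, Walk.edges_concat, List.concat_eq_append, List.mem_append] at he
      rcases he with he | he
      · obtain ⟨s, hs, rfl⟩ := ih e he
        exact ⟨s, by omega, rfl⟩
      · refine ⟨t, le_refl _, ?_⟩
        rw [List.mem_singleton] at he
        rw [he]
        congr 2
        push_cast
        ring

lemma gcycle_exists (hg : 3 ≤ g) :
    ∃ (w : (cycleWithSpines g k).Walk ((0:Fin g),(0:Fin (k+2))) ((0:Fin g),(0:Fin (k+2)))),
      w.IsCycle ∧ w.length = g := by
  have hcast : (((g-1 : ℕ) : Fin g)) + 1 = 0 := by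
    rw [Fin.ext_iff, Fin.add_def, Fin.val_one', Fin.val_natCast]
    simp [Nat.mod_eq_of_lt (show g - 1 < g by omega), Nat.mod_eq_of_lt (show 1 < g by omega),
      Nat.sub_add_cancel (show 1 ≤ g by omega)]
  have hadj : (cycleWithSpines g k).Adj ((0:Fin g),(0:Fin (k+2))) (((g-1:ℕ) : Fin g), 0) := by
    have := cyc_adj (k := k) hg ((g-1 : ℕ) : Fin g)
    rw [hcast] at this
    exact this.symm
  have hpath : ((cycWalk (g := g) (k := k) hg (g-1))).IsPath := by
    apply Walk.IsPath.mk'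
    rw [cycWalk_support hg]
    refine List.Nodup.map_on ?_ List.nodup_range
    intro x hx y hy hxy
    rw [List.mem_range] at hx hy
    have := congrArg (fun p => (p.1 : ℕ)) hxy
    simpa [Fin.val_cast_of_lt (show x < g by omega), Fin.val_cast_of_lt (show y < g by omega)]
      using this
  refine ⟨Walk.cons hadj (cycWalk hg (g-1)).reverse, ?_, ?_⟩
  · rw [Walk.cons_isCycle_iff]
    refine ⟨hpath.reverse, ?_⟩
    intro hmem
    rw [Walk.edges_reverse, List.mem_reverse] at hmem
    obtain ⟨s, hs, heq⟩ := cycWalk_edges hg (g-1) _ hmem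
    rw [Sym2.eq_iff] at heq
    rcases heq with ⟨h1, h2⟩ | ⟨h1, h2⟩
    · have hx : (0 : ℕ) = s := by
        have := congrArg (fun p => (p.1 : ℕ)) h1
        simpa [Fin.val_cast_of_lt (show s < g by omega)] using this
      have hy : g - 1 = s + 1 := by
        have h3 := congrArg (fun p => (p.1 : ℕ)) h2
        simp only [] at h3
        rw [Fin.val_cast_of_lt (show g - 1 < g by omega),
          Fin.val_cast_of_lt (show s + 1 < g by omega)] at h3
        exact h3
      omega
    · have hx : (0 : ℕ) = s + 1 := by
        have h3 := congrArg (fun p => (p.1 : ℕ)) h1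
        simp only [] at h3
        rw [Fin.val_cast_of_lt (show s + 1 < g by omega)] at h3
        simpa using h3
      omega
  · rw [Walk.length_cons, Walk.length_reverse, cycWalk_length hg]
    omega

/-- The graph minus one cycle edge. -/
def Hgr (g k : ℕ) [NeZero g] (i : Fin g) : SimpleGraph (Fin g × Fin (k+2)) :=
  (cycleWithSpines g k).deleteEdges {s(((i : Fin g), (0 : Fin (k+2))), (i+1, 0))}

lemma Hgr_le (i : Fin g) : Hgr g k i ≤ cycleWithSpines g k := deleteEdges_le _

lemma Hgr_miss (i : Fin g) : ¬ (Hgr g k i).Adj (i, 0) (i+1, 0) := by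
  simp [Hgr]

lemma spine_edge_ne (hg : 3 ≤ g) {m c : Fin g} {x y : Fin (k+2)} (hx : (y : ℕ) ≠ 0) :
    s((m, x), (m, y)) ≠ s(((c : Fin g), (0 : Fin (k+2))), (c+1, 0)) := by
  intro h
  rw [Sym2.eq_iff] at h
  rcases h with ⟨h1, h2⟩ | ⟨h1, h2⟩
  · exact hx (by rw [show y = 0 from by simpa using congrArg Prod.snd h2]; rfl)
  · exact hx (by rw [show y = 0 from by simpa using congrArg Prod.snd h2]; rfl)

lemma Hgr_spine_adj (hg : 3 ≤ g) (i m : Fin g) (j : ℕ) (hj : j + 1 < k + 2) :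
    (Hgr g k i).Adj (m, ⟨j, Nat.lt_of_succ_lt hj⟩) (m, ⟨j+1, hj⟩) := by
  rw [Hgr, deleteEdges_adj]
  constructor
  · rw [adj_iff hg]; exact Or.inl ⟨rfl, Or.inl rfl⟩
  · simp only [Set.mem_singleton_iff]
    exact spine_edge_ne hg (by simp)

lemma Hgr_reach_spine (hg : 3 ≤ g) (i m : Fin g) (j : ℕ) (hj : j < k + 2) :
    (Hgr g k i).Reachable (m, 0) (m, ⟨j, hj⟩) := by
  induction j with
  | zero => exact Reachable.refl _
  | succ j ih =>
      exact (ih (Nat.lt_of_succ_lt hj)).trans (Hgr_spine_adj hg i m j hj).reachable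

lemma Hgr_cyc_adj (hg : 3 ≤ g) (i x : Fin g) (hx : x ≠ i) :
    (Hgr g k i).Adj (x, 0) (x + 1, 0) := by
  rw [Hgr, deleteEdges_adj]
  refine ⟨cyc_adj hg x, ?_⟩
  simp only [Set.mem_singleton_iff]
  intro h
  rw [Sym2.eq_iff] at h
  rcases h with ⟨h1, h2⟩ | ⟨h1, h2⟩
  · exact hx (congrArg Prod.fst h1)
  · have hx1 : x = i + 1 := congrArg Prod.fst h1
    have hx2 : x + 1 = i := congrArg Prod.fst h2
    rw [hx1] at hx2
    exact fin_succ_succ_ne hg i hx2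

lemma Hgr_reach_cyc (hg : 3 ≤ g) (i : Fin g) (t : ℕ) (ht : t ≤ g - 1) :
    (Hgr g k i).Reachable (i + 1, 0) (i + 1 + (t : Fin g), 0) := by
  induction t with
  | zero =>
      have h0 : i + 1 + ((0 : ℕ) : Fin g) = i + 1 := by simp
      rw [h0]
  | succ t ih =>
      have h1 : (Hgr g k i).Reachable (i + 1, 0) (i + 1 + (t : Fin g), 0) := ih (by omega)
      refine h1.trans ?_
      have hadj := Hgr_cyc_adj (k := k) hg i (i + 1 + (t : Fin g)) ?_
      · have he : i + 1 + (t : Fin g) + 1 = i + 1 + ((t + 1 : ℕ) : Fin g) := by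
          push_cast; ring
        rw [he] at hadj
        exact hadj.reachable
      · intro h
        have h2 : (1 : Fin g) + (t : Fin g) = 0 := by
          have h' := congrArg (fun z => z - i) h
          rwa [show i + 1 + (t : Fin g) - i = 1 + (t : Fin g) from by ring, sub_self] at h'
        have h3 : (((1 + t : ℕ)) : Fin g) = 0 := by push_cast; exact h2
        have h4 := congrArg Fin.val h3
        rw [Fin.val_natCast] at h4
        rw [Nat.mod_eq_of_lt (by omega)] at h4
        simp at h4

lemma Hgr_connected (hg : 3 ≤ g) (i : Fin g) : (Hgr g k i).Connected := by
  rw [connected_iff]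
  refine ⟨?_, ⟨((0 : Fin g), 0)⟩⟩
  have hbase : ∀ u : Fin g × Fin (k+2), (Hgr g k i).Reachable (i + 1, 0) u := by
    intro u
    have h1 : (Hgr g k i).Reachable (i + 1, 0) (u.1, 0) := by
      have := Hgr_reach_cyc (k := k) hg i ((u.1 - (i + 1)).val) (by
        have := (u.1 - (i+1)).isLt; omega)
      rwa [Fin.cast_val_eq_self, add_sub_cancel] at this
    refine h1.trans ?_
    have := Hgr_reach_spine hg i u.1 u.2.val u.2.isLt
    simpa using this
  intro u v
  exact (hbase u).symm.trans (hbase v)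

lemma Hgr_acyclic (hg : 3 ≤ g) (i : Fin g) : (Hgr g k i).IsAcyclic := by
  rw [isAcyclic_iff_forall_adj_isBridge]
  intro v w hvw
  rw [isBridge_iff]
  show ¬ (Hgr g k i \ fromEdgeSet {s(v, w)}).Reachable v w
  set G' : SimpleGraph (Fin g × Fin (k+2)) := Hgr g k i \ fromEdgeSet {s(v, w)} with hG'
  have hle : G' ≤ cycleWithSpines g k := le_trans (sdiff_le : G' ≤ Hgr g k i) (Hgr_le i)
  have hmiss : ¬ G'.Adj v w := by
    intro h
    rw [hG', sdiff_adj, fromEdgeSet_adj] at h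
    exact h.2 ⟨rfl, hvw.ne⟩
  have hGH : G' ≤ Hgr g k i := sdiff_le
  clear_value G'
  obtain ⟨v1, v2⟩ := v
  obtain ⟨w1, w2⟩ := w
  rcases (adj_iff hg).mp (Hgr_le i hvw) with ⟨h1, h2 | h2⟩ | ⟨h1, h2, h3 | h3⟩
  · -- spine, w above v
    simp only [] at h1 h2
    obtain ⟨jv, hjv⟩ := v2
    obtain ⟨jw, hjw⟩ := w2
    simp only [] at h2
    subst h2
    subst h1
    exact cut_spine hg hle v1 jv hjw hmiss
  · -- spine, v above w
    simp only [] at h1 h2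
    obtain ⟨jv, hjv⟩ := v2
    obtain ⟨jw, hjw⟩ := w2
    simp only [] at h2
    subst h2
    subst h1
    intro hr
    exact cut_spine hg hle v1 jw hjv (fun h => hmiss h.symm) hr.symm
  · -- cycle, w = v+1
    simp only [] at h1 h2 h3
    have hv2 : v2 = 0 := Fin.ext (by simpa using h1)
    have hw2 : w2 = 0 := Fin.ext (by simpa using h2)
    subst hv2; subst hw2; subst h3
    have hne : i ≠ v1 := by
      intro h
      subst h
      exact Hgr_miss i hvw
    refine cut_cycle hg hle i v1 hne ?_ ?_
    · intro hadj
      exact Hgr_miss i (hGH hadj)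
    · exact hmiss
  · -- cycle, v = w+1
    simp only [] at h1 h2 h3
    have hv2 : v2 = 0 := Fin.ext (by simpa using h1)
    have hw2 : w2 = 0 := Fin.ext (by simpa using h2)
    subst hv2; subst hw2; subst h3
    have hne : i ≠ w1 := by
      intro h
      subst h
      exact Hgr_miss i hvw.symm
    intro hr
    refine cut_cycle hg hle i w1 hne ?_ (fun h => hmiss h.symm) hr.symm
    intro hadj
    exact Hgr_miss i (hGH hadj)

lemma card_topset (g k : ℕ) :
    Nat.card {v : Fin g × Fin (k+2) | (v.2 : ℕ) = k + 1} = g := by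
  have hb : Function.Bijective
      (fun m : Fin g => (⟨(m, ⟨k+1, by omega⟩), rfl⟩ :
        {v : Fin g × Fin (k+2) | (v.2 : ℕ) = k + 1})) := by
    constructor
    · intro a b hab
      have := congrArg (fun x => x.val.1) hab
      exact this
    · rintro ⟨⟨m, j⟩, hj⟩
      exact ⟨m, Subtype.ext (Prod.ext rfl (Fin.ext (by simpa using hj.symm)))⟩
  rw [← Nat.card_eq_of_bijective _ hb]
  simp

lemma tree_numLeaves (hg : 3 ≤ g) (hk : 1 ≤ k) {T : SimpleGraph (Fin g × Fin (k+2))}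
    (hT : IsSpanningTreeOf T (cycleWithSpines g k)) : numLeaves T = g := by
  obtain ⟨hle, htree⟩ := hT
  have hconn := htree.isConnected
  have F1 : ∀ (m : Fin g) (j : ℕ) (hj : j + 1 < k + 2),
      T.Adj (m, ⟨j, Nat.lt_of_succ_lt hj⟩) (m, ⟨j+1, hj⟩) := by
    intro m j hj
    by_contra hmiss
    exact cut_spine hg hle m j hj hmiss (hconn.preconnected _ _)
  have F2 : ∀ m : Fin g, T.Adj (m, 0) (m+1, 0) ∨ T.Adj (m-1, 0) (m, 0) := by
    intro m
    by_contra h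
    push_neg at h
    have h1 : ¬ T.Adj (m-1, 0) ((m-1)+1, 0) := by rw [sub_add_cancel]; exact h.2
    have hne : m - 1 ≠ m := by
      intro hh
      have h2 := congrArg (· + 1) hh
      simp only [sub_add_cancel] at h2
      exact fin_succ_ne (by omega) m h2.symm
    exact cut_cycle hg hle (m-1) m hne h1 h.1 (hconn.preconnected _ _)
  -- neighbor sets
  have nbr_top : ∀ m : Fin g, T.neighborSet (m, ⟨k+1, by omega⟩)
      = {(m, ⟨k, by omega⟩)} := by
    intro m
    ext b
    simp only [mem_neighborSet, Set.mem_singleton_iff]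
    constructor
    · intro hb
      rcases (adj_iff hg).mp (hle hb) with ⟨h1, h2 | h2⟩ | ⟨h1, h2, h3⟩
      · exact absurd h2 (by have := b.2.isLt; simp; omega)
      · exact Prod.ext h1.symm (Fin.ext (by simp at h2 ⊢; omega))
      · exact absurd h1 (by simp)
    · rintro rfl
      have := F1 m k (by omega)
      exact this.symm
  have nbr_mid : ∀ (m : Fin g) (j : ℕ) (hj1 : 1 ≤ j) (hj2 : j ≤ k),
      T.neighborSet (m, ⟨j, by omega⟩)
        = {(m, ⟨j-1, by omega⟩), (m, ⟨j+1, by omega⟩)} := by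
    intro m j hj1 hj2
    ext b
    simp only [mem_neighborSet, Set.mem_insert_iff, Set.mem_singleton_iff]
    constructor
    · intro hb
      rcases (adj_iff hg).mp (hle hb) with ⟨h1, h2 | h2⟩ | ⟨h1, h2, h3⟩
      · exact Or.inr (Prod.ext h1.symm (Fin.ext (by simp at h2 ⊢; omega)))
      · exact Or.inl (Prod.ext h1.symm (Fin.ext (by simp at h2 ⊢; omega)))
      · exact absurd h1 (by simp; omega)
    · rintro (rfl | rfl)
      · have := F1 m (j-1) (by omega)
        have he : (⟨j-1+1, by omega⟩ : Fin (k+2)) = ⟨j, by omega⟩ := Fin.ext (by simp; omega)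
        rw [he] at this
        exact this.symm
      · have := F1 m j (by omega)
        exact this
  have nbr_zero : ∀ m : Fin g, 2 ≤ (T.neighborSet (m, 0)).ncard := by
    intro m
    have ha : (m, (⟨1, by omega⟩ : Fin (k+2))) ∈ T.neighborSet (m, 0) := by
      have := F1 m 0 (by omega)
      exact this
    have hb : ∃ b, b ∈ T.neighborSet (m, 0) ∧ (b.2 : ℕ) = 0 := by
      rcases F2 m with h | h
      · exact ⟨(m+1, 0), h, by simp⟩
      · exact ⟨(m-1, 0), h.symm, by simp⟩
    obtain ⟨b, hbN, hb2⟩ := hb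
    have hne : (m, (⟨1, by omega⟩ : Fin (k+2))) ≠ b := by
      intro h
      rw [← h] at hb2
      simp at hb2
    have hsub : {(m, (⟨1, by omega⟩ : Fin (k+2))), b} ⊆ T.neighborSet (m, 0) := by
      intro x hx
      rcases hx with rfl | hx
      · exact ha
      · rw [Set.mem_singleton_iff] at hx; subst hx; exact hbN
    calc 2 = ({(m, (⟨1, by omega⟩ : Fin (k+2))), b} : Set _).ncard := (Set.ncard_pair hne).symm
    _ ≤ _ := Set.ncard_le_ncard hsub (Set.toFinite _)
  -- leaf set identification
  have hset : {v : Fin g × Fin (k+2) | ndeg T v = 1} = {v | (v.2 : ℕ) = k + 1} := by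
    ext ⟨m, j⟩
    obtain ⟨jv, hjv⟩ := j
    simp only [Set.mem_setOf_eq]
    rcases Nat.lt_trichotomy jv 1 with hj | hj
    · -- jv = 0
      have hjv0 : jv = 0 := by omega
      subst hjv0
      have : 2 ≤ (T.neighborSet (m, 0)).ncard := nbr_zero m
      rw [ndeg, Nat.card_coe_set_eq]
      have he : ((⟨0, hjv⟩ : Fin (k+2))) = 0 := Fin.ext (by simp)
      rw [he]
      constructor
      · intro h; omega
      · intro h; omega
    · rcases Nat.lt_or_ge jv (k+1) with hj2 | hj2
      · -- middle
        have he : ((⟨jv, hjv⟩ : Fin (k+2))) = ⟨jv, by omega⟩ := rfl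
        rw [ndeg, Nat.card_coe_set_eq, he, nbr_mid m jv (by omega) (by omega)]
        have hne : ((m, ⟨jv-1, by omega⟩) : Fin g × Fin (k+2)) ≠ (m, ⟨jv+1, by omega⟩) := by
          intro h
          have := congrArg (fun x => (x.2 : ℕ)) h
          simp at this
        rw [Set.ncard_pair hne]
        constructor
        · intro h; omega
        · intro h
          omega
      · -- top
        have hjv1 : jv = k + 1 := by omega
        subst hjv1
        have he : ((⟨k+1, hjv⟩ : Fin (k+2))) = ⟨k+1, by omega⟩ := rfl
        rw [ndeg, Nat.card_coe_set_eq, he, nbr_top m, Set.ncard_singleton]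
        simp
  rw [numLeaves, hset, card_topset]


lemma cycle_length_ge (hg : 3 ≤ g) {a : Fin g × Fin (k+2)}
    {w : (cycleWithSpines g k).Walk a a} (hw : w.IsCycle) : g ≤ w.length := by
  classical
  have hall : ∀ i : Fin g, s((i, (0 : Fin (k+2))), (i+1, 0)) ∈ w.edges := by
    intro i
    by_contra hmem
    have hp : ∀ e ∈ w.edges, e ∈ (Hgr g k i).edgeSet := by
      intro e he
      rw [Hgr, edgeSet_deleteEdges]
      refine ⟨w.edges_subset_edgeSet he, ?_⟩
      intro hee
      rw [Set.mem_singleton_iff] at hee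
      rw [hee] at he
      exact hmem he
    exact Hgr_acyclic hg i _ (hw.transfer hp)
  have hinj : Function.Injective
      (fun i : Fin g => s((i, (0 : Fin (k+2))), (i+1, 0))) := by
    intro x y hxy
    simp only [Sym2.eq_iff] at hxy
    rcases hxy with ⟨h1, h2⟩ | ⟨h1, h2⟩
    · exact congrArg Prod.fst h1
    · have e1 : x = y + 1 := congrArg Prod.fst h1
      have e2 : x + 1 = y := congrArg Prod.fst h2
      rw [e1] at e2
      exact absurd e2 (fin_succ_succ_ne hg y)
  have hsub : Finset.univ.image (fun i : Fin g => s((i, (0 : Fin (k+2))), (i+1, 0)))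
      ⊆ w.edges.toFinset := by
    intro e he
    rw [Finset.mem_image] at he
    obtain ⟨i, _, rfl⟩ := he
    rw [List.mem_toFinset]
    exact hall i
  have hcard := Finset.card_le_card hsub
  rw [Finset.card_image_of_injective _ hinj, Finset.card_univ, Fintype.card_fin,
    List.toFinset_card_of_nodup hw.isCircuit.isTrail.edges_nodup,
    Walk.length_edges] at hcard
  exact hcard

end

theorem stmt_13 (g k : ℕ) (hg : 3 ≤ g) (hk : 1 ≤ k) :
    Fintype.card (Fin g × Fin (k + 2)) = g * (k + 2) ∧
    (cycleWithSpines g k).girth = (g : ℕ∞) ∧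
    maxLeaves (cycleWithSpines g k) = g := by
  haveI : NeZero g := ⟨by omega⟩
  refine ⟨by simp, ?_, ?_⟩
  · -- girth
    have hegirth : (cycleWithSpines g k).egirth = (g : ℕ∞) := by
      apply le_antisymm
      · obtain ⟨w, hcyc, hlen⟩ := gcycle_exists (g := g) (k := k) hg
        calc (cycleWithSpines g k).egirth ≤ (w.length : ℕ∞) :=
              iInf_le_of_le _ (iInf_le_of_le w (iInf_le_of_le hcyc le_rfl))
        _ = (g : ℕ∞) := by rw [hlen]
      · rw [le_egirth]
        intro a w hw
        exact_mod_cast cycle_length_ge hg hw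
    rw [girth, hegirth]
    simp
  · -- maxLeaves
    have hH : IsSpanningTreeOf (Hgr g k 0) (cycleWithSpines g k) :=
      ⟨Hgr_le 0, ⟨Hgr_connected hg 0, Hgr_acyclic hg 0⟩⟩
    have hset : {n : ℕ | ∃ T : SimpleGraph (Fin g × Fin (k+2)),
        IsSpanningTreeOf T (cycleWithSpines g k) ∧ numLeaves T = n} = {g} := by
      ext n
      simp only [Set.mem_setOf_eq, Set.mem_singleton_iff]
      constructor
      · rintro ⟨T, hT, rfl⟩
        exact tree_numLeaves hg hk hT
      · intro h
        exact ⟨Hgr g k 0, hH, (tree_numLeaves hg hk hH).trans h.symm⟩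
    rw [maxLeaves, hset, csSup_singleton]
end
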